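/- arXiv:1910.08460 — 4 statements merged into one kernel-verified Lean document; each statement's English description precedes it below -/
import Mathlib

section
/- Suppose δ_j ≤ 1/2 − ε for some ε ∈ (0,1/2). Then there is a constant C depending only on ε such that |λ̂_j − λ_j| ≤ ‖P_j E P_j‖_2 + C ‖P_j E |R_j|^{1/2}‖_2^2. -/
open Matrix Finset

noncomputable def opNorm {d : ℕ} (A : Matrix (Fin d) (Fin d) ℝ) : ℝ :=
  ‖Matrix.toEuclideanCLM (𝕜 := ℝ) A‖

noncomputable def hsNorm {d : ℕ} (A : Matrix (Fin d) (Fin d) ℝ) : ℝ :=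
  Real.sqrt (Matrix.trace (Aᵀ * A))

noncomputable def proj {d : ℕ} (u : Fin d → ℝ) : Matrix (Fin d) (Fin d) ℝ :=
  Matrix.vecMulVec u u

/-- `|R_j|^{1/2}` : square root of the absolute value of the reduced resolvent. -/
noncomputable def sqrtAbsRes {d : ℕ} (lam : Fin d → ℝ) (u : Fin d → Fin d → ℝ)
    (j : Fin d) : Matrix (Fin d) (Fin d) ℝ :=
  ∑ k ∈ Finset.univ.filter (fun k => k ≠ j), (Real.sqrt |lam k - lam j|)⁻¹ • proj (u k)

/-- `|R_j|^{-1/2}`. -/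
noncomputable def invSqrtAbsRes {d : ℕ} (lam : Fin d → ℝ) (u : Fin d → Fin d → ℝ)
    (j : Fin d) : Matrix (Fin d) (Fin d) ℝ :=
  ∑ k ∈ Finset.univ.filter (fun k => k ≠ j), Real.sqrt |lam k - lam j| • proj (u k)

/-- the reduced resolvent `R_j`. -/
noncomputable def res {d : ℕ} (lam : Fin d → ℝ) (u : Fin d → Fin d → ℝ)
    (j : Fin d) : Matrix (Fin d) (Fin d) ℝ :=
  ∑ k ∈ Finset.univ.filter (fun k => k ≠ j), (lam k - lam j)⁻¹ • proj (u k)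

/-- `δ_j`. -/
noncomputable def delta {d : ℕ} (lam : Fin d → ℝ) (u : Fin d → Fin d → ℝ) (j : Fin d)
    (gj : ℝ) (E : Matrix (Fin d) (Fin d) ℝ) : ℝ :=
  opNorm ((sqrtAbsRes lam u j + (Real.sqrt gj)⁻¹ • proj (u j)) * E *
    (sqrtAbsRes lam u j + (Real.sqrt gj)⁻¹ • proj (u j)))

/-- `δ'_j`. -/
noncomputable def delta' {d : ℕ} (lam : Fin d → ℝ) (u : Fin d → Fin d → ℝ) (j : Fin d)
    (gj : ℝ) (E : Matrix (Fin d) (Fin d) ℝ) : ℝ :=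
  max (opNorm (sqrtAbsRes lam u j * E * sqrtAbsRes lam u j))
    (max ((Real.sqrt gj)⁻¹ * hsNorm (sqrtAbsRes lam u j * E * proj (u j)))
      (gj⁻¹ * hsNorm (proj (u j) * E * proj (u j))))

namespace S10
variable {d : ℕ} {ι : Type*}

noncomputable def nrm (x : Fin d → ℝ) : ℝ := Real.sqrt (x ⬝ᵥ x)

lemma dot_self_nonneg (x : Fin d → ℝ) : 0 ≤ x ⬝ᵥ x :=
  Finset.sum_nonneg fun i _ => mul_self_nonneg _

lemma nrm_nonneg (x : Fin d → ℝ) : 0 ≤ nrm x := Real.sqrt_nonneg _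

lemma nrm_sq (x : Fin d → ℝ) : nrm x ^ 2 = x ⬝ᵥ x := Real.sq_sqrt (dot_self_nonneg x)

lemma nrm_mul_self (x : Fin d → ℝ) : nrm x * nrm x = x ⬝ᵥ x :=
  Real.mul_self_sqrt (dot_self_nonneg x)

lemma nrm_euclidean (x : Fin d → ℝ) :
    ‖(WithLp.equiv 2 (Fin d → ℝ)).symm x‖ = nrm x := by
  rw [EuclideanSpace.norm_eq, nrm, dotProduct]
  congr 1
  refine Finset.sum_congr rfl fun i _ => ?_
  simp [Real.norm_eq_abs, sq, abs_mul_abs_self]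

lemma mulVec_nrm_le (A : Matrix (Fin d) (Fin d) ℝ) (x : Fin d → ℝ) :
    nrm (A *ᵥ x) ≤ opNorm A * nrm x := by
  have h := (Matrix.toEuclideanCLM (𝕜 := ℝ) A).le_opNorm ((WithLp.equiv 2 (Fin d → ℝ)).symm x)
  rw [← nrm_euclidean, ← nrm_euclidean]; exact h

lemma dot_abs_le (x y : Fin d → ℝ) : |x ⬝ᵥ y| ≤ nrm x * nrm y := by
  have h := abs_real_inner_le_norm ((WithLp.equiv 2 (Fin d → ℝ)).symm x)
    ((WithLp.equiv 2 (Fin d → ℝ)).symm y)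
  rw [nrm_euclidean, nrm_euclidean] at h
  have e : (inner ℝ ((WithLp.equiv 2 (Fin d → ℝ)).symm x) ((WithLp.equiv 2 (Fin d → ℝ)).symm y) : ℝ)
      = x ⬝ᵥ y := by
    simp [PiLp.inner_apply, RCLike.inner_apply, dotProduct, mul_comm]
  rwa [e] at h

lemma dot_opNorm_le (A : Matrix (Fin d) (Fin d) ℝ) (x y : Fin d → ℝ) :
    |x ⬝ᵥ (A *ᵥ y)| ≤ opNorm A * (nrm x * nrm y) := by
  calc |x ⬝ᵥ (A *ᵥ y)| ≤ nrm x * nrm (A *ᵥ y) := dot_abs_le _ _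
  _ ≤ nrm x * (opNorm A * nrm y) :=
      mul_le_mul_of_nonneg_left (mulVec_nrm_le A y) (nrm_nonneg x)
  _ = opNorm A * (nrm x * nrm y) := by ring

lemma opNorm_nonneg (A : Matrix (Fin d) (Fin d) ℝ) : 0 ≤ opNorm A := norm_nonneg _

lemma dot_sum (v : Fin d → ℝ) (s : Finset ι) (f : ι → Fin d → ℝ) :
    v ⬝ᵥ (∑ k ∈ s, f k) = ∑ k ∈ s, v ⬝ᵥ f k := by
  simp only [dotProduct, Finset.sum_apply, Finset.mul_sum]
  exact Finset.sum_comm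

lemma sum_dot (v : Fin d → ℝ) (s : Finset ι) (f : ι → Fin d → ℝ) :
    (∑ k ∈ s, f k) ⬝ᵥ v = ∑ k ∈ s, f k ⬝ᵥ v := by
  simp only [dotProduct, Finset.sum_apply, Finset.sum_mul]
  exact Finset.sum_comm

lemma sum_mulVec (s : Finset ι) (f : ι → Matrix (Fin d) (Fin d) ℝ) (x : Fin d → ℝ) :
    (∑ k ∈ s, f k) *ᵥ x = ∑ k ∈ s, (f k *ᵥ x) := by
  ext i
  simp only [Matrix.mulVec, dotProduct, Matrix.sum_apply, Finset.sum_apply, Finset.sum_mul]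
  exact Finset.sum_comm

lemma proj_mulVec (w x : Fin d → ℝ) : proj w *ᵥ x = (w ⬝ᵥ x) • w := by
  ext i
  simp only [proj, Matrix.mulVec, dotProduct, Matrix.vecMulVec_apply, Pi.smul_apply,
    smul_eq_mul, Finset.sum_mul, Finset.mul_sum]
  exact Finset.sum_congr rfl fun k _ => by ring

lemma vecMulVec_mul (a b : Fin d → ℝ) (M : Matrix (Fin d) (Fin d) ℝ) :
    Matrix.vecMulVec a b * M = Matrix.vecMulVec a (Mᵀ *ᵥ b) := by
  ext i l
  simp only [Matrix.mul_apply, Matrix.vecMulVec_apply, Matrix.mulVec, dotProduct,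
    Matrix.transpose_apply, Finset.mul_sum]
  exact Finset.sum_congr rfl fun k _ => by ring

lemma vecMulVec_mul_vecMulVec (a b c e : Fin d → ℝ) :
    Matrix.vecMulVec a b * Matrix.vecMulVec c e = (b ⬝ᵥ c) • Matrix.vecMulVec a e := by
  ext i l
  simp only [Matrix.mul_apply, Matrix.vecMulVec_apply, Matrix.smul_apply, smul_eq_mul,
    dotProduct, Finset.sum_mul, Finset.mul_sum]
  exact Finset.sum_congr rfl fun k _ => by ring

lemma vecMulVec_transpose (a b : Fin d → ℝ) :
    (Matrix.vecMulVec a b)ᵀ = Matrix.vecMulVec b a := by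
  ext i l
  simp [Matrix.vecMulVec_apply, mul_comm]

lemma smul_vecMulVec (c : ℝ) (a b : Fin d → ℝ) :
    c • Matrix.vecMulVec a b = Matrix.vecMulVec a (c • b) := by
  ext i l
  simp [Matrix.vecMulVec_apply]
  ring

lemma hsNorm_vecMulVec (a b : Fin d → ℝ) :
    hsNorm (Matrix.vecMulVec a b) = nrm a * nrm b := by
  rw [hsNorm, vecMulVec_transpose, vecMulVec_mul_vecMulVec, Matrix.trace_smul]
  have : Matrix.trace (Matrix.vecMulVec b b) = b ⬝ᵥ b := by
    simp [Matrix.trace, Matrix.diag, Matrix.vecMulVec_apply, dotProduct]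
  rw [this, smul_eq_mul, nrm, nrm, ← Real.sqrt_mul (dot_self_nonneg a)]

lemma dot_flip (M : Matrix (Fin d) (Fin d) ℝ) (hM : Mᵀ = M) (x y : Fin d → ℝ) :
    x ⬝ᵥ (M *ᵥ y) = (M *ᵥ x) ⬝ᵥ y := by
  rw [Matrix.dotProduct_mulVec, ← Matrix.mulVec_transpose, hM]

lemma exists_ker (L : (Fin d → ℝ) →ₗ[ℝ] (Fin d → ℝ)) (j : Fin d) (h : ∀ x, L x j = 0) :
    ∃ x : Fin d → ℝ, x ≠ 0 ∧ L x = 0 := by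
  by_contra hc
  push_neg at hc
  have hinj : Function.Injective L := by
    rw [← LinearMap.ker_eq_bot, LinearMap.ker_eq_bot']
    intro x hx
    by_contra hx0
    exact hc x hx0 hx
  have hsurj : Function.Surjective L := LinearMap.injective_iff_surjective.mp hinj
  obtain ⟨x, hx⟩ := hsurj (Pi.single j 1)
  have := h x
  rw [hx] at this
  simp at this

section ON
variable {u : Fin d → Fin d → ℝ}
  (hON : ∀ k l, u k ⬝ᵥ u l = if k = l then (1 : ℝ) else 0)
include hON

lemma U_mul_Ut : (Matrix.of u) * (Matrix.of u)ᵀ = (1 : Matrix (Fin d) (Fin d) ℝ) := by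
  ext k l
  simp only [Matrix.mul_apply, Matrix.transpose_apply, Matrix.of_apply, Matrix.one_apply]
  rw [← hON k l, dotProduct]

lemma Ut_mul_U : (Matrix.of u)ᵀ * (Matrix.of u) = (1 : Matrix (Fin d) (Fin d) ℝ) :=
  mul_eq_one_comm.mp (U_mul_Ut hON)

/-- Parseval -/
lemma parseval (x y : Fin d → ℝ) :
    ∑ k, (u k ⬝ᵥ x) * (u k ⬝ᵥ y) = x ⬝ᵥ y := by
  have : ∑ k, (u k ⬝ᵥ x) * (u k ⬝ᵥ y)
      = ((Matrix.of u) *ᵥ x) ⬝ᵥ ((Matrix.of u) *ᵥ y) := rfl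
  rw [this, Matrix.dotProduct_mulVec, ← Matrix.mulVec_transpose,
    Matrix.mulVec_mulVec, Ut_mul_U hON, Matrix.one_mulVec]

/-- expansion in the orthonormal basis -/
lemma expand (x : Fin d → ℝ) : ∑ k, (u k ⬝ᵥ x) • u k = x := by
  have h : ∀ i, (∑ k, (u k ⬝ᵥ x) • u k) i = ((Matrix.of u)ᵀ *ᵥ ((Matrix.of u) *ᵥ x)) i := by
    intro i
    rw [Finset.sum_apply]
    simp only [Pi.smul_apply, smul_eq_mul, Matrix.mulVec, Matrix.transpose_apply,
      Matrix.of_apply, dotProduct]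
    exact Finset.sum_congr rfl fun k _ => by rw [mul_comm]
  ext i
  rw [h i, Matrix.mulVec_mulVec, Ut_mul_U hON, Matrix.one_mulVec]

/-- dot with a combination -/
lemma dot_combo (l : Fin d) (s : Finset (Fin d)) (m : Fin d → ℝ) :
    u l ⬝ᵥ (∑ k ∈ s, m k • u k) = if l ∈ s then m l else 0 := by
  rw [dot_sum]
  have h : ∀ k ∈ s, u l ⬝ᵥ (m k • u k) = if l = k then m k else 0 := by
    intro k _
    rw [dotProduct_smul, hON l k]
    by_cases h : l = k <;> simp [h]
  rw [Finset.sum_congr rfl h, Finset.sum_ite_eq]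

/-- dot of two combinations -/
lemma combo_dot_combo (s s' : Finset (Fin d)) (m m' : Fin d → ℝ) :
    (∑ k ∈ s, m k • u k) ⬝ᵥ (∑ k ∈ s', m' k • u k)
      = ∑ k ∈ s ∩ s', m k * m' k := by
  rw [← parseval hON]
  have h : ∀ k, (u k ⬝ᵥ ∑ k' ∈ s, m k' • u k') * (u k ⬝ᵥ ∑ k' ∈ s', m' k' • u k')
      = if k ∈ s ∩ s' then m k * m' k else 0 := by
    intro k
    rw [dot_combo hON, dot_combo hON]
    by_cases h1 : k ∈ s <;> by_cases h2 : k ∈ s' <;>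
      simp [h1, h2, Finset.mem_inter]
  rw [Finset.sum_congr rfl fun k _ => h k, Finset.sum_ite_mem, Finset.univ_inter]

omit hON in
/-- action of a diagonal-type operator -/
lemma diag_mulVec (s : Finset (Fin d)) (c : Fin d → ℝ) (x : Fin d → ℝ) :
    (∑ k ∈ s, c k • proj (u k)) *ᵥ x = ∑ k ∈ s, (c k * (u k ⬝ᵥ x)) • u k := by
  rw [sum_mulVec]
  refine Finset.sum_congr rfl fun k _ => ?_
  rw [Matrix.smul_mulVec, proj_mulVec, smul_smul]

end ON


lemma sum_split' {M : Type*} [AddCommMonoid M] (j : Fin d) (f : Fin d → M) :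
    ∑ k, f k = f j + ∑ k ∈ Finset.univ.filter (fun k => k ≠ j), f k := by
  rw [Finset.filter_ne', ← Finset.add_sum_erase Finset.univ f (Finset.mem_univ j)]

lemma sum_split (j : Fin d) (f : Fin d → ℝ) :
    ∑ k, f k = f j + ∑ k ∈ Finset.univ.filter (fun k => k ≠ j), f k := by
  rw [Finset.filter_ne', ← Finset.add_sum_erase Finset.univ f (Finset.mem_univ j)]

lemma sum_splitM (j : Fin d) (f : Fin d → Matrix (Fin d) (Fin d) ℝ) :
    ∑ k, f k = f j + ∑ k ∈ Finset.univ.filter (fun k => k ≠ j), f k := by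
  rw [Finset.filter_ne', ← Finset.add_sum_erase Finset.univ f (Finset.mem_univ j)]

lemma inv_sqrt_sq {t : ℝ} (ht : 0 ≤ t) : ((Real.sqrt t)⁻¹) ^ 2 = t⁻¹ := by
  rw [inv_pow, Real.sq_sqrt ht]

lemma nrm_smul (c : ℝ) (x : Fin d → ℝ) : nrm (c • x) = |c| * nrm x := by
  have h : (c • x) ⬝ᵥ (c • x) = c ^ 2 * (x ⬝ᵥ x) := by
    rw [smul_dotProduct, dotProduct_smul, smul_eq_mul, smul_eq_mul]
    ring
  rw [nrm, h, Real.sqrt_mul (sq_nonneg c), Real.sqrt_sq_eq_abs, nrm]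

section Main
variable {lam : Fin d → ℝ} {u : Fin d → Fin d → ℝ}
  (hON : ∀ k l, u k ⬝ᵥ u l = if k = l then (1 : ℝ) else 0)
include hON

lemma diag_quad (c : Fin d → ℝ) (x : Fin d → ℝ) :
    x ⬝ᵥ ((∑ k, c k • proj (u k)) *ᵥ x) = ∑ k, c k * ((u k ⬝ᵥ x) * (u k ⬝ᵥ x)) := by
  rw [diag_mulVec, dot_sum]
  refine Finset.sum_congr rfl fun k _ => ?_
  rw [dotProduct_smul, smul_eq_mul, dotProduct_comm]
  ring

variable (j : Fin d) {gj : ℝ} (hgj_pos : 0 < gj)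
  (hgj : IsLeast {x : ℝ | ∃ k, k ≠ j ∧ x = |lam k - lam j|} gj)
include hgj_pos hgj

omit hON hgj_pos hgj in
lemma habs_pos (hgj_pos : 0 < gj)
    (hgj : IsLeast {x : ℝ | ∃ k, k ≠ j ∧ x = |lam k - lam j|} gj) :
    ∀ k, k ≠ j → 0 < |lam k - lam j| ∧ gj ≤ |lam k - lam j| := by
  intro k hk
  have h := hgj.2 ⟨k, hk, rfl⟩
  exact ⟨lt_of_lt_of_le hgj_pos h, h⟩

/-- `T = |R|^{1/2} + gj^{-1/2} P_j` as a single sum. -/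
lemma Tm_eq :
    sqrtAbsRes lam u j + (Real.sqrt gj)⁻¹ • proj (u j)
      = ∑ k, (fun k => if k = j then (Real.sqrt gj)⁻¹ else (Real.sqrt |lam k - lam j|)⁻¹) k
          • proj (u k) := by
  rw [sum_splitM j]
  simp only [↓reduceIte]
  rw [sqrtAbsRes, add_comm]
  congr 1
  refine Finset.sum_congr rfl fun k hk => ?_
  rw [if_neg (Finset.mem_filter.mp hk).2]

omit hON hgj_pos hgj in
lemma Tm_symm :
    (sqrtAbsRes lam u j + (Real.sqrt gj)⁻¹ • proj (u j))ᵀ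
      = sqrtAbsRes lam u j + (Real.sqrt gj)⁻¹ • proj (u j) := by
  rw [Matrix.transpose_add, Matrix.transpose_smul, sqrtAbsRes, Matrix.transpose_sum]
  congr 1
  · exact Finset.sum_congr rfl fun k _ => by
      rw [Matrix.transpose_smul, proj, vecMulVec_transpose]
  · rw [proj, vecMulVec_transpose]

/-- key quadratic-form bound via `delta` -/
lemma E_quad_bound (E : Matrix (Fin d) (Fin d) ℝ) (x : Fin d → ℝ) :
    |x ⬝ᵥ (E *ᵥ x)| ≤ delta lam u j gj E *
      (gj * ((u j ⬝ᵥ x) * (u j ⬝ᵥ x)) +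
        ∑ k ∈ Finset.univ.filter (fun k => k ≠ j),
          |lam k - lam j| * ((u k ⬝ᵥ x) * (u k ⬝ᵥ x))) := by
  set Tm := sqrtAbsRes lam u j + (Real.sqrt gj)⁻¹ • proj (u j) with hTm
  set t : Fin d → ℝ := fun k => if k = j then (Real.sqrt gj)⁻¹ else (Real.sqrt |lam k - lam j|)⁻¹
    with ht
  set m : Fin d → ℝ := fun k => if k = j then Real.sqrt gj * (u j ⬝ᵥ x)
    else Real.sqrt |lam k - lam j| * (u k ⬝ᵥ x) with hm
  set y : Fin d → ℝ := ∑ k, m k • u k with hy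
  have hsg : Real.sqrt gj ≠ 0 := ne_of_gt (Real.sqrt_pos.mpr hgj_pos)
  have hsa : ∀ k, k ≠ j → Real.sqrt |lam k - lam j| ≠ 0 := fun k hk =>
    ne_of_gt (Real.sqrt_pos.mpr (habs_pos j hgj_pos hgj k hk).1)
  have hty : Tm *ᵥ y = x := by
    rw [hTm, Tm_eq hON j hgj_pos hgj, diag_mulVec]
    have h1 : ∀ k : Fin d, u k ⬝ᵥ y = m k := by
      intro k
      rw [hy, dot_combo hON, if_pos (Finset.mem_univ k)]
    have h2 : ∀ k : Fin d, t k * m k = u k ⬝ᵥ x := by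
      intro k
      by_cases hk : k = j
      · subst hk
        simp only [ht, hm, if_pos rfl]
        rw [← mul_assoc, inv_mul_cancel₀ hsg, one_mul]
      · simp only [ht, hm, if_neg hk]
        rw [← mul_assoc, inv_mul_cancel₀ (hsa k hk), one_mul]
    calc ∑ k, (t k * (u k ⬝ᵥ y)) • u k = ∑ k, (u k ⬝ᵥ x) • u k := by
          refine Finset.sum_congr rfl fun k _ => ?_
          rw [h1 k, h2 k]
    _ = x := expand hON x
  have hyy : y ⬝ᵥ y = gj * ((u j ⬝ᵥ x) * (u j ⬝ᵥ x)) +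
      ∑ k ∈ Finset.univ.filter (fun k => k ≠ j),
        |lam k - lam j| * ((u k ⬝ᵥ x) * (u k ⬝ᵥ x)) := by
    rw [hy, combo_dot_combo hON, Finset.univ_inter, sum_split j]
    congr 1
    · simp only [hm, if_pos rfl]
      have := Real.mul_self_sqrt (le_of_lt hgj_pos)
      nlinarith [this]
    · refine Finset.sum_congr rfl fun k hk => ?_
      have hk' := (Finset.mem_filter.mp hk).2
      simp only [hm, if_neg hk']
      have := Real.mul_self_sqrt (abs_nonneg (lam k - lam j))
      nlinarith [this]
  have hxEx : x ⬝ᵥ (E *ᵥ x) = y ⬝ᵥ ((Tm * E * Tm) *ᵥ y) := by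
    rw [← Matrix.mulVec_mulVec, ← Matrix.mulVec_mulVec, hty,
      dot_flip Tm (Tm_symm j) y (E *ᵥ x), hty]
  rw [hxEx, ← hyy]
  calc |y ⬝ᵥ ((Tm * E * Tm) *ᵥ y)| ≤ opNorm (Tm * E * Tm) * (nrm y * nrm y) :=
        dot_opNorm_le _ _ _
  _ = delta lam u j gj E * (y ⬝ᵥ y) := by rw [nrm_mul_self]; rfl

omit hON hgj_pos hgj in
lemma dot_self_pos {x : Fin d → ℝ} (hx : x ≠ 0) : 0 < x ⬝ᵥ x := by
  rcases (dot_self_nonneg x).lt_or_eq with h | h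
  · exact h
  · exact absurd (dotProduct_self_eq_zero.mp h.symm) hx

omit hON hgj_pos hgj in
lemma exists_witness (u' uh' : Fin d → Fin d → ℝ) (j' : Fin d) :
    ∃ x : Fin d → ℝ, x ≠ 0 ∧ (∀ k, k < j' → u' k ⬝ᵥ x = 0) ∧
      (∀ k, j' < k → uh' k ⬝ᵥ x = 0) := by
  set L : (Fin d → ℝ) →ₗ[ℝ] (Fin d → ℝ) :=
    { toFun := fun x k => if k < j' then u' k ⬝ᵥ x else if j' < k then uh' k ⬝ᵥ x else 0
      map_add' := by
        intro a c; funext k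
        by_cases h1 : k < j' <;> by_cases h2 : j' < k <;>
          simp [h1, h2, dotProduct_add]
      map_smul' := by
        intro c a; funext k
        by_cases h1 : k < j' <;> by_cases h2 : j' < k <;>
          simp [h1, h2, dotProduct_smul] } with hL
  obtain ⟨x, hx0, hLx⟩ := exists_ker L j' (fun x => by simp [hL])
  refine ⟨x, hx0, fun k hk => ?_, fun k hk => ?_⟩
  · have h := congrFun hLx k
    simpa [hL, hk] using h
  · have h := congrFun hLx k
    have hkj : ¬ k < j' := asymm hk
    simpa [hL, hkj, hk] using h

variable {E : Matrix (Fin d) (Fin d) ℝ} {lamh : Fin d → ℝ} {uh : Fin d → Fin d → ℝ}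
  (hONh : ∀ k l, uh k ⬝ᵥ uh l = if k = l then (1 : ℝ) else 0)
  (hlam : Antitone lam) (hlamh : Antitone lamh)
  (hdecomp : (∑ k, lam k • proj (u k)) + E = ∑ k, lamh k • proj (uh k))
include hONh hlam hlamh hdecomp

lemma apriori_upper (hδ1 : delta lam u j gj E ≤ 1) :
    lamh j ≤ lam j + delta lam u j gj E * gj := by
  obtain ⟨x, hx0, hbu, hcu⟩ := exists_witness u uh j
  have hX : 0 < x ⬝ᵥ x := dot_self_pos hx0
  have hPc : ∑ k, (uh k ⬝ᵥ x) * (uh k ⬝ᵥ x) = x ⬝ᵥ x := parseval hONh x x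
  have hPb : ∑ k, (u k ⬝ᵥ x) * (u k ⬝ᵥ x) = x ⬝ᵥ x := parseval hON x x
  have hlow : lamh j * (x ⬝ᵥ x) ≤ x ⬝ᵥ ((∑ k, lamh k • proj (uh k)) *ᵥ x) := by
    rw [diag_quad hONh lamh x, ← hPc, Finset.mul_sum]
    refine Finset.sum_le_sum fun k _ => ?_
    by_cases hk : j < k
    · rw [hcu k hk]; simp
    · have h1 : lamh j ≤ lamh k := hlamh (not_lt.mp hk)
      nlinarith [mul_self_nonneg (uh k ⬝ᵥ x)]
  set D := ∑ k ∈ Finset.univ.filter (fun k => k ≠ j),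
    |lam k - lam j| * ((u k ⬝ᵥ x) * (u k ⬝ᵥ x)) with hD
  have hD0 : 0 ≤ D :=
    Finset.sum_nonneg fun k _ => mul_nonneg (abs_nonneg _) (mul_self_nonneg _)
  have hpt : ∀ k, lam k * ((u k ⬝ᵥ x) * (u k ⬝ᵥ x)) =
      lam j * ((u k ⬝ᵥ x) * (u k ⬝ᵥ x)) - |lam k - lam j| * ((u k ⬝ᵥ x) * (u k ⬝ᵥ x)) := by
    intro k
    rcases lt_trichotomy k j with h | h | h
    · rw [hbu k h]; ring
    · subst h; simp
    · have h1 : lam k ≤ lam j := hlam (le_of_lt h)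
      rw [abs_of_nonpos (by linarith)]; ring
  have hDuniv : ∑ k, |lam k - lam j| * ((u k ⬝ᵥ x) * (u k ⬝ᵥ x)) = D := by
    rw [sum_split j (fun k => |lam k - lam j| * ((u k ⬝ᵥ x) * (u k ⬝ᵥ x)))]
    simp [hD]
  have hSig : x ⬝ᵥ ((∑ k, lam k • proj (u k)) *ᵥ x) = lam j * (x ⬝ᵥ x) - D := by
    rw [diag_quad hON lam x, Finset.sum_congr rfl fun k _ => hpt k,
      Finset.sum_sub_distrib, hDuniv, ← Finset.mul_sum, hPb]
  have hEb := E_quad_bound hON j hgj_pos hgj E x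
  rw [← hD] at hEb
  have hdec : x ⬝ᵥ ((∑ k, lamh k • proj (uh k)) *ᵥ x) =
      x ⬝ᵥ ((∑ k, lam k • proj (u k)) *ᵥ x) + x ⬝ᵥ (E *ᵥ x) := by
    rw [← hdecomp, Matrix.add_mulVec, dotProduct_add]
  have hbj : (u j ⬝ᵥ x) * (u j ⬝ᵥ x) ≤ x ⬝ᵥ x := by
    rw [← hPb, sum_split j (fun k => (u k ⬝ᵥ x) * (u k ⬝ᵥ x))]
    have h0 : 0 ≤ ∑ k ∈ Finset.univ.filter (fun k => k ≠ j),
        (u k ⬝ᵥ x) * (u k ⬝ᵥ x) := Finset.sum_nonneg fun k _ => mul_self_nonneg _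
    linarith
  have hδ0 : 0 ≤ delta lam u j gj E := opNorm_nonneg _
  set δ := delta lam u j gj E with hδ
  have h1 : x ⬝ᵥ (E *ᵥ x) ≤ δ * (gj * ((u j ⬝ᵥ x) * (u j ⬝ᵥ x)) + D) :=
    le_of_abs_le hEb
  have h2 : δ * (gj * ((u j ⬝ᵥ x) * (u j ⬝ᵥ x)) + D) =
      δ * gj * ((u j ⬝ᵥ x) * (u j ⬝ᵥ x)) + δ * D := by ring
  have p1 : δ * gj * ((u j ⬝ᵥ x) * (u j ⬝ᵥ x)) ≤ δ * gj * (x ⬝ᵥ x) :=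
    mul_le_mul_of_nonneg_left hbj (mul_nonneg hδ0 hgj_pos.le)
  have p2 : 0 ≤ (1 - δ) * D := mul_nonneg (by linarith) hD0
  have h3 : (lam j + δ * gj) * (x ⬝ᵥ x) = lam j * (x ⬝ᵥ x) + δ * gj * (x ⬝ᵥ x) := by ring
  have h4 : (1 - δ) * D = D - δ * D := by ring
  have hfin : lamh j * (x ⬝ᵥ x) ≤ (lam j + δ * gj) * (x ⬝ᵥ x) := by linarith
  exact le_of_mul_le_mul_right hfin hX

lemma apriori_lower (hδ1 : delta lam u j gj E ≤ 1) :
    lam j - delta lam u j gj E * gj ≤ lamh j := by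
  obtain ⟨x, hx0, hcu, hbu⟩ := exists_witness uh u j
  have hX : 0 < x ⬝ᵥ x := dot_self_pos hx0
  have hPc : ∑ k, (uh k ⬝ᵥ x) * (uh k ⬝ᵥ x) = x ⬝ᵥ x := parseval hONh x x
  have hPb : ∑ k, (u k ⬝ᵥ x) * (u k ⬝ᵥ x) = x ⬝ᵥ x := parseval hON x x
  have hlow : x ⬝ᵥ ((∑ k, lamh k • proj (uh k)) *ᵥ x) ≤ lamh j * (x ⬝ᵥ x) := by
    rw [diag_quad hONh lamh x, ← hPc, Finset.mul_sum]
    refine Finset.sum_le_sum fun k _ => ?_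
    by_cases hk : k < j
    · rw [hcu k hk]; simp
    · have h1 : lamh k ≤ lamh j := hlamh (not_lt.mp hk)
      nlinarith [mul_self_nonneg (uh k ⬝ᵥ x)]
  set D := ∑ k ∈ Finset.univ.filter (fun k => k ≠ j),
    |lam k - lam j| * ((u k ⬝ᵥ x) * (u k ⬝ᵥ x)) with hD
  have hD0 : 0 ≤ D :=
    Finset.sum_nonneg fun k _ => mul_nonneg (abs_nonneg _) (mul_self_nonneg _)
  have hpt : ∀ k, lam k * ((u k ⬝ᵥ x) * (u k ⬝ᵥ x)) =
      lam j * ((u k ⬝ᵥ x) * (u k ⬝ᵥ x)) + |lam k - lam j| * ((u k ⬝ᵥ x) * (u k ⬝ᵥ x)) := by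
    intro k
    rcases lt_trichotomy k j with h | h | h
    · have h1 : lam j ≤ lam k := hlam (le_of_lt h)
      rw [abs_of_nonneg (by linarith)]; ring
    · subst h; simp
    · rw [hbu k h]; ring
  have hDuniv : ∑ k, |lam k - lam j| * ((u k ⬝ᵥ x) * (u k ⬝ᵥ x)) = D := by
    rw [sum_split j (fun k => |lam k - lam j| * ((u k ⬝ᵥ x) * (u k ⬝ᵥ x)))]
    simp [hD]
  have hSig : x ⬝ᵥ ((∑ k, lam k • proj (u k)) *ᵥ x) = lam j * (x ⬝ᵥ x) + D := by
    rw [diag_quad hON lam x, Finset.sum_congr rfl fun k _ => hpt k,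
      Finset.sum_add_distrib, hDuniv, ← Finset.mul_sum, hPb]
  have hEb := E_quad_bound hON j hgj_pos hgj E x
  rw [← hD] at hEb
  have hdec : x ⬝ᵥ ((∑ k, lamh k • proj (uh k)) *ᵥ x) =
      x ⬝ᵥ ((∑ k, lam k • proj (u k)) *ᵥ x) + x ⬝ᵥ (E *ᵥ x) := by
    rw [← hdecomp, Matrix.add_mulVec, dotProduct_add]
  have hbj : (u j ⬝ᵥ x) * (u j ⬝ᵥ x) ≤ x ⬝ᵥ x := by
    rw [← hPb, sum_split j (fun k => (u k ⬝ᵥ x) * (u k ⬝ᵥ x))]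
    have h0 : 0 ≤ ∑ k ∈ Finset.univ.filter (fun k => k ≠ j),
        (u k ⬝ᵥ x) * (u k ⬝ᵥ x) := Finset.sum_nonneg fun k _ => mul_self_nonneg _
    linarith
  have hδ0 : 0 ≤ delta lam u j gj E := opNorm_nonneg _
  set δ := delta lam u j gj E with hδ
  have h1 : -(δ * (gj * ((u j ⬝ᵥ x) * (u j ⬝ᵥ x)) + D)) ≤ x ⬝ᵥ (E *ᵥ x) :=
    neg_le_of_abs_le hEb
  have h2 : δ * (gj * ((u j ⬝ᵥ x) * (u j ⬝ᵥ x)) + D) =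
      δ * gj * ((u j ⬝ᵥ x) * (u j ⬝ᵥ x)) + δ * D := by ring
  have p1 : δ * gj * ((u j ⬝ᵥ x) * (u j ⬝ᵥ x)) ≤ δ * gj * (x ⬝ᵥ x) :=
    mul_le_mul_of_nonneg_left hbj (mul_nonneg hδ0 hgj_pos.le)
  have p2 : 0 ≤ (1 - δ) * D := mul_nonneg (by linarith) hD0
  have h3 : (lam j - δ * gj) * (x ⬝ᵥ x) = lam j * (x ⬝ᵥ x) - δ * gj * (x ⬝ᵥ x) := by ring
  have h4 : (1 - δ) * D = D - δ * D := by ring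
  have hfin : (lam j - δ * gj) * (x ⬝ᵥ x) ≤ lamh j * (x ⬝ᵥ x) := by linarith
  exact le_of_mul_le_mul_right hfin hX

lemma apriori (hδ1 : delta lam u j gj E ≤ 1) :
    |lamh j - lam j| ≤ delta lam u j gj E * gj := by
  rw [abs_sub_le_iff]
  constructor
  · have := apriori_upper hON j hgj_pos hgj hONh hlam hlamh hdecomp hδ1
    linarith
  · have := apriori_lower hON j hgj_pos hgj hONh hlam hlamh hdecomp hδ1
    linarith

omit hgj_pos hgj hONh hlam hlamh hdecomp in
lemma sqrtAbsRes_symm : (sqrtAbsRes lam u j)ᵀ = sqrtAbsRes lam u j := by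
  rw [sqrtAbsRes, Matrix.transpose_sum]
  exact Finset.sum_congr rfl fun k _ => by
    rw [Matrix.transpose_smul, proj, vecMulVec_transpose]

omit hgj_pos hgj hONh hlam hlamh hdecomp in
lemma nrm_uj : nrm (u j) = 1 := by
  rw [nrm, hON j j]
  simp

omit hgj_pos hgj hONh hlam hlamh hdecomp in
lemma hsPEP {E : Matrix (Fin d) (Fin d) ℝ} (hE' : Eᵀ = E) :
    hsNorm (proj (u j) * E * proj (u j)) = |u j ⬝ᵥ (E *ᵥ u j)| := by
  have h1 : proj (u j) * E * proj (u j)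
      = Matrix.vecMulVec (u j) (((Eᵀ *ᵥ u j) ⬝ᵥ u j) • u j) := by
    rw [proj, vecMulVec_mul, vecMulVec_mul_vecMulVec, smul_vecMulVec]
  rw [h1, hsNorm_vecMulVec, nrm_smul, nrm_uj hON j, hE', dotProduct_comm]
  ring

omit hgj_pos hgj hONh hlam hlamh hdecomp in
lemma hsPES {E : Matrix (Fin d) (Fin d) ℝ} (hE' : Eᵀ = E) :
    hsNorm (proj (u j) * E * sqrtAbsRes lam u j) ^ 2
      = ∑ k ∈ Finset.univ.filter (fun k => k ≠ j),
          (u k ⬝ᵥ (E *ᵥ u j)) ^ 2 * |lam k - lam j|⁻¹ := by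
  have h1 : proj (u j) * E * sqrtAbsRes lam u j
      = Matrix.vecMulVec (u j) ((sqrtAbsRes lam u j)ᵀ *ᵥ (Eᵀ *ᵥ u j)) := by
    rw [proj, vecMulVec_mul, vecMulVec_mul]
  have hr : (sqrtAbsRes lam u j)ᵀ *ᵥ (Eᵀ *ᵥ u j)
      = ∑ k ∈ Finset.univ.filter (fun k => k ≠ j),
          ((Real.sqrt |lam k - lam j|)⁻¹ * (u k ⬝ᵥ (E *ᵥ u j))) • u k := by
    rw [sqrtAbsRes_symm hON j, hE', sqrtAbsRes, diag_mulVec]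
  rw [h1, hsNorm_vecMulVec, nrm_uj hON j, one_mul, nrm_sq, hr,
    combo_dot_combo hON, Finset.inter_self]
  refine Finset.sum_congr rfl fun k hk => ?_
  have hxx : Real.sqrt |lam k - lam j| * Real.sqrt |lam k - lam j| = |lam k - lam j| :=
    Real.mul_self_sqrt (abs_nonneg _)
  have h8 : ((Real.sqrt |lam k - lam j|)⁻¹ * (u k ⬝ᵥ (E *ᵥ u j)))
      * ((Real.sqrt |lam k - lam j|)⁻¹ * (u k ⬝ᵥ (E *ᵥ u j)))
      = (u k ⬝ᵥ (E *ᵥ u j)) ^ 2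
        * (Real.sqrt |lam k - lam j| * Real.sqrt |lam k - lam j|)⁻¹ := by
    rw [mul_inv]; ring
  rw [h8, hxx]

set_option maxHeartbeats 3200000 in
lemma main_est (hE : E.IsSymm) {ε : ℝ} (hε0 : 0 < ε) (hε1 : ε < 1 / 2)
    (hdelta : delta lam u j gj E ≤ 1 / 2 - ε) :
    |lamh j - lam j| ≤ |u j ⬝ᵥ (E *ᵥ u j)| +
      (2 * ε)⁻¹ * ∑ k ∈ Finset.univ.filter (fun k => k ≠ j),
        (u k ⬝ᵥ (E *ᵥ u j)) ^ 2 * |lam k - lam j|⁻¹ := by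
  have hE' : Eᵀ = E := hE
  have hδ0 : 0 ≤ delta lam u j gj E := opNorm_nonneg _
  have hδ1 : delta lam u j gj E ≤ 1 := by linarith
  have hgap := habs_pos j hgj_pos hgj
  have hap : |lamh j - lam j| ≤ (1 / 2 - ε) * gj := by
    have h1 := apriori hON j hgj_pos hgj hONh hlam hlamh hdecomp hδ1
    have h2 : delta lam u j gj E * gj ≤ (1 / 2 - ε) * gj :=
      mul_le_mul_of_nonneg_right hdelta hgj_pos.le
    linarith
  -- eigen-equation in coordinates
  have heq : ∀ k, u k ⬝ᵥ (E *ᵥ uh j) = (lamh j - lam k) * (u k ⬝ᵥ uh j) := by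
    intro k
    have hAv : (∑ l, lamh l • proj (uh l)) *ᵥ uh j = lamh j • uh j := by
      rw [diag_mulVec]
      have h1 : ∀ l, (lamh l * (uh l ⬝ᵥ uh j)) • uh l
          = if l = j then lamh j • uh j else 0 := by
        intro l
        rw [hONh l j]
        by_cases h : l = j <;> simp [h]
      rw [Finset.sum_congr rfl fun l _ => h1 l, Finset.sum_ite_eq' Finset.univ j]
      simp
    have h2 : ((∑ l, lam l • proj (u l)) + E) *ᵥ uh j = lamh j • uh j := by
      rw [hdecomp, hAv]
    have h3 := congrArg (fun zz => u k ⬝ᵥ zz) h2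
    simp only [Matrix.add_mulVec, dotProduct_add] at h3
    have h4 : u k ⬝ᵥ ((∑ l, lam l • proj (u l)) *ᵥ uh j) = lam k * (u k ⬝ᵥ uh j) := by
      rw [diag_mulVec, dot_combo hON]
      simp
    have h5 : u k ⬝ᵥ (lamh j • uh j) = lamh j * (u k ⬝ᵥ uh j) := by
      rw [dotProduct_smul, smul_eq_mul]
    rw [h4, h5] at h3
    linarith
  -- Parseval for v
  have hv1 : ∑ k, (u k ⬝ᵥ uh j) * (u k ⬝ᵥ uh j) = 1 := by
    rw [parseval hON, hONh j j]
    simp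
  -- decomposition v = βj uj + w
  have hvw : uh j = (u j ⬝ᵥ uh j) • u j + ∑ k ∈ Finset.univ.filter (fun k => k ≠ j),
      (u k ⬝ᵥ uh j) • u k := by
    conv_lhs => rw [← expand hON (uh j)]
    exact sum_split' j _
  set w : Fin d → ℝ := ∑ k ∈ Finset.univ.filter (fun k => k ≠ j),
      (u k ⬝ᵥ uh j) • u k with hw
  have hef : ∀ k, u k ⬝ᵥ (E *ᵥ uh j)
      = (u j ⬝ᵥ uh j) * (u k ⬝ᵥ (E *ᵥ u j)) + u k ⬝ᵥ (E *ᵥ w) := by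
    intro k
    conv_lhs => rw [hvw]
    rw [Matrix.mulVec_add, Matrix.mulVec_smul, dotProduct_add, dotProduct_smul, smul_eq_mul]
  have hfj : u j ⬝ᵥ (E *ᵥ w) = ∑ k ∈ Finset.univ.filter (fun k => k ≠ j),
      (u k ⬝ᵥ uh j) * (u k ⬝ᵥ (E *ᵥ u j)) := by
    rw [dot_flip E hE', dotProduct_comm, hw, sum_dot]
    exact Finset.sum_congr rfl fun k _ => by rw [smul_dotProduct, smul_eq_mul]
  -- separation
  have hsep : ∀ k, k ≠ j → (1 / 2 + ε) * |lam k - lam j| ≤ |lam k - lamh j| := by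
    intro k hk
    have h1 : |lam k - lam j| ≤ |lam k - lamh j| + |lamh j - lam j| := abs_sub_le _ _ _
    have h2 : |lamh j - lam j| ≤ (1 / 2 - ε) * |lam k - lam j| := by
      refine hap.trans ?_
      exact mul_le_mul_of_nonneg_left (hgap k hk).2 (by linarith)
    linarith
  -- auxiliary vectors
  set z : Fin d → ℝ := ∑ k ∈ Finset.univ.filter (fun k => k ≠ j),
      ((Real.sqrt |lam k - lam j|)⁻¹ * (u k ⬝ᵥ (E *ᵥ w))) • u k with hz
  set y' : Fin d → ℝ := ∑ k ∈ Finset.univ.filter (fun k => k ≠ j),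
      (Real.sqrt |lam k - lam j| * (u k ⬝ᵥ uh j)) • u k with hy'
  set Y2 := ∑ k ∈ Finset.univ.filter (fun k => k ≠ j),
      |lam k - lam j| * (u k ⬝ᵥ uh j) ^ 2 with hY2
  set s2 := ∑ k ∈ Finset.univ.filter (fun k => k ≠ j),
      (u k ⬝ᵥ (E *ᵥ u j)) ^ 2 * |lam k - lam j|⁻¹ with hs2
  set F2 := ∑ k ∈ Finset.univ.filter (fun k => k ≠ j),
      (u k ⬝ᵥ (E *ᵥ w)) ^ 2 * |lam k - lam j|⁻¹ with hF2def
  have hY20 : 0 ≤ Y2 := Finset.sum_nonneg fun k _ =>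
    mul_nonneg (abs_nonneg _) (sq_nonneg _)
  have hs20 : 0 ≤ s2 := Finset.sum_nonneg fun k _ =>
    mul_nonneg (sq_nonneg _) (inv_nonneg.mpr (abs_nonneg _))
  have hF20 : 0 ≤ F2 := Finset.sum_nonneg fun k _ =>
    mul_nonneg (sq_nonneg _) (inv_nonneg.mpr (abs_nonneg _))
  have hzw : sqrtAbsRes lam u j *ᵥ (E *ᵥ w) = z := by
    rw [sqrtAbsRes, diag_mulVec]
  have hzz : z ⬝ᵥ z = F2 := by
    rw [hz, combo_dot_combo hON, Finset.inter_self, hF2def]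
    refine Finset.sum_congr rfl fun k hk => ?_
    have hxx : Real.sqrt |lam k - lam j| * Real.sqrt |lam k - lam j| = |lam k - lam j| :=
      Real.mul_self_sqrt (abs_nonneg _)
    have h8 : ((Real.sqrt |lam k - lam j|)⁻¹ * (u k ⬝ᵥ (E *ᵥ w)))
        * ((Real.sqrt |lam k - lam j|)⁻¹ * (u k ⬝ᵥ (E *ᵥ w)))
        = (u k ⬝ᵥ (E *ᵥ w)) ^ 2 * (Real.sqrt |lam k - lam j| * Real.sqrt |lam k - lam j|)⁻¹ := by
      rw [mul_inv]; ring
    rw [h8, hxx]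
  have hy'y' : y' ⬝ᵥ y' = Y2 := by
    rw [hy', combo_dot_combo hON, Finset.inter_self, hY2]
    refine Finset.sum_congr rfl fun k hk => ?_
    have hxx : Real.sqrt |lam k - lam j| * Real.sqrt |lam k - lam j| = |lam k - lam j| :=
      Real.mul_self_sqrt (abs_nonneg _)
    rw [show (Real.sqrt |lam k - lam j| * (u k ⬝ᵥ uh j))
        * (Real.sqrt |lam k - lam j| * (u k ⬝ᵥ uh j))
        = (Real.sqrt |lam k - lam j| * Real.sqrt |lam k - lam j|) * (u k ⬝ᵥ uh j) ^ 2
      from by ring, hxx]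
  have hujz : u j ⬝ᵥ z = 0 := by
    rw [hz, dot_combo hON]
    simp
  have hzuj : z ⬝ᵥ u j = 0 := by rw [dotProduct_comm]; exact hujz
  have hSy' : sqrtAbsRes lam u j *ᵥ y' = w := by
    rw [sqrtAbsRes, diag_mulVec, hw]
    refine Finset.sum_congr rfl fun k hk => ?_
    have hk' := (Finset.mem_filter.mp hk).2
    rw [hy', dot_combo hON, if_pos hk]
    have hs0 : Real.sqrt |lam k - lam j| ≠ 0 := ne_of_gt (Real.sqrt_pos.mpr (hgap k hk').1)
    rw [← mul_assoc, inv_mul_cancel₀ hs0, one_mul]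
  have hujy' : u j ⬝ᵥ y' = 0 := by
    rw [hy', dot_combo hON]
    simp
  have hTmy' : (sqrtAbsRes lam u j + (Real.sqrt gj)⁻¹ • proj (u j)) *ᵥ y' = w := by
    rw [Matrix.add_mulVec, hSy', Matrix.smul_mulVec, proj_mulVec, hujy']
    simp
  have hTEw : (sqrtAbsRes lam u j + (Real.sqrt gj)⁻¹ • proj (u j)) *ᵥ (E *ᵥ w)
      = z + ((Real.sqrt gj)⁻¹ * (u j ⬝ᵥ (E *ᵥ w))) • u j := by
    rw [Matrix.add_mulVec, hzw, Matrix.smul_mulVec, proj_mulVec, smul_smul]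
  have hTET : ((sqrtAbsRes lam u j + (Real.sqrt gj)⁻¹ • proj (u j)) * E *
      (sqrtAbsRes lam u j + (Real.sqrt gj)⁻¹ • proj (u j))) *ᵥ y'
      = z + ((Real.sqrt gj)⁻¹ * (u j ⬝ᵥ (E *ᵥ w))) • u j := by
    rw [← Matrix.mulVec_mulVec, ← Matrix.mulVec_mulVec, hTmy', hTEw]
  have hF2le : F2 ≤ delta lam u j gj E ^ 2 * Y2 := by
    set c0 := (Real.sqrt gj)⁻¹ * (u j ⬝ᵥ (E *ᵥ w)) with hc0
    have e1 : (z + c0 • u j) ⬝ᵥ (z + c0 • u j) = z ⬝ᵥ z + c0 * c0 := by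
      rw [dotProduct_add, add_dotProduct, add_dotProduct, dotProduct_smul, smul_dotProduct,
        smul_dotProduct, dotProduct_smul, hzuj, hujz, hON j j]
      simp
    have e2 : nrm (((sqrtAbsRes lam u j + (Real.sqrt gj)⁻¹ • proj (u j)) * E *
        (sqrtAbsRes lam u j + (Real.sqrt gj)⁻¹ • proj (u j))) *ᵥ y')
        ≤ delta lam u j gj E * nrm y' := mulVec_nrm_le _ _
    have e3 : (z + c0 • u j) ⬝ᵥ (z + c0 • u j) ≤ delta lam u j gj E ^ 2 * Y2 := by
      rw [← hTET, ← nrm_mul_self]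
      have h7 : delta lam u j gj E * nrm y' * (delta lam u j gj E * nrm y')
          = delta lam u j gj E ^ 2 * (y' ⬝ᵥ y') := by
        rw [← nrm_mul_self]; ring
      have h9 := mul_le_mul e2 e2 (nrm_nonneg _) (mul_nonneg hδ0 (nrm_nonneg _))
      rw [h7, hy'y'] at h9
      exact h9
    have := mul_self_nonneg c0
    linarith [hzz ▸ (e1 ▸ e3)]
  -- componentwise bound
  have hcomp : ∀ k ∈ Finset.univ.filter (fun k => k ≠ j),
      (1 / 2 + ε) * (Real.sqrt |lam k - lam j| * |u k ⬝ᵥ uh j|)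
        ≤ (Real.sqrt |lam k - lam j|)⁻¹ *
          (|u j ⬝ᵥ uh j| * |u k ⬝ᵥ (E *ᵥ u j)| + |u k ⬝ᵥ (E *ᵥ w)|) := by
    intro k hk
    have hk' := (Finset.mem_filter.mp hk).2
    have hx0 := (hgap k hk').1
    have hsx : 0 < Real.sqrt |lam k - lam j| := Real.sqrt_pos.mpr hx0
    have hxx : Real.sqrt |lam k - lam j| * Real.sqrt |lam k - lam j| = |lam k - lam j| :=
      Real.mul_self_sqrt (abs_nonneg _)
    have hK : (1 / 2 + ε) * (|lam k - lam j| * |u k ⬝ᵥ uh j|)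
        ≤ |u j ⬝ᵥ uh j| * |u k ⬝ᵥ (E *ᵥ u j)| + |u k ⬝ᵥ (E *ᵥ w)| := by
      have t1 : (1 / 2 + ε) * |lam k - lam j| * |u k ⬝ᵥ uh j|
          ≤ |lam k - lamh j| * |u k ⬝ᵥ uh j| :=
        mul_le_mul_of_nonneg_right (hsep k hk') (abs_nonneg _)
      have t2 : |lam k - lamh j| * |u k ⬝ᵥ uh j| = |u k ⬝ᵥ (E *ᵥ uh j)| := by
        rw [heq k, abs_mul, abs_sub_comm]
      have t3 : |u k ⬝ᵥ (E *ᵥ uh j)|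
          ≤ |u j ⬝ᵥ uh j| * |u k ⬝ᵥ (E *ᵥ u j)| + |u k ⬝ᵥ (E *ᵥ w)| := by
        rw [hef k]
        exact (abs_add_le _ _).trans (by rw [abs_mul])
      rw [t2] at t1
      calc (1 / 2 + ε) * (|lam k - lam j| * |u k ⬝ᵥ uh j|)
          = (1 / 2 + ε) * |lam k - lam j| * |u k ⬝ᵥ uh j| := by ring
      _ ≤ |u k ⬝ᵥ (E *ᵥ uh j)| := t1
      _ ≤ _ := t3
    rw [← mul_le_mul_iff_of_pos_right hsx]
    have hR : (Real.sqrt |lam k - lam j|)⁻¹ *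
        (|u j ⬝ᵥ uh j| * |u k ⬝ᵥ (E *ᵥ u j)| + |u k ⬝ᵥ (E *ᵥ w)|) * Real.sqrt |lam k - lam j|
        = |u j ⬝ᵥ uh j| * |u k ⬝ᵥ (E *ᵥ u j)| + |u k ⬝ᵥ (E *ᵥ w)| := by
      have hcalc : (Real.sqrt |lam k - lam j|)⁻¹ *
          (|u j ⬝ᵥ uh j| * |u k ⬝ᵥ (E *ᵥ u j)| + |u k ⬝ᵥ (E *ᵥ w)|) * Real.sqrt |lam k - lam j|
          = (|u j ⬝ᵥ uh j| * |u k ⬝ᵥ (E *ᵥ u j)| + |u k ⬝ᵥ (E *ᵥ w)|) *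
            ((Real.sqrt |lam k - lam j|)⁻¹ * Real.sqrt |lam k - lam j|) := by ring
      rw [hcalc, inv_mul_cancel₀ (ne_of_gt hsx), mul_one]
    rw [hR]
    have hL : (1 / 2 + ε) * (Real.sqrt |lam k - lam j| * |u k ⬝ᵥ uh j|)
          * Real.sqrt |lam k - lam j|
        = (1 / 2 + ε) * (|lam k - lam j| * |u k ⬝ᵥ uh j|) := by
      linear_combination (1 / 2 + ε) * |u k ⬝ᵥ uh j| * hxx
    rw [hL]
    exact hK
  -- sums of squares
  have hp2 : ∑ k ∈ Finset.univ.filter (fun k => k ≠ j),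
      ((Real.sqrt |lam k - lam j|)⁻¹ * (|u j ⬝ᵥ uh j| * |u k ⬝ᵥ (E *ᵥ u j)|)) ^ 2
      = (u j ⬝ᵥ uh j) ^ 2 * s2 := by
    rw [hs2, Finset.mul_sum]
    refine Finset.sum_congr rfl fun k hk => ?_
    rw [mul_pow, inv_sqrt_sq (abs_nonneg _), mul_pow, sq_abs, sq_abs]
    ring
  have hq2 : ∑ k ∈ Finset.univ.filter (fun k => k ≠ j),
      ((Real.sqrt |lam k - lam j|)⁻¹ * |u k ⬝ᵥ (E *ᵥ w)|) ^ 2 = F2 := by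
    rw [hF2def]
    refine Finset.sum_congr rfl fun k hk => ?_
    rw [mul_pow, inv_sqrt_sq (abs_nonneg _), sq_abs]
    ring
  have hcross : ∑ k ∈ Finset.univ.filter (fun k => k ≠ j),
      ((Real.sqrt |lam k - lam j|)⁻¹ * (|u j ⬝ᵥ uh j| * |u k ⬝ᵥ (E *ᵥ u j)|)) *
        ((Real.sqrt |lam k - lam j|)⁻¹ * |u k ⬝ᵥ (E *ᵥ w)|)
      ≤ |u j ⬝ᵥ uh j| * Real.sqrt s2 * Real.sqrt F2 := by
    have hh := Real.sum_mul_le_sqrt_mul_sqrt (Finset.univ.filter (fun k => k ≠ j))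
      (fun k => (Real.sqrt |lam k - lam j|)⁻¹ * (|u j ⬝ᵥ uh j| * |u k ⬝ᵥ (E *ᵥ u j)|))
      (fun k => (Real.sqrt |lam k - lam j|)⁻¹ * |u k ⬝ᵥ (E *ᵥ w)|)
    rw [hp2, hq2, Real.sqrt_mul (sq_nonneg _), Real.sqrt_sq_eq_abs] at hh
    exact hh
  have hsum1 : (1 / 2 + ε) ^ 2 * Y2
      ≤ ∑ k ∈ Finset.univ.filter (fun k => k ≠ j),
        ((Real.sqrt |lam k - lam j|)⁻¹ *
          (|u j ⬝ᵥ uh j| * |u k ⬝ᵥ (E *ᵥ u j)| + |u k ⬝ᵥ (E *ᵥ w)|)) ^ 2 := by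
    rw [hY2, Finset.mul_sum]
    refine Finset.sum_le_sum fun k hk => ?_
    have h6 : (1 / 2 + ε) ^ 2 * (|lam k - lam j| * (u k ⬝ᵥ uh j) ^ 2)
        = ((1 / 2 + ε) * (Real.sqrt |lam k - lam j| * |u k ⬝ᵥ uh j|)) ^ 2 := by
      rw [mul_pow, mul_pow, Real.sq_sqrt (abs_nonneg _), sq_abs]
      try ring
    rw [h6]
    refine pow_le_pow_left₀ (by positivity) (hcomp k hk) 2
  have hsum2 : ∑ k ∈ Finset.univ.filter (fun k => k ≠ j),
      ((Real.sqrt |lam k - lam j|)⁻¹ *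
        (|u j ⬝ᵥ uh j| * |u k ⬝ᵥ (E *ᵥ u j)| + |u k ⬝ᵥ (E *ᵥ w)|)) ^ 2
      = (u j ⬝ᵥ uh j) ^ 2 * s2
        + 2 * (∑ k ∈ Finset.univ.filter (fun k => k ≠ j),
            ((Real.sqrt |lam k - lam j|)⁻¹ * (|u j ⬝ᵥ uh j| * |u k ⬝ᵥ (E *ᵥ u j)|)) *
              ((Real.sqrt |lam k - lam j|)⁻¹ * |u k ⬝ᵥ (E *ᵥ w)|)) + F2 := by
    rw [← hp2, ← hq2, Finset.mul_sum, ← Finset.sum_add_distrib, ← Finset.sum_add_distrib]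
    refine Finset.sum_congr rfl fun k hk => ?_
    ring
  have hQ : ((1 / 2 + ε) * Real.sqrt Y2) ^ 2
      ≤ (|u j ⬝ᵥ uh j| * Real.sqrt s2 + Real.sqrt F2) ^ 2 := by
    have hid : (|u j ⬝ᵥ uh j| * Real.sqrt s2 + Real.sqrt F2) ^ 2
        = (u j ⬝ᵥ uh j) ^ 2 * s2 + 2 * (|u j ⬝ᵥ uh j| * Real.sqrt s2 * Real.sqrt F2) + F2 := by
      rw [add_sq, mul_pow, sq_abs, Real.sq_sqrt hs20, Real.sq_sqrt hF20]
      ring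
    have hL2 : ((1 / 2 + ε) * Real.sqrt Y2) ^ 2 = (1 / 2 + ε) ^ 2 * Y2 := by
      rw [mul_pow, Real.sq_sqrt hY20]
    rw [hid, hL2]
    linarith [hsum1, hsum2.symm.le, hcross]
  have hsqrtY : (1 / 2 + ε) * Real.sqrt Y2
      ≤ |u j ⬝ᵥ uh j| * Real.sqrt s2 + Real.sqrt F2 := by
    have hLnn : 0 ≤ (1 / 2 + ε) * Real.sqrt Y2 := by positivity
    have hRnn : 0 ≤ |u j ⬝ᵥ uh j| * Real.sqrt s2 + Real.sqrt F2 := by positivity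
    calc (1 / 2 + ε) * Real.sqrt Y2
        = Real.sqrt (((1 / 2 + ε) * Real.sqrt Y2) ^ 2) := (Real.sqrt_sq hLnn).symm
    _ ≤ Real.sqrt ((|u j ⬝ᵥ uh j| * Real.sqrt s2 + Real.sqrt F2) ^ 2) :=
        Real.sqrt_le_sqrt hQ
    _ = _ := Real.sqrt_sq hRnn
  have hsqF : Real.sqrt F2 ≤ delta lam u j gj E * Real.sqrt Y2 := by
    calc Real.sqrt F2 ≤ Real.sqrt (delta lam u j gj E ^ 2 * Y2) := Real.sqrt_le_sqrt hF2le
    _ = delta lam u j gj E * Real.sqrt Y2 := by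
        rw [Real.sqrt_mul (sq_nonneg _), Real.sqrt_sq hδ0]
  have h2eps : 2 * ε * Real.sqrt Y2 ≤ |u j ⬝ᵥ uh j| * Real.sqrt s2 := by
    have hd : delta lam u j gj E * Real.sqrt Y2 ≤ (1 / 2 - ε) * Real.sqrt Y2 :=
      mul_le_mul_of_nonneg_right hdelta (Real.sqrt_nonneg _)
    linarith
  -- β j ≠ 0
  have hbj0 : u j ⬝ᵥ uh j ≠ 0 := by
    intro h0
    have hs0 : |u j ⬝ᵥ uh j| * Real.sqrt s2 = 0 := by rw [h0]; simp
    have hY0 : Real.sqrt Y2 = 0 := by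
      have := Real.sqrt_nonneg Y2
      nlinarith
    have hY2_0 : Y2 = 0 := by
      have := Real.sqrt_eq_zero hY20
      exact this.mp hY0
    have hall := (Finset.sum_eq_zero_iff_of_nonneg
      (fun k _ => mul_nonneg (abs_nonneg (lam k - lam j)) (sq_nonneg (u k ⬝ᵥ uh j)))).mp
      (by rw [← hY2]; exact hY2_0)
    have hbz : ∀ k ∈ Finset.univ.filter (fun k => k ≠ j), (u k ⬝ᵥ uh j) = 0 := by
      intro k hk
      have h := hall k hk
      have hx0 := (hgap k (Finset.mem_filter.mp hk).2).1
      have hsq : (u k ⬝ᵥ uh j) ^ 2 = 0 := by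
        rcases mul_eq_zero.mp h with h' | h'
        · exact absurd h' (ne_of_gt hx0)
        · exact h'
      exact pow_eq_zero_iff (two_ne_zero) |>.mp hsq
    have hcontr : (1 : ℝ) = 0 := by
      rw [← hv1, sum_split j (fun k => (u k ⬝ᵥ uh j) * (u k ⬝ᵥ uh j)), h0,
        Finset.sum_congr rfl (fun k hk => by rw [hbz k hk, mul_zero])]
      simp
    norm_num at hcontr
  -- main identity and conclusion
  have hkey : (lamh j - lam j) * (u j ⬝ᵥ uh j)
      = (u j ⬝ᵥ (E *ᵥ u j)) * (u j ⬝ᵥ uh j)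
        + ∑ k ∈ Finset.univ.filter (fun k => k ≠ j),
            (u k ⬝ᵥ uh j) * (u k ⬝ᵥ (E *ᵥ u j)) := by
    have h1 := heq j
    have h2 := hef j
    have h3 := hfj
    rw [← h1, h2, h3]
    ring
  have hCS2 : |∑ k ∈ Finset.univ.filter (fun k => k ≠ j),
      (u k ⬝ᵥ uh j) * (u k ⬝ᵥ (E *ᵥ u j))| ≤ Real.sqrt s2 * Real.sqrt Y2 := by
    have hcs := Finset.sum_mul_sq_le_sq_mul_sq (Finset.univ.filter (fun k => k ≠ j))
      (fun k => (u k ⬝ᵥ (E *ᵥ u j)) * (Real.sqrt |lam k - lam j|)⁻¹)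
      (fun k => Real.sqrt |lam k - lam j| * (u k ⬝ᵥ uh j))
    have hfg : ∀ k ∈ Finset.univ.filter (fun k => k ≠ j),
        ((u k ⬝ᵥ (E *ᵥ u j)) * (Real.sqrt |lam k - lam j|)⁻¹)
          * (Real.sqrt |lam k - lam j| * (u k ⬝ᵥ uh j))
        = (u k ⬝ᵥ uh j) * (u k ⬝ᵥ (E *ᵥ u j)) := by
      intro k hk
      have hs0 : Real.sqrt |lam k - lam j| ≠ 0 :=
        ne_of_gt (Real.sqrt_pos.mpr (hgap k (Finset.mem_filter.mp hk).2).1)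
      have hee : ((u k ⬝ᵥ (E *ᵥ u j)) * (Real.sqrt |lam k - lam j|)⁻¹)
          * (Real.sqrt |lam k - lam j| * (u k ⬝ᵥ uh j))
          = ((u k ⬝ᵥ uh j) * (u k ⬝ᵥ (E *ᵥ u j)))
            * ((Real.sqrt |lam k - lam j|)⁻¹ * Real.sqrt |lam k - lam j|) := by ring
      rw [hee, inv_mul_cancel₀ hs0, mul_one]
    have hf2 : ∀ k ∈ Finset.univ.filter (fun k => k ≠ j),
        ((u k ⬝ᵥ (E *ᵥ u j)) * (Real.sqrt |lam k - lam j|)⁻¹) ^ 2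
        = (u k ⬝ᵥ (E *ᵥ u j)) ^ 2 * |lam k - lam j|⁻¹ := by
      intro k hk
      rw [mul_pow, inv_sqrt_sq (abs_nonneg _)]
    have hg2 : ∀ k ∈ Finset.univ.filter (fun k => k ≠ j),
        (Real.sqrt |lam k - lam j| * (u k ⬝ᵥ uh j)) ^ 2
        = |lam k - lam j| * (u k ⬝ᵥ uh j) ^ 2 := by
      intro k hk
      rw [mul_pow, Real.sq_sqrt (abs_nonneg _)]
    rw [Finset.sum_congr rfl hfg, Finset.sum_congr rfl hf2, Finset.sum_congr rfl hg2,
      ← hs2, ← hY2] at hcs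
    calc |∑ k ∈ Finset.univ.filter (fun k => k ≠ j),
        (u k ⬝ᵥ uh j) * (u k ⬝ᵥ (E *ᵥ u j))|
        = Real.sqrt ((∑ k ∈ Finset.univ.filter (fun k => k ≠ j),
            (u k ⬝ᵥ uh j) * (u k ⬝ᵥ (E *ᵥ u j))) ^ 2) := (Real.sqrt_sq_eq_abs _).symm
    _ ≤ Real.sqrt (s2 * Y2) := Real.sqrt_le_sqrt hcs
    _ = Real.sqrt s2 * Real.sqrt Y2 := Real.sqrt_mul hs20 _
  have hYs : Real.sqrt s2 * Real.sqrt Y2 ≤ |u j ⬝ᵥ uh j| * ((2 * ε)⁻¹ * s2) := by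
    have h2e : (0:ℝ) < 2 * ε := by linarith
    have hsY : Real.sqrt Y2 ≤ |u j ⬝ᵥ uh j| * Real.sqrt s2 / (2 * ε) := by
      rw [le_div_iff₀ h2e]
      linarith [h2eps]
    calc Real.sqrt s2 * Real.sqrt Y2
        ≤ Real.sqrt s2 * (|u j ⬝ᵥ uh j| * Real.sqrt s2 / (2 * ε)) :=
          mul_le_mul_of_nonneg_left hsY (Real.sqrt_nonneg _)
    _ = |u j ⬝ᵥ uh j| * ((2 * ε)⁻¹ * (Real.sqrt s2 * Real.sqrt s2)) := by
        rw [div_eq_mul_inv]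
        ring
    _ = |u j ⬝ᵥ uh j| * ((2 * ε)⁻¹ * s2) := by rw [Real.mul_self_sqrt hs20]
  have habs : |lamh j - lam j| * |u j ⬝ᵥ uh j|
      ≤ (|u j ⬝ᵥ (E *ᵥ u j)| + (2 * ε)⁻¹ * s2) * |u j ⬝ᵥ uh j| := by
    rw [← abs_mul, hkey]
    calc |(u j ⬝ᵥ (E *ᵥ u j)) * (u j ⬝ᵥ uh j)
          + ∑ k ∈ Finset.univ.filter (fun k => k ≠ j),
              (u k ⬝ᵥ uh j) * (u k ⬝ᵥ (E *ᵥ u j))|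
        ≤ |(u j ⬝ᵥ (E *ᵥ u j)) * (u j ⬝ᵥ uh j)|
          + |∑ k ∈ Finset.univ.filter (fun k => k ≠ j),
              (u k ⬝ᵥ uh j) * (u k ⬝ᵥ (E *ᵥ u j))| := abs_add_le _ _
    _ ≤ |u j ⬝ᵥ (E *ᵥ u j)| * |u j ⬝ᵥ uh j| + Real.sqrt s2 * Real.sqrt Y2 := by
        rw [abs_mul]
        linarith [hCS2]
    _ ≤ |u j ⬝ᵥ (E *ᵥ u j)| * |u j ⬝ᵥ uh j| + |u j ⬝ᵥ uh j| * ((2 * ε)⁻¹ * s2) := by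
        linarith [hYs]
    _ = (|u j ⬝ᵥ (E *ᵥ u j)| + (2 * ε)⁻¹ * s2) * |u j ⬝ᵥ uh j| := by ring
  exact le_of_mul_le_mul_right habs (abs_pos.mpr hbj0)

end Main
end S10


theorem stmt10 (ε : ℝ) (hε0 : 0 < ε) (hε1 : ε < 1 / 2) :
    ∃ C : ℝ, 0 < C ∧
      ∀ {d : ℕ} (lam : Fin d → ℝ) (u : Fin d → Fin d → ℝ)
    (hON : ∀ k l, u k ⬝ᵥ u l = if k = l then (1 : ℝ) else 0)
    (hlam : Antitone lam)
    (E : Matrix (Fin d) (Fin d) ℝ) (hE : E.IsSymm)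
    (j : Fin d) (gj : ℝ) (hgj_pos : 0 < gj)
    (hgj : IsLeast {x : ℝ | ∃ k, k ≠ j ∧ x = |lam k - lam j|} gj)
    (lamh : Fin d → ℝ) (uh : Fin d → Fin d → ℝ)
    (hONh : ∀ k l, uh k ⬝ᵥ uh l = if k = l then (1 : ℝ) else 0)
    (hlamh : Antitone lamh)
    (hdecomp : (∑ k, lam k • proj (u k)) + E = ∑ k, lamh k • proj (uh k))
        (hdelta : delta lam u j gj E ≤ 1 / 2 - ε),
        |lamh j - lam j| ≤
          hsNorm (proj (u j) * E * proj (u j)) +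
            C * hsNorm (proj (u j) * E * sqrtAbsRes lam u j) ^ 2 := by
  refine ⟨(2 * ε)⁻¹, by positivity, ?_⟩
  intro d lam u hON hlam E hE j gj hgj_pos hgj lamh uh hONh hlamh hdecomp hdelta
  have hE' : Eᵀ = E := hE
  have h := S10.main_est hON j hgj_pos hgj hONh hlam hlamh hdecomp hE hε0 hε1 hdelta
  rw [S10.hsPEP hON j hE', S10.hsPES hON j hE']
  exact h
end

section
/- Suppose δ_j < 1/2. Then ‖|R_j|^{1/2} E P̂_j‖_2 ≤ ‖|R_j|^{1/2} E P_j‖_2 + δ_j ‖|R_j|^{-1/2} P̂_j‖_2. -/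
open Matrix Finset

namespace Stmt15Aux

variable {d : ℕ}

noncomputable def nrm {d : ℕ} (x : Fin d → ℝ) : ℝ := Real.sqrt (x ⬝ᵥ x)

lemma nrm_eq (x : Fin d → ℝ) : nrm x = ‖(WithLp.equiv 2 (Fin d → ℝ)).symm x‖ := by
  rw [EuclideanSpace.norm_eq]
  simp [nrm, dotProduct, sq]

lemma nrm_nonneg (x : Fin d → ℝ) : 0 ≤ nrm x := Real.sqrt_nonneg _

lemma nrm_add_le (x y : Fin d → ℝ) : nrm (x + y) ≤ nrm x + nrm y := by
  simp only [nrm_eq]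
  rw [show (WithLp.equiv 2 (Fin d → ℝ)).symm (x + y)
      = (WithLp.equiv 2 (Fin d → ℝ)).symm x + (WithLp.equiv 2 (Fin d → ℝ)).symm y from rfl]
  exact norm_add_le _ _

lemma nrm_smul (c : ℝ) (x : Fin d → ℝ) : nrm (c • x) = |c| * nrm x := by
  simp only [nrm_eq]
  rw [show (WithLp.equiv 2 (Fin d → ℝ)).symm (c • x)
      = c • (WithLp.equiv 2 (Fin d → ℝ)).symm x from rfl]
  rw [norm_smul, Real.norm_eq_abs]

lemma abs_dot_le (x y : Fin d → ℝ) : |x ⬝ᵥ y| ≤ nrm x * nrm y := by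
  have h2 : (inner ℝ ((WithLp.equiv 2 (Fin d → ℝ)).symm x)
      ((WithLp.equiv 2 (Fin d → ℝ)).symm y) : ℝ) = x ⬝ᵥ y := by
    rw [PiLp.inner_apply]; simp [dotProduct, mul_comm]
  have := abs_real_inner_le_norm
    ((WithLp.equiv 2 (Fin d → ℝ)).symm x) ((WithLp.equiv 2 (Fin d → ℝ)).symm y)
  rw [h2] at this
  simpa only [nrm_eq] using this

lemma nrm_mulVec_le (A : Matrix (Fin d) (Fin d) ℝ) (x : Fin d → ℝ) :
    nrm (A *ᵥ x) ≤ opNorm A * nrm x := by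
  simp only [nrm_eq]
  have h := (Matrix.toEuclideanCLM (𝕜 := ℝ) A).le_opNorm ((WithLp.equiv 2 (Fin d → ℝ)).symm x)
  rwa [WithLp.equiv_symm_apply, Matrix.toEuclideanCLM_toLp, ← WithLp.equiv_symm_apply] at h

lemma vecMulVec_mul_vecMulVec (a b c e : Fin d → ℝ) :
    vecMulVec a b * vecMulVec c e = (b ⬝ᵥ c) • vecMulVec a e := by
  ext i l
  simp only [Matrix.mul_apply, vecMulVec_apply, Matrix.smul_apply, dotProduct, smul_eq_mul,
    Finset.sum_mul, Finset.mul_sum]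
  apply Finset.sum_congr rfl
  intro k _
  ring

lemma mul_proj_eq (X : Matrix (Fin d) (Fin d) ℝ) (v : Fin d → ℝ) :
    X * proj v = vecMulVec (X *ᵥ v) v := by
  ext i l
  simp only [Matrix.mul_apply, proj, vecMulVec_apply, Matrix.mulVec, dotProduct, Finset.sum_mul]
  apply Finset.sum_congr rfl
  intro k _
  ring

lemma hsNorm_vecMulVec (a b : Fin d → ℝ) : hsNorm (vecMulVec a b) = nrm a * nrm b := by
  have : ((vecMulVec a b)ᵀ * vecMulVec a b).trace = (a ⬝ᵥ a) * (b ⬝ᵥ b) := by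
    simp only [Matrix.trace, Matrix.diag, Matrix.mul_apply, Matrix.transpose_apply,
      vecMulVec_apply, dotProduct]
    rw [Finset.sum_mul_sum, Finset.sum_comm]
    apply Finset.sum_congr rfl; intro k _
    apply Finset.sum_congr rfl; intro i _
    ring
  have ha : (0:ℝ) ≤ a ⬝ᵥ a := Finset.sum_nonneg fun i _ => mul_self_nonneg _
  rw [hsNorm, this, nrm, nrm, Real.sqrt_mul ha]

lemma proj_mulVec (w y : Fin d → ℝ) : proj w *ᵥ y = (w ⬝ᵥ y) • w := by
  funext i
  simp only [proj, Matrix.mulVec, dotProduct, vecMulVec_apply, Pi.smul_apply, smul_eq_mul]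
  rw [Finset.sum_mul]
  apply Finset.sum_congr rfl
  intro k _
  ring

lemma contraction (w y : Fin d → ℝ) (hw : w ⬝ᵥ w = 1) :
    nrm (y - (w ⬝ᵥ y) • w) ≤ nrm y := by
  apply Real.sqrt_le_sqrt
  set c := w ⬝ᵥ y with hc
  have expand : (y - c • w) ⬝ᵥ (y - c • w) = y ⬝ᵥ y - 2 * c * (w ⬝ᵥ y) + c ^ 2 * (w ⬝ᵥ w) := by
    simp only [sub_dotProduct, dotProduct_sub, smul_dotProduct, dotProduct_smul, smul_eq_mul,
      dotProduct_comm y w]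
    ring
  rw [expand, hw, ← hc]
  nlinarith [sq_nonneg c]

end Stmt15Aux

theorem stmt15 {d : ℕ} (lam : Fin d → ℝ) (u : Fin d → Fin d → ℝ)
    (hON : ∀ k l, u k ⬝ᵥ u l = if k = l then (1 : ℝ) else 0)
    (hlam : Antitone lam)
    (E : Matrix (Fin d) (Fin d) ℝ) (hE : E.IsSymm)
    (j : Fin d) (gj : ℝ) (hgj_pos : 0 < gj)
    (hgj : IsLeast {x : ℝ | ∃ k, k ≠ j ∧ x = |lam k - lam j|} gj)
    (lamh : Fin d → ℝ) (uh : Fin d → Fin d → ℝ)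
    (hONh : ∀ k l, uh k ⬝ᵥ uh l = if k = l then (1 : ℝ) else 0)
    (hlamh : Antitone lamh)
    (hdecomp : (∑ k, lam k • proj (u k)) + E = ∑ k, lamh k • proj (uh k))
    (hdelta : delta lam u j gj E < 1 / 2) :
    hsNorm (sqrtAbsRes lam u j * E * proj (uh j)) ≤
      hsNorm (sqrtAbsRes lam u j * E * proj (u j)) +
        delta lam u j gj E * hsNorm (invSqrtAbsRes lam u j * proj (uh j)) := by
  classical
  open Stmt15Aux in
  have hww : u j ⬝ᵥ u j = 1 := by simpa using hON j j
  have hvv : uh j ⬝ᵥ uh j = 1 := by simpa using hONh j j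
  have hnw : nrm (u j) = 1 := by rw [nrm, hww, Real.sqrt_one]
  have hnv : nrm (uh j) = 1 := by rw [nrm, hvv, Real.sqrt_one]
  have hpp : ∀ k l : Fin d, proj (u k) * proj (u l) = if k = l then proj (u k) else 0 := by
    intro k l
    rw [proj, proj, vecMulVec_mul_vecMulVec, hON]
    by_cases h : k = l
    · subst h; simp [proj]
    · simp [h]
  have hPP : proj (u j) * proj (u j) = proj (u j) := by simpa using hpp j j
  have hPS : proj (u j) * sqrtAbsRes lam u j = 0 := by
    rw [sqrtAbsRes, Finset.mul_sum]
    apply Finset.sum_eq_zero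
    intro k hk
    rw [Finset.mem_filter] at hk
    rw [Matrix.mul_smul, hpp j k, if_neg (Ne.symm hk.2), smul_zero]
  have hSP : sqrtAbsRes lam u j * proj (u j) = 0 := by
    rw [sqrtAbsRes, Finset.sum_mul]
    apply Finset.sum_eq_zero
    intro k hk
    rw [Finset.mem_filter] at hk
    rw [Matrix.smul_mul, hpp k j, if_neg hk.2, smul_zero]
  have hPS' : proj (u j) * invSqrtAbsRes lam u j = 0 := by
    rw [invSqrtAbsRes, Finset.mul_sum]
    apply Finset.sum_eq_zero
    intro k hk
    rw [Finset.mem_filter] at hk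
    rw [Matrix.mul_smul, hpp j k, if_neg (Ne.symm hk.2), smul_zero]
  have hsum : ∑ k, proj (u k) = (1 : Matrix (Fin d) (Fin d) ℝ) := by
    have hU : (Matrix.of u) * (Matrix.of u)ᵀ = 1 := by
      ext k l
      rw [Matrix.mul_apply, Matrix.one_apply, ← hON k l]
      simp [dotProduct]
    have hU2 : (Matrix.of u)ᵀ * (Matrix.of u) = 1 := mul_eq_one_comm.mp hU
    ext i l
    have h2 := congrFun (congrFun hU2 i) l
    simp only [Matrix.mul_apply, Matrix.transpose_apply, Matrix.of_apply] at h2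
    simp only [Matrix.sum_apply, proj, vecMulVec_apply]
    exact h2
  have hgap : ∀ k, k ≠ j → Real.sqrt |lam k - lam j| ≠ 0 := by
    intro k hk
    have hle : gj ≤ |lam k - lam j| := hgj.2 ⟨k, hk, rfl⟩
    exact ne_of_gt (Real.sqrt_pos.mpr (lt_of_lt_of_le hgj_pos hle))
  have hSS' : sqrtAbsRes lam u j * invSqrtAbsRes lam u j = 1 - proj (u j) := by
    have key : sqrtAbsRes lam u j * invSqrtAbsRes lam u j
        = ∑ k ∈ Finset.univ.filter (fun k => k ≠ j), proj (u k) := by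
      rw [sqrtAbsRes, invSqrtAbsRes, Finset.sum_mul_sum]
      apply Finset.sum_congr rfl
      intro k hk
      rw [Finset.mem_filter] at hk
      rw [Finset.sum_eq_single k]
      · rw [Matrix.smul_mul, Matrix.mul_smul, hpp k k, if_pos rfl, smul_smul,
          inv_mul_cancel₀ (hgap k hk.2), one_smul]
      · intro l hl hlk
        rw [Matrix.smul_mul, Matrix.mul_smul, hpp k l, if_neg (Ne.symm hlk), smul_zero, smul_zero]
      · intro h; exact absurd (Finset.mem_filter.mpr ⟨Finset.mem_univ k, hk.2⟩) h
    rw [key, Finset.filter_ne', ← hsum, Finset.sum_erase_eq_sub (Finset.mem_univ j)]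
  have h1P : (1 - proj (u j)) * (sqrtAbsRes lam u j + (Real.sqrt gj)⁻¹ • proj (u j))
      = sqrtAbsRes lam u j := by
    rw [sub_mul, one_mul, mul_add, hPS, Matrix.mul_smul, hPP]
    simp
  have h2P : (sqrtAbsRes lam u j + (Real.sqrt gj)⁻¹ • proj (u j)) * (1 - proj (u j))
      = sqrtAbsRes lam u j := by
    rw [mul_sub, mul_one, add_mul, hSP, Matrix.smul_mul, hPP]
    simp
  set M := (sqrtAbsRes lam u j + (Real.sqrt gj)⁻¹ • proj (u j)) * E *
      (sqrtAbsRes lam u j + (Real.sqrt gj)⁻¹ • proj (u j)) with hM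
  have hSES : sqrtAbsRes lam u j * E * sqrtAbsRes lam u j
      = (1 - proj (u j)) * M * (1 - proj (u j)) := by
    have h3 : ((1 - proj (u j)) * (sqrtAbsRes lam u j + (Real.sqrt gj)⁻¹ • proj (u j))) * E *
        ((sqrtAbsRes lam u j + (Real.sqrt gj)⁻¹ • proj (u j)) * (1 - proj (u j)))
        = (1 - proj (u j)) * M * (1 - proj (u j)) := by
      rw [hM]; simp only [Matrix.mul_assoc]
    rw [h1P, h2P] at h3
    exact h3
  have hdeltaM : delta lam u j gj E = opNorm M := rfl
  have key : sqrtAbsRes lam u j * E = sqrtAbsRes lam u j * E * proj (u j) +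
      (sqrtAbsRes lam u j * E * sqrtAbsRes lam u j) * invSqrtAbsRes lam u j := by
    rw [Matrix.mul_assoc (sqrtAbsRes lam u j * E) (sqrtAbsRes lam u j) (invSqrtAbsRes lam u j),
      hSS', Matrix.mul_sub, Matrix.mul_one]
    abel
  set x := invSqrtAbsRes lam u j *ᵥ uh j with hx
  have hdecv : (sqrtAbsRes lam u j * E) *ᵥ uh j
      = (u j ⬝ᵥ uh j) • ((sqrtAbsRes lam u j * E) *ᵥ u j)
        + (sqrtAbsRes lam u j * E * sqrtAbsRes lam u j) *ᵥ x := by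
    conv_lhs => rw [key]
    rw [Matrix.add_mulVec]
    congr 1
    · rw [← Matrix.mulVec_mulVec, proj_mulVec, Matrix.mulVec_smul]
    · rw [← Matrix.mulVec_mulVec]
  have hPx : proj (u j) *ᵥ x = 0 := by
    rw [hx, Matrix.mulVec_mulVec, hPS', Matrix.zero_mulVec]
  have hsubmul : ∀ y : Fin d → ℝ, (1 - proj (u j)) *ᵥ y = y - (u j ⬝ᵥ y) • u j := by
    intro y
    rw [Matrix.sub_mulVec, Matrix.one_mulVec, proj_mulVec]
  have hSESx : (sqrtAbsRes lam u j * E * sqrtAbsRes lam u j) *ᵥ x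
      = (M *ᵥ x) - (u j ⬝ᵥ (M *ᵥ x)) • u j := by
    have h1mPx : (1 - proj (u j)) *ᵥ x = x := by
      rw [Matrix.sub_mulVec, Matrix.one_mulVec, hPx, sub_zero]
    rw [hSES, ← Matrix.mulVec_mulVec, ← Matrix.mulVec_mulVec, h1mPx, hsubmul]
  have hb1 : nrm ((u j ⬝ᵥ uh j) • ((sqrtAbsRes lam u j * E) *ᵥ u j))
      ≤ nrm ((sqrtAbsRes lam u j * E) *ᵥ u j) := by
    rw [nrm_smul]
    have habs : |u j ⬝ᵥ uh j| ≤ 1 := by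
      have h := abs_dot_le (u j) (uh j)
      rwa [hnw, hnv, one_mul] at h
    calc |u j ⬝ᵥ uh j| * nrm ((sqrtAbsRes lam u j * E) *ᵥ u j)
        ≤ 1 * nrm ((sqrtAbsRes lam u j * E) *ᵥ u j) :=
          mul_le_mul_of_nonneg_right habs (nrm_nonneg _)
      _ = _ := one_mul _
  have hb2 : nrm ((sqrtAbsRes lam u j * E * sqrtAbsRes lam u j) *ᵥ x)
      ≤ delta lam u j gj E * nrm x := by
    rw [hSESx, hdeltaM]
    calc nrm ((M *ᵥ x) - (u j ⬝ᵥ (M *ᵥ x)) • u j) ≤ nrm (M *ᵥ x) := contraction _ _ hww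
      _ ≤ opNorm M * nrm x := nrm_mulVec_le M x
  have main : nrm ((sqrtAbsRes lam u j * E) *ᵥ uh j)
      ≤ nrm ((sqrtAbsRes lam u j * E) *ᵥ u j) + delta lam u j gj E * nrm x := by
    rw [hdecv]
    calc nrm _ ≤ nrm ((u j ⬝ᵥ uh j) • ((sqrtAbsRes lam u j * E) *ᵥ u j))
          + nrm ((sqrtAbsRes lam u j * E * sqrtAbsRes lam u j) *ᵥ x) := nrm_add_le _ _
      _ ≤ _ := add_le_add hb1 hb2
  have e1 : hsNorm (sqrtAbsRes lam u j * E * proj (uh j))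
      = nrm ((sqrtAbsRes lam u j * E) *ᵥ uh j) := by
    rw [mul_proj_eq, hsNorm_vecMulVec, hnv, mul_one]
  have e2 : hsNorm (sqrtAbsRes lam u j * E * proj (u j))
      = nrm ((sqrtAbsRes lam u j * E) *ᵥ u j) := by
    rw [mul_proj_eq, hsNorm_vecMulVec, hnw, mul_one]
  have e3 : hsNorm (invSqrtAbsRes lam u j * proj (uh j)) = nrm x := by
    rw [mul_proj_eq, hsNorm_vecMulVec, hnv, mul_one, hx]
  rw [e1, e2, e3]
  exact main
end

section
/- Suppose δ_j < 1/2. Then for every integer p ≥ 1, ‖(R_j E)^{p−1}(I − P_j) P̂_j‖_2 ≤ (δ'_j)^p / (1 − 2δ_j), where δ'_j ≤ δ_j. -/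
open Matrix Finset RealInnerProductSpace

namespace Hlp
variable {d : ℕ}

variable {d : ℕ}

noncomputable def te : (Fin d → ℝ) ≃ₗ[ℝ] EuclideanSpace ℝ (Fin d) :=
  (WithLp.linearEquiv 2 ℝ _).symm

noncomputable def enr (v : Fin d → ℝ) : ℝ := ‖te v‖

lemma dot_eq_inner (x y : Fin d → ℝ) : x ⬝ᵥ y = (inner ℝ (te x) (te y) : ℝ) := by
  rw [EuclideanSpace.inner_eq_star_dotProduct]
  simp [dotProduct, te, mul_comm]

lemma enr_nonneg (v : Fin d → ℝ) : 0 ≤ enr v := norm_nonneg _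

lemma enr_sq (v : Fin d → ℝ) : enr v ^ 2 = v ⬝ᵥ v := by
  rw [dot_eq_inner, real_inner_self_eq_norm_sq]; rfl

lemma te_mulVec (A : Matrix (Fin d) (Fin d) ℝ) (v : Fin d → ℝ) :
    te (A *ᵥ v) = Matrix.toEuclideanCLM (𝕜 := ℝ) A (te v) := by
  exact (Matrix.toEuclideanCLM_toLp (𝕜 := ℝ) A v).symm

lemma mulVec_enr_le (A : Matrix (Fin d) (Fin d) ℝ) (v : Fin d → ℝ) :
    enr (A *ᵥ v) ≤ opNorm A * enr v := by
  rw [enr, te_mulVec]; exact (Matrix.toEuclideanCLM (𝕜 := ℝ) A).le_opNorm _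

lemma opNorm_nonneg (A : Matrix (Fin d) (Fin d) ℝ) : 0 ≤ opNorm A := norm_nonneg _

lemma opNorm_le (A : Matrix (Fin d) (Fin d) ℝ) (c : ℝ) (hc : 0 ≤ c)
    (h : ∀ v, enr (A *ᵥ v) ≤ c * enr v) : opNorm A ≤ c := by
  apply ContinuousLinearMap.opNorm_le_bound _ hc
  intro x
  have := h (te.symm x)
  simpa [enr, te_mulVec] using this

lemma opNorm_mul_le (A B : Matrix (Fin d) (Fin d) ℝ) :
    opNorm (A * B) ≤ opNorm A * opNorm B := by
  unfold opNorm
  rw [_root_.map_mul]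
  exact ContinuousLinearMap.opNorm_comp_le _ _

lemma abs_dot_le (x y : Fin d → ℝ) : |x ⬝ᵥ y| ≤ enr x * enr y := by
  rw [dot_eq_inner]; exact abs_real_inner_le_norm _ _

lemma enr_add_le (x y : Fin d → ℝ) : enr (x + y) ≤ enr x + enr y := by
  simpa [enr] using norm_add_le (te x) (te y)

lemma enr_smul (c : ℝ) (v : Fin d → ℝ) : enr (c • v) = |c| * enr v := by
  simp [enr, norm_smul, Real.norm_eq_abs]


noncomputable def sumM (u : Fin d → Fin d → ℝ) (f : Fin d → ℝ) : Matrix (Fin d) (Fin d) ℝ :=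
  ∑ k, f k • proj (u k)

variable {d : ℕ}


lemma dot_sum (v : Fin d → ℝ) (s : Finset (Fin d)) (w : Fin d → Fin d → ℝ) :
    v ⬝ᵥ (∑ k ∈ s, w k) = ∑ k ∈ s, v ⬝ᵥ w k := by
  simp only [dotProduct, Finset.sum_apply, Finset.mul_sum]
  rw [Finset.sum_comm]

lemma sum_dot (v : Fin d → ℝ) (s : Finset (Fin d)) (w : Fin d → Fin d → ℝ) :
    (∑ k ∈ s, w k) ⬝ᵥ v = ∑ k ∈ s, w k ⬝ᵥ v := by
  simp only [dotProduct, Finset.sum_apply, Finset.sum_mul]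
  rw [Finset.sum_comm]

lemma sum_mulVec' (s : Finset (Fin d)) (M : Fin d → Matrix (Fin d) (Fin d) ℝ) (v : Fin d → ℝ) :
    (∑ k ∈ s, M k) *ᵥ v = ∑ k ∈ s, M k *ᵥ v := by
  ext i
  simp only [Matrix.mulVec, Finset.sum_apply, Matrix.sum_apply]
  rw [← sum_dot]
  congr 1
  ext j
  simp [Finset.sum_apply]

lemma proj_mulVec (v w : Fin d → ℝ) : proj v *ᵥ w = (v ⬝ᵥ w) • v := by
  ext i
  simp [proj, vecMulVec, mulVec, dotProduct, Finset.mul_sum, mul_comm, mul_left_comm]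

lemma proj_transpose (v : Fin d → ℝ) : (proj v)ᵀ = proj v := by
  ext i l; simp [proj, vecMulVec, mul_comm]

section ON
variable (u : Fin d → Fin d → ℝ)
variable (hON : ∀ k l, u k ⬝ᵥ u l = if k = l then (1 : ℝ) else 0)
include hON

lemma sumM_mulVec (f : Fin d → ℝ) (v : Fin d → ℝ) :
    sumM u f *ᵥ v = ∑ k, (f k * (u k ⬝ᵥ v)) • u k := by
  rw [sumM, sum_mulVec']
  refine Finset.sum_congr rfl fun k _ => ?_
  rw [Matrix.smul_mulVec, proj_mulVec, smul_smul]

lemma dot_sum_smul (β : Fin d → ℝ) (l : Fin d) :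
    u l ⬝ᵥ (∑ k, β k • u k) = β l := by
  rw [dot_sum]
  rw [Finset.sum_eq_single l]
  · simp [hON]
  · intro k _ hk
    simp [hON, hk.symm]
  · simp

lemma dot_sumM_mulVec (f : Fin d → ℝ) (v : Fin d → ℝ) (l : Fin d) :
    u l ⬝ᵥ (sumM u f *ᵥ v) = f l * (u l ⬝ᵥ v) := by
  rw [sumM_mulVec u hON, dot_sum_smul u hON]

lemma sum_smul_dot_self (β : Fin d → ℝ) :
    (∑ k, β k • u k) ⬝ᵥ (∑ k, β k • u k) = ∑ k, β k ^ 2 := by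
  rw [sum_dot]
  refine Finset.sum_congr rfl fun k _ => ?_
  rw [smul_dotProduct, dot_sum_smul u hON, sq, smul_eq_mul]

lemma sumM_one : sumM u (fun _ => 1) = 1 := by
  set U : Matrix (Fin d) (Fin d) ℝ := Matrix.of (fun k i => u k i) with hU
  have h1 : U * Uᵀ = 1 := by
    ext k l
    simpa [Matrix.mul_apply, Matrix.one_apply, dotProduct, U] using hON k l
  have h2 : Uᵀ * U = 1 := mul_eq_one_comm.mp h1
  ext i l
  have := congrFun (congrFun h2 i) l
  simp only [Matrix.mul_apply, Matrix.transpose_apply] at this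
  rw [sumM]
  simp only [Matrix.sum_apply, Matrix.smul_apply, proj, vecMulVec, Matrix.of_apply,
    smul_eq_mul, one_mul]
  rw [← this]
  exact Finset.sum_congr rfl fun k _ => by simp [U, mul_comm]

lemma parseval (v : Fin d → ℝ) : v ⬝ᵥ v = ∑ k, (u k ⬝ᵥ v) ^ 2 := by
  have hv : v = ∑ k, (u k ⬝ᵥ v) • u k := by
    have := congrArg (fun M => M *ᵥ v) (sumM_one u hON)
    simpa [sumM_mulVec u hON] using this.symm
  calc v ⬝ᵥ v = (∑ k, (u k ⬝ᵥ v) • u k) ⬝ᵥ (∑ k, (u k ⬝ᵥ v) • u k) := by rw [← hv]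
  _ = _ := sum_smul_dot_self u hON _

lemma sumM_mul_sumM (f g : Fin d → ℝ) :
    sumM u f * sumM u g = sumM u (fun k => f k * g k) := by
  have key : ∀ k l, proj (u k) * proj (u l) = if k = l then proj (u k) else 0 := by
    intro k l
    ext i m
    have : u k ⬝ᵥ u l = if k = l then 1 else 0 := hON k l
    simp only [Matrix.mul_apply, proj, vecMulVec, Matrix.of_apply]
    by_cases h : k = l
    · subst h
      have : ∑ x, u k i * u k x * (u k x * u k m) = (u k i * u k m) * (u k ⬝ᵥ u k) := by
        rw [dotProduct, Finset.mul_sum]; exact Finset.sum_congr rfl fun x _ => by ring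
      simp [this, hON k k]
    · have : ∑ x, u k i * u k x * (u l x * u l m) = (u k i * u l m) * (u k ⬝ᵥ u l) := by
        rw [dotProduct, Finset.mul_sum]; exact Finset.sum_congr rfl fun x _ => by ring
      simp [this, hON k l, h]
  rw [sumM, sumM, Finset.sum_mul_sum]
  rw [sumM]
  rw [Finset.sum_comm]
  refine Finset.sum_congr rfl fun k _ => ?_
  rw [Finset.sum_eq_single k]
  · rw [Matrix.smul_mul, Matrix.mul_smul, key k k, if_pos rfl, smul_smul]
  · intro l _ hl
    rw [Matrix.smul_mul, Matrix.mul_smul, key l k, if_neg hl, smul_zero, smul_zero]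
  · simp

lemma sumM_transpose (f : Fin d → ℝ) : (sumM u f)ᵀ = sumM u f := by
  rw [sumM, Matrix.transpose_sum]
  exact Finset.sum_congr rfl fun k _ => by rw [Matrix.transpose_smul, proj_transpose]

lemma enr_sumM_mulVec_sq (f : Fin d → ℝ) (v : Fin d → ℝ) :
    (sumM u f *ᵥ v) ⬝ᵥ (sumM u f *ᵥ v) = ∑ k, (f k * (u k ⬝ᵥ v)) ^ 2 := by
  rw [sumM_mulVec u hON, sum_smul_dot_self u hON]

end ON
lemma enr_eq (v : Fin d → ℝ) : enr v = Real.sqrt (v ⬝ᵥ v) := by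
  rw [← enr_sq v, Real.sqrt_sq (enr_nonneg v)]

lemma dot_self_nonneg (v : Fin d → ℝ) : 0 ≤ v ⬝ᵥ v :=
  Finset.sum_nonneg fun i _ => mul_self_nonneg _

lemma enr_le_of_sq_le_sq (v : Fin d → ℝ) (b : ℝ) (hb : 0 ≤ b)
    (h : v ⬝ᵥ v ≤ b ^ 2) : enr v ≤ b := by
  rw [enr_eq]
  calc Real.sqrt (v ⬝ᵥ v) ≤ Real.sqrt (b ^ 2) := Real.sqrt_le_sqrt h
  _ = b := by rw [Real.sqrt_sq hb]

lemma mul_proj (M : Matrix (Fin d) (Fin d) ℝ) (v : Fin d → ℝ) :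
    M * proj v = Matrix.vecMulVec (M *ᵥ v) v := by
  ext i l
  simp only [Matrix.mul_apply, proj, Matrix.vecMulVec_apply, Matrix.mulVec, dotProduct,
    Finset.sum_mul]
  exact Finset.sum_congr rfl fun k _ => by ring

lemma hsNorm_vecMulVec (a b : Fin d → ℝ) :
    hsNorm (Matrix.vecMulVec a b) = enr a * enr b := by
  rw [hsNorm, enr_eq, enr_eq, ← Real.sqrt_mul (dot_self_nonneg a)]
  congr 1
  rw [Matrix.trace]
  simp only [Matrix.diag_apply, Matrix.mul_apply, Matrix.transpose_apply,
    Matrix.vecMulVec_apply, dotProduct]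
  rw [Finset.sum_mul]
  rw [Finset.sum_comm]
  refine Finset.sum_congr rfl fun i _ => ?_
  rw [Finset.mul_sum]
  exact Finset.sum_congr rfl fun l _ => by ring

lemma hsNorm_smul (c : ℝ) (hc : 0 ≤ c) (M : Matrix (Fin d) (Fin d) ℝ) :
    hsNorm (c • M) = c * hsNorm M := by
  rw [hsNorm, hsNorm, Matrix.transpose_smul, Matrix.smul_mul, Matrix.mul_smul, smul_smul,
    Matrix.trace_smul, smul_eq_mul, Real.sqrt_mul (mul_self_nonneg c)]
  rw [show c * c = c ^ 2 by ring, Real.sqrt_sq hc]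

-- span helpers
section ON
variable (u : Fin d → Fin d → ℝ)
variable (hON : ∀ k l, u k ⬝ᵥ u l = if k = l then (1 : ℝ) else 0)



include hON in
lemma li : LinearIndependent ℝ u := by
  rw [Fintype.linearIndependent_iff]
  intro g hg i
  have := congrArg (fun v => u i ⬝ᵥ v) hg
  simp only [dot_sum_smul u hON] at this
  simpa using this

include hON in
lemma finrank_span (s : Finset (Fin d)) :
    Module.finrank ℝ (Submodule.span ℝ (u '' ↑s)) = s.card := by
  have hli : LinearIndependent ℝ (fun k : {k // k ∈ s} => u k.val) :=
    (li u hON).comp _ Subtype.val_injective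
  have := finrank_span_eq_card hli
  have hrange : (Set.range fun k : {k // k ∈ s} => u k.val) = u '' ↑s := by
    ext x
    constructor
    · rintro ⟨k, rfl⟩; exact ⟨k.val, k.2, rfl⟩
    · rintro ⟨k, hk, rfl⟩; exact ⟨⟨k, hk⟩, rfl⟩
  rw [hrange] at this
  simpa using this

include hON in
lemma dot_zero_of_span (s : Set (Fin d)) (l : Fin d) (hl : l ∉ s) (v : Fin d → ℝ)
    (hv : v ∈ Submodule.span ℝ (u '' s)) : u l ⬝ᵥ v = 0 := by
  induction hv using Submodule.span_induction with
  | mem x hx =>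
    obtain ⟨k, hk, rfl⟩ := hx
    have : l ≠ k := fun h => hl (h ▸ hk)
    simpa [hON l k, this] using (hON l k)
  | zero => simp
  | add x y _ _ hx hy => rw [dotProduct_add, hx, hy, add_zero]
  | smul c x _ hx => rw [dotProduct_smul, hx, smul_zero]

lemma exists_common (V W : Submodule ℝ (Fin d → ℝ))
    (h : d < Module.finrank ℝ V + Module.finrank ℝ W) :
    ∃ v : Fin d → ℝ, v ≠ 0 ∧ v ∈ V ∧ v ∈ W := by
  have h1 : Module.finrank ℝ (Fin d → ℝ) = d := by simp
  have h2 := Submodule.finrank_sup_add_finrank_inf_eq V W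
  have h3 : Module.finrank ℝ ↥(V ⊔ W) ≤ d := by
    have := Submodule.finrank_le (V ⊔ W)
    simpa [h1] using this
  have h4 : 0 < Module.finrank ℝ ↥(V ⊓ W) := by omega
  obtain ⟨⟨v, hv⟩, hne⟩ := Module.finrank_pos_iff_exists_ne_zero.mp h4
  exact ⟨v, by simpa using hne, hv.1, hv.2⟩

include hON in
lemma quad_sumM (f : Fin d → ℝ) (v : Fin d → ℝ) :
    v ⬝ᵥ (sumM u f *ᵥ v) = ∑ k, f k * (u k ⬝ᵥ v) ^ 2 := by
  rw [sumM_mulVec u hON, dot_sum]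
  refine Finset.sum_congr rfl fun k _ => ?_
  rw [dotProduct_smul, smul_eq_mul, dotProduct_comm]
  ring

include hON in
lemma dot_self_pos (v : Fin d → ℝ) (hv : v ≠ 0) : 0 < v ⬝ᵥ v := by
  rcases (dot_self_nonneg v).lt_or_eq with h | h
  · exact h
  · exact absurd (dotProduct_self_eq_zero.mp h.symm) hv

end ON

section EIG
variable (lam : Fin d → ℝ) (u : Fin d → Fin d → ℝ)
  (hON : ∀ k l, u k ⬝ᵥ u l = if k = l then (1 : ℝ) else 0)
  (hlam : Antitone lam)
  (lamh : Fin d → ℝ) (uh : Fin d → Fin d → ℝ)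
  (hONh : ∀ k l, uh k ⬝ᵥ uh l = if k = l then (1 : ℝ) else 0)
  (hlamh : Antitone lamh)
  (E : Matrix (Fin d) (Fin d) ℝ) (j : Fin d) (gj δv : ℝ)
  (hg0 : 0 ≤ gj)
  (hgle : ∀ k, k ≠ j → gj ≤ |lam k - lam j|)
  (hδ0 : 0 ≤ δv) (hδ1 : δv ≤ 1)
  (hquad : ∀ v : Fin d → ℝ,
    |v ⬝ᵥ (E *ᵥ v)| ≤ δv * ∑ k, (if k = j then gj else |lam k - lam j|) * (u k ⬝ᵥ v) ^ 2)
  (hdecomp : (∑ k, lam k • proj (u k)) + E = ∑ k, lamh k • proj (uh k))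

include hON hlam hONh hlamh hg0 hgle hδ0 hδ1 hquad hdecomp in
lemma eig_bound : |lamh j - lam j| ≤ δv * gj := by
  set w : Fin d → ℝ := fun k => if k = j then gj else |lam k - lam j| with hw
  have hw0 : ∀ k, 0 ≤ w k := by
    intro k; by_cases h : k = j <;> simp [hw, h, hg0, abs_nonneg]
  have hdecomp' : ∀ v : Fin d → ℝ,
      v ⬝ᵥ (sumM uh lamh *ᵥ v) = v ⬝ᵥ (sumM u lam *ᵥ v) + v ⬝ᵥ (E *ᵥ v) := by
    intro v
    have := congrArg (fun M => v ⬝ᵥ (M *ᵥ v)) hdecomp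
    simp only [Matrix.add_mulVec, dotProduct_add] at this
    exact this.symm
  rw [abs_le]
  constructor
  -- lower bound : lam j - δv * gj ≤ lamh j
  · rw [neg_le, neg_sub]
    -- find common vector
    obtain ⟨v, hv0, hvV, hvW⟩ := exists_common
      (Submodule.span ℝ (u '' ↑(Finset.Iic j)))
      (Submodule.span ℝ (uh '' ↑(Finset.Ici j))) (by
        rw [finrank_span u hON, finrank_span uh hONh, Fin.card_Iic, Fin.card_Ici]
        have := j.isLt
        omega)
    have hcz : ∀ k, j < k → u k ⬝ᵥ v = 0 := by
      intro k hk
      exact dot_zero_of_span u hON _ k (by simpa using not_le.mpr hk) v hvV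
    have hchz : ∀ k, k < j → uh k ⬝ᵥ v = 0 := by
      intro k hk
      exact dot_zero_of_span uh hONh _ k (by simpa using not_le.mpr hk) v hvW
    have hvv : 0 < v ⬝ᵥ v := dot_self_pos u hON v hv0
    have key : (lam j - δv * gj) * (v ⬝ᵥ v) ≤ lamh j * (v ⬝ᵥ v) := by
      have h1 : ∑ k, lamh k * (uh k ⬝ᵥ v) ^ 2 ≤ lamh j * (v ⬝ᵥ v) := by
        rw [parseval uh hONh v, Finset.mul_sum]
        refine Finset.sum_le_sum fun k _ => ?_
        rcases lt_or_ge k j with h | h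
        · rw [hchz k h]; simp
        · exact mul_le_mul_of_nonneg_right (hlamh h) (sq_nonneg _)
      have h2 : (lam j - δv * gj) * (v ⬝ᵥ v) ≤
          ∑ k, lam k * (u k ⬝ᵥ v) ^ 2 + v ⬝ᵥ (E *ᵥ v) := by
        have hE : -(δv * ∑ k, w k * (u k ⬝ᵥ v) ^ 2) ≤ v ⬝ᵥ (E *ᵥ v) :=
          neg_le_of_abs_le (hquad v)
        have h3 : (lam j - δv * gj) * (v ⬝ᵥ v) ≤
            ∑ k, lam k * (u k ⬝ᵥ v) ^ 2 - δv * ∑ k, w k * (u k ⬝ᵥ v) ^ 2 := by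
          rw [parseval u hON v, Finset.mul_sum, Finset.mul_sum, ← Finset.sum_sub_distrib]
          refine Finset.sum_le_sum fun k _ => ?_
          rcases eq_or_ne k j with h | h
          · subst h; simp [hw]; ring_nf; exact le_refl _
          · rcases lt_or_ge j k with hlt | hle
            · rw [hcz k hlt]; simp
            · have hkj : k < j := lt_of_le_of_ne hle h
              have hkge : lam j ≤ lam k := hlam hkj.le
              have hwk : w k = lam k - lam j := by
                rw [hw]; simp [h, abs_of_nonneg (sub_nonneg.mpr hkge)]
              have : lam j - δv * gj ≤ lam k - δv * w k := by
                rw [hwk]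
                have h1 : δv * gj ≤ δv * (lam k - lam j) + (1 - δv) * 0 := by
                  have := hgle k h
                  rw [abs_of_nonneg (sub_nonneg.mpr hkge)] at this
                  nlinarith
                nlinarith [sub_nonneg.mpr hkge]
              nlinarith [mul_le_mul_of_nonneg_right this (sq_nonneg (u k ⬝ᵥ v))]
        linarith
      have hq := hdecomp' v
      rw [quad_sumM uh hONh, quad_sumM u hON] at hq
      calc (lam j - δv * gj) * (v ⬝ᵥ v) ≤ _ := h2
      _ = ∑ k, lamh k * (uh k ⬝ᵥ v) ^ 2 := hq.symm
      _ ≤ lamh j * (v ⬝ᵥ v) := h1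
    exact le_of_mul_le_mul_right (by linarith [key]) hvv
  -- upper bound : lamh j ≤ lam j + δv * gj
  · obtain ⟨v, hv0, hvV, hvW⟩ := exists_common
      (Submodule.span ℝ (uh '' ↑(Finset.Iic j)))
      (Submodule.span ℝ (u '' ↑(Finset.Ici j))) (by
        rw [finrank_span uh hONh, finrank_span u hON, Fin.card_Iic, Fin.card_Ici]
        have := j.isLt
        omega)
    have hcz : ∀ k, k < j → u k ⬝ᵥ v = 0 := by
      intro k hk
      exact dot_zero_of_span u hON _ k (by simpa using not_le.mpr hk) v hvW
    have hchz : ∀ k, j < k → uh k ⬝ᵥ v = 0 := by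
      intro k hk
      exact dot_zero_of_span uh hONh _ k (by simpa using not_le.mpr hk) v hvV
    have hvv : 0 < v ⬝ᵥ v := dot_self_pos u hON v hv0
    have key : lamh j * (v ⬝ᵥ v) ≤ (lam j + δv * gj) * (v ⬝ᵥ v) := by
      have h1 : lamh j * (v ⬝ᵥ v) ≤ ∑ k, lamh k * (uh k ⬝ᵥ v) ^ 2 := by
        rw [parseval uh hONh v, Finset.mul_sum]
        refine Finset.sum_le_sum fun k _ => ?_
        rcases lt_or_ge j k with h | h
        · rw [hchz k h]; simp
        · exact mul_le_mul_of_nonneg_right (hlamh h) (sq_nonneg _)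
      have h2 : ∑ k, lam k * (u k ⬝ᵥ v) ^ 2 + v ⬝ᵥ (E *ᵥ v) ≤
          (lam j + δv * gj) * (v ⬝ᵥ v) := by
        have hE : v ⬝ᵥ (E *ᵥ v) ≤ δv * ∑ k, w k * (u k ⬝ᵥ v) ^ 2 :=
          le_of_abs_le (hquad v)
        have h3 : ∑ k, lam k * (u k ⬝ᵥ v) ^ 2 + δv * ∑ k, w k * (u k ⬝ᵥ v) ^ 2 ≤
            (lam j + δv * gj) * (v ⬝ᵥ v) := by
          rw [parseval u hON v, Finset.mul_sum, Finset.mul_sum, ← Finset.sum_add_distrib]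
          refine Finset.sum_le_sum fun k _ => ?_
          rcases eq_or_ne k j with h | h
          · subst h; simp [hw]; ring_nf; exact le_refl _
          · rcases lt_or_ge k j with hlt | hle
            · rw [hcz k hlt]; simp
            · have hkj : j < k := lt_of_le_of_ne hle (Ne.symm h)
              have hkge : lam k ≤ lam j := hlam hkj.le
              have hwk : w k = lam j - lam k := by
                rw [hw]; simp [h, abs_of_nonpos (sub_nonpos.mpr hkge)]
              have : lam k + δv * w k ≤ lam j + δv * gj := by
                rw [hwk]
                nlinarith [hg0, sub_nonneg.mpr hkge]
              nlinarith [mul_le_mul_of_nonneg_right this (sq_nonneg (u k ⬝ᵥ v))]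
        linarith
      have hq := hdecomp' v
      rw [quad_sumM uh hONh, quad_sumM u hON] at hq
      calc lamh j * (v ⬝ᵥ v) ≤ _ := h1
      _ = ∑ k, lam k * (u k ⬝ᵥ v) ^ 2 + v ⬝ᵥ (E *ᵥ v) := hq
      _ ≤ _ := h2
    linarith [le_of_mul_le_mul_right key hvv]

end EIG

lemma opNorm_pow_le (A : Matrix (Fin d) (Fin d) ℝ) (n : ℕ) :
    opNorm (A ^ n) ≤ opNorm A ^ n := by
  induction n with
  | zero =>
    rw [pow_zero, pow_zero]
    apply opNorm_le _ _ zero_le_one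
    intro v
    rw [Matrix.one_mulVec, one_mul]
  | succ n ih =>
    rw [pow_succ, pow_succ]
    calc opNorm (A ^ n * A) ≤ opNorm (A ^ n) * opNorm A := opNorm_mul_le _ _
    _ ≤ opNorm A ^ n * opNorm A :=
      mul_le_mul_of_nonneg_right ih (opNorm_nonneg A)

lemma abs_quad_le (A : Matrix (Fin d) (Fin d) ℝ) (x : Fin d → ℝ) :
    |x ⬝ᵥ (A *ᵥ x)| ≤ opNorm A * (x ⬝ᵥ x) := by
  calc |x ⬝ᵥ (A *ᵥ x)| ≤ enr x * enr (A *ᵥ x) := abs_dot_le _ _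
  _ ≤ enr x * (opNorm A * enr x) :=
    mul_le_mul_of_nonneg_left (mulVec_enr_le A x) (enr_nonneg x)
  _ = opNorm A * (enr x * enr x) := by ring
  _ = opNorm A * (x ⬝ᵥ x) := by rw [← sq, enr_sq]

lemma dot_mulVec_symm (M : Matrix (Fin d) (Fin d) ℝ) (hM : Mᵀ = M) (x y : Fin d → ℝ) :
    (M *ᵥ x) ⬝ᵥ y = x ⬝ᵥ (M *ᵥ y) := by
  rw [Matrix.dotProduct_mulVec, ← Matrix.vecMul_transpose, hM]

section ON2
variable (u : Fin d → Fin d → ℝ)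
variable (hON : ∀ k l, u k ⬝ᵥ u l = if k = l then (1 : ℝ) else 0)

include hON in
lemma opNorm_sumM_le (f : Fin d → ℝ) (c : ℝ) (hc : 0 ≤ c) (hf : ∀ k, |f k| ≤ c) :
    opNorm (sumM u f) ≤ c := by
  apply opNorm_le _ _ hc
  intro v
  have hb : 0 ≤ c * enr v := mul_nonneg hc (enr_nonneg v)
  apply enr_le_of_sq_le_sq _ _ hb
  rw [enr_sumM_mulVec_sq u hON]
  have : (c * enr v) ^ 2 = c ^ 2 * (v ⬝ᵥ v) := by
    rw [mul_pow, enr_sq]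
  rw [this, parseval u hON v, Finset.mul_sum]
  refine Finset.sum_le_sum fun k _ => ?_
  rw [mul_pow]
  apply mul_le_mul_of_nonneg_right _ (sq_nonneg _)
  calc f k ^ 2 = |f k| ^ 2 := (sq_abs _).symm
  _ ≤ c ^ 2 := pow_le_pow_left₀ (abs_nonneg _) (hf k) 2

lemma sumM_congr (f g : Fin d → ℝ) (h : ∀ k, f k = g k) : sumM u f = sumM u g := by
  rw [funext h]

lemma sumM_add (f g : Fin d → ℝ) : sumM u f + sumM u g = sumM u (fun k => f k + g k) := by
  rw [sumM, sumM, sumM, ← Finset.sum_add_distrib]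
  exact Finset.sum_congr rfl fun k _ => (add_smul _ _ _).symm

lemma sumM_smul (c : ℝ) (f : Fin d → ℝ) : c • sumM u f = sumM u (fun k => c * f k) := by
  rw [sumM, sumM, Finset.smul_sum]
  exact Finset.sum_congr rfl fun k _ => (smul_smul _ _ _)

include hON in
lemma enr_u_one (k : Fin d) : enr (u k) = 1 := by
  rw [enr_eq]
  simp [hON k k]

end ON2


end Hlp

set_option maxHeartbeats 2000000 in
theorem stmt18 {d : ℕ} (lam : Fin d → ℝ) (u : Fin d → Fin d → ℝ)
    (hON : ∀ k l, u k ⬝ᵥ u l = if k = l then (1 : ℝ) else 0)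
    (hlam : Antitone lam)
    (E : Matrix (Fin d) (Fin d) ℝ) (hE : E.IsSymm)
    (j : Fin d) (gj : ℝ) (hgj_pos : 0 < gj)
    (hgj : IsLeast {x : ℝ | ∃ k, k ≠ j ∧ x = |lam k - lam j|} gj)
    (lamh : Fin d → ℝ) (uh : Fin d → Fin d → ℝ)
    (hONh : ∀ k l, uh k ⬝ᵥ uh l = if k = l then (1 : ℝ) else 0)
    (hlamh : Antitone lamh)
    (hdecomp : (∑ k, lam k • proj (u k)) + E = ∑ k, lamh k • proj (uh k))
    (hdelta : delta lam u j gj E < 1 / 2) :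
    delta' lam u j gj E ≤ delta lam u j gj E ∧
      ∀ p : ℕ, 1 ≤ p →
        hsNorm ((res lam u j * E) ^ (p - 1) * ((1 - proj (u j)) * proj (uh j))) ≤
          delta' lam u j gj E ^ p / (1 - 2 * delta lam u j gj E) := by
  classical
  have hgle : ∀ k, k ≠ j → gj ≤ |lam k - lam j| := fun k hk => hgj.2 ⟨k, hk, rfl⟩
  set sg := Real.sqrt gj with hsgdef
  have hsg : 0 < sg := Real.sqrt_pos.mpr hgj_pos
  have habs : ∀ k, k ≠ j → 0 < |lam k - lam j| :=
    fun k hk => lt_of_lt_of_le hgj_pos (hgle k hk)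
  have hsabs : ∀ k, k ≠ j → 0 < Real.sqrt |lam k - lam j| :=
    fun k hk => Real.sqrt_pos.mpr (habs k hk)
  set fS : Fin d → ℝ := fun k => if k = j then 0 else (Real.sqrt |lam k - lam j|)⁻¹ with hfS
  set fT : Fin d → ℝ := fun k => if k = j then 0 else Real.sqrt |lam k - lam j| with hfT
  set fP : Fin d → ℝ := fun k => if k = j then 1 else 0 with hfP
  set fQ : Fin d → ℝ := fun k => if k = j then 0 else 1 with hfQ
  set fW : Fin d → ℝ := fun k => if k = j then 0 else (lam k - lam j) * |lam k - lam j|⁻¹ with hfW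
  set fF : Fin d → ℝ := fun k => if k = j then sg⁻¹ else (Real.sqrt |lam k - lam j|)⁻¹ with hfF
  set fG : Fin d → ℝ := fun k => if k = j then sg else Real.sqrt |lam k - lam j| with hfG
  have hfil : ∀ a : Fin d → ℝ,
      (∑ k ∈ Finset.univ.filter (fun k => k ≠ j), a k • proj (u k))
        = Hlp.sumM u (fun k => if k = j then 0 else a k) := by
    intro a
    rw [Finset.sum_filter, Hlp.sumM]
    refine Finset.sum_congr rfl fun k _ => ?_
    by_cases h : k = j <;> simp [h]
  have hS : sqrtAbsRes lam u j = Hlp.sumM u fS := by rw [sqrtAbsRes, hfil]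
  have hP : Hlp.sumM u fP = proj (u j) := by
    rw [Hlp.sumM, Finset.sum_eq_single j]
    · simp [hfP]
    · intro k _ hk; simp [hfP, hk]
    · simp
  have hF : sqrtAbsRes lam u j + (Real.sqrt gj)⁻¹ • proj (u j) = Hlp.sumM u fF := by
    rw [hS, ← hP, ← hsgdef, Hlp.sumM_smul, Hlp.sumM_add]
    refine Hlp.sumM_congr u _ _ fun k => ?_
    by_cases h : k = j <;> simp [hfS, hfP, hfF, h]
  have hR : res lam u j = Hlp.sumM u (fun k => if k = j then 0 else (lam k - lam j)⁻¹) := by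
    rw [res, hfil]
  -- products
  have hFG : Hlp.sumM u fF * Hlp.sumM u fG = 1 := by
    rw [Hlp.sumM_mul_sumM u hON, ← Hlp.sumM_one u hON]
    refine Hlp.sumM_congr u _ _ fun k => ?_
    by_cases h : k = j
    · simp [hfF, hfG, h, inv_mul_cancel₀ hsg.ne']
    · simp [hfF, hfG, h, inv_mul_cancel₀ (hsabs k h).ne']
  have hQF : Hlp.sumM u fQ * Hlp.sumM u fF = Hlp.sumM u fS := by
    rw [Hlp.sumM_mul_sumM u hON]
    refine Hlp.sumM_congr u _ _ fun k => ?_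
    by_cases h : k = j <;> simp [hfQ, hfF, hfS, h]
  have hFQ : Hlp.sumM u fF * Hlp.sumM u fQ = Hlp.sumM u fS := by
    rw [Hlp.sumM_mul_sumM u hON]
    refine Hlp.sumM_congr u _ _ fun k => ?_
    by_cases h : k = j <;> simp [hfQ, hfF, hfS, h]
  have hST : Hlp.sumM u fS * Hlp.sumM u fT = Hlp.sumM u fQ := by
    rw [Hlp.sumM_mul_sumM u hON]
    refine Hlp.sumM_congr u _ _ fun k => ?_
    by_cases h : k = j
    · simp [hfS, hfT, hfQ, h]
    · simp [hfS, hfT, hfQ, h, inv_mul_cancel₀ (hsabs k h).ne']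
  have hFP : Hlp.sumM u fF * Hlp.sumM u fP = Hlp.sumM u (fun k => sg⁻¹ * fP k) := by
    rw [Hlp.sumM_mul_sumM u hON]
    refine Hlp.sumM_congr u _ _ fun k => ?_
    by_cases h : k = j <;> simp [hfP, hfF, h]
  have hPF : Hlp.sumM u fP * Hlp.sumM u fF = Hlp.sumM u (fun k => sg⁻¹ * fP k) := by
    rw [Hlp.sumM_mul_sumM u hON]
    refine Hlp.sumM_congr u _ _ fun k => ?_
    by_cases h : k = j <;> simp [hfP, hfF, h, mul_comm]
  have hQ1 : (1 : Matrix (Fin d) (Fin d) ℝ) - proj (u j) = Hlp.sumM u fQ := by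
    have h1 : Hlp.sumM u fQ + proj (u j) = 1 := by
      rw [← hP, Hlp.sumM_add, ← Hlp.sumM_one u hON]
      refine Hlp.sumM_congr u _ _ fun k => ?_
      by_cases h : k = j <;> simp [hfQ, hfP, h]
    rw [← h1, add_sub_cancel_right]
  -- opNorm bounds
  have hnS : opNorm (Hlp.sumM u fS) ≤ sg⁻¹ := by
    apply Hlp.opNorm_sumM_le u hON _ _ (inv_nonneg.mpr hsg.le)
    intro k
    by_cases h : k = j
    · simp [hfS, h, inv_nonneg.mpr hsg.le]
    · rw [hfS]
      simp only [h, if_false, abs_inv, abs_of_nonneg (Real.sqrt_nonneg _)]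
      exact inv_anti₀ hsg (Real.sqrt_le_sqrt (hgle k h))
  have hnQ : opNorm (Hlp.sumM u fQ) ≤ 1 := by
    apply Hlp.opNorm_sumM_le u hON _ _ zero_le_one
    intro k; by_cases h : k = j <;> simp [hfQ, h]
  have hnW : opNorm (Hlp.sumM u fW) ≤ 1 := by
    apply Hlp.opNorm_sumM_le u hON _ _ zero_le_one
    intro k
    by_cases h : k = j
    · simp [hfW, h]
    · rw [hfW]
      simp only [h, if_false, abs_mul, abs_inv, abs_abs]
      rw [mul_inv_cancel₀ (habs k h).ne']
  set dl := delta lam u j gj E with hdldef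
  set dl' := delta' lam u j gj E with hdl'def
  have hdlF : dl = opNorm (Hlp.sumM u fF * E * Hlp.sumM u fF) := by
    rw [hdldef, delta, hF]
  have hdl0 : 0 ≤ dl := hdlF ▸ Hlp.opNorm_nonneg _
  have h12 : 0 < 1 - 2 * dl := by rw [hdldef]; linarith
  -- (i) opNorm (S E S) ≤ dl
  have hSES : opNorm (Hlp.sumM u fS * E * Hlp.sumM u fS) ≤ dl := by
    have e1 : Hlp.sumM u fS * E * Hlp.sumM u fS =
        Hlp.sumM u fQ * (Hlp.sumM u fF * E * Hlp.sumM u fF) * Hlp.sumM u fQ := by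
      rw [show Hlp.sumM u fQ * (Hlp.sumM u fF * E * Hlp.sumM u fF) * Hlp.sumM u fQ
          = (Hlp.sumM u fQ * Hlp.sumM u fF) * E * (Hlp.sumM u fF * Hlp.sumM u fQ) by
        simp only [Matrix.mul_assoc], hQF, hFQ]
    rw [e1, hdlF]
    have b1 := Hlp.opNorm_mul_le (Hlp.sumM u fQ * (Hlp.sumM u fF * E * Hlp.sumM u fF))
      (Hlp.sumM u fQ)
    have b2 := Hlp.opNorm_mul_le (Hlp.sumM u fQ) (Hlp.sumM u fF * E * Hlp.sumM u fF)
    have n1 := Hlp.opNorm_nonneg (Hlp.sumM u fQ * (Hlp.sumM u fF * E * Hlp.sumM u fF))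
    have n2 := Hlp.opNorm_nonneg (Hlp.sumM u fF * E * Hlp.sumM u fF)
    have n3 := Hlp.opNorm_nonneg (Hlp.sumM u fQ)
    nlinarith
  -- (ii)
  have hQAP : Hlp.sumM u fQ * (Hlp.sumM u fF * E * Hlp.sumM u fF) * proj (u j)
      = sg⁻¹ • (Hlp.sumM u fS * E * proj (u j)) := by
    rw [← hP]
    rw [show Hlp.sumM u fQ * (Hlp.sumM u fF * E * Hlp.sumM u fF) * Hlp.sumM u fP
        = (Hlp.sumM u fQ * Hlp.sumM u fF) * E * (Hlp.sumM u fF * Hlp.sumM u fP) by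
      simp only [Matrix.mul_assoc], hQF, hFP, ← Hlp.sumM_smul, hP]
    rw [Matrix.mul_smul]
  have hsNormQAP : ∀ M : Matrix (Fin d) (Fin d) ℝ, hsNorm (M * proj (u j)) ≤ opNorm M := by
    intro M
    rw [Hlp.mul_proj, Hlp.hsNorm_vecMulVec, Hlp.enr_u_one u hON j, mul_one]
    calc Hlp.enr (M *ᵥ u j) ≤ opNorm M * Hlp.enr (u j) := Hlp.mulVec_enr_le M (u j)
    _ = opNorm M := by rw [Hlp.enr_u_one u hON j, mul_one]
  have h2nd : (Real.sqrt gj)⁻¹ * hsNorm (Hlp.sumM u fS * E * proj (u j)) ≤ dl := by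
    have e2 : hsNorm (sg⁻¹ • (Hlp.sumM u fS * E * proj (u j)))
        = sg⁻¹ * hsNorm (Hlp.sumM u fS * E * proj (u j)) :=
      Hlp.hsNorm_smul _ (inv_nonneg.mpr hsg.le) _
    rw [← hsgdef, ← e2, ← hQAP]
    calc hsNorm (Hlp.sumM u fQ * (Hlp.sumM u fF * E * Hlp.sumM u fF) * proj (u j))
        ≤ opNorm (Hlp.sumM u fQ * (Hlp.sumM u fF * E * Hlp.sumM u fF)) := hsNormQAP _
    _ ≤ opNorm (Hlp.sumM u fQ) * opNorm (Hlp.sumM u fF * E * Hlp.sumM u fF) :=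
        Hlp.opNorm_mul_le _ _
    _ ≤ dl := by
        rw [hdlF]
        have := Hlp.opNorm_nonneg (Hlp.sumM u fF * E * Hlp.sumM u fF)
        nlinarith
  -- (iii)
  have hPAP : Hlp.sumM u fP * (Hlp.sumM u fF * E * Hlp.sumM u fF) * proj (u j)
      = gj⁻¹ • (proj (u j) * E * proj (u j)) := by
    rw [← hP]
    rw [show Hlp.sumM u fP * (Hlp.sumM u fF * E * Hlp.sumM u fF) * Hlp.sumM u fP
        = (Hlp.sumM u fP * Hlp.sumM u fF) * E * (Hlp.sumM u fF * Hlp.sumM u fP) by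
      simp only [Matrix.mul_assoc], hPF, hFP, ← Hlp.sumM_smul, hP]
    rw [Matrix.smul_mul, Matrix.mul_smul, Matrix.smul_mul, smul_smul]
    congr 1
    rw [hsgdef, ← mul_inv, Real.mul_self_sqrt hgj_pos.le]
  have h3rd : gj⁻¹ * hsNorm (proj (u j) * E * proj (u j)) ≤ dl := by
    have e2 : hsNorm (gj⁻¹ • (proj (u j) * E * proj (u j)))
        = gj⁻¹ * hsNorm (proj (u j) * E * proj (u j)) :=
      Hlp.hsNorm_smul _ (inv_nonneg.mpr hgj_pos.le) _
    rw [← e2, ← hPAP]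
    have hnP : opNorm (Hlp.sumM u fP) ≤ 1 := by
      apply Hlp.opNorm_sumM_le u hON _ _ zero_le_one
      intro k; by_cases h : k = j <;> simp [hfP, h]
    calc hsNorm (Hlp.sumM u fP * (Hlp.sumM u fF * E * Hlp.sumM u fF) * proj (u j))
        ≤ opNorm (Hlp.sumM u fP * (Hlp.sumM u fF * E * Hlp.sumM u fF)) := hsNormQAP _
    _ ≤ opNorm (Hlp.sumM u fP) * opNorm (Hlp.sumM u fF * E * Hlp.sumM u fF) :=
        Hlp.opNorm_mul_le _ _
    _ ≤ dl := by
        rw [hdlF]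
        have := Hlp.opNorm_nonneg (Hlp.sumM u fF * E * Hlp.sumM u fF)
        nlinarith
  have part1 : dl' ≤ dl := by
    rw [hdl'def, delta', hS]
    exact max_le hSES (max_le h2nd h3rd)
  refine ⟨part1, ?_⟩
  -- ===== Part 2 =====
  have hSESd' : opNorm (Hlp.sumM u fS * E * Hlp.sumM u fS) ≤ dl' := by
    rw [hdl'def, delta', hS]; exact le_max_left _ _
  have hdl'0 : 0 ≤ dl' := le_trans (Hlp.opNorm_nonneg _) hSESd'
  have hdl1 : dl ≤ 1 := by rw [hdldef]; linarith
  have hFsymm : (Hlp.sumM u fF)ᵀ = Hlp.sumM u fF := Hlp.sumM_transpose u hON fF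
  have hquad : ∀ v : Fin d → ℝ, |v ⬝ᵥ (E *ᵥ v)| ≤
      dl * ∑ k, (if k = j then gj else |lam k - lam j|) * (u k ⬝ᵥ v) ^ 2 := by
    intro v
    have hv : Hlp.sumM u fF *ᵥ (Hlp.sumM u fG *ᵥ v) = v := by
      rw [Matrix.mulVec_mulVec, hFG, Matrix.one_mulVec]
    have e1 : v ⬝ᵥ (E *ᵥ v) = (Hlp.sumM u fG *ᵥ v) ⬝ᵥ
        ((Hlp.sumM u fF * E * Hlp.sumM u fF) *ᵥ (Hlp.sumM u fG *ᵥ v)) := by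
      conv_lhs => rw [← hv]
      rw [Hlp.dot_mulVec_symm _ hFsymm]
      simp only [Matrix.mulVec_mulVec, Matrix.mul_assoc]
    rw [e1]
    calc |(Hlp.sumM u fG *ᵥ v) ⬝ᵥ ((Hlp.sumM u fF * E * Hlp.sumM u fF) *ᵥ (Hlp.sumM u fG *ᵥ v))|
        ≤ opNorm (Hlp.sumM u fF * E * Hlp.sumM u fF) *
          ((Hlp.sumM u fG *ᵥ v) ⬝ᵥ (Hlp.sumM u fG *ᵥ v)) := Hlp.abs_quad_le _ _
    _ = dl * ∑ k, (if k = j then gj else |lam k - lam j|) * (u k ⬝ᵥ v) ^ 2 := by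
        rw [← hdlF, Hlp.enr_sumM_mulVec_sq u hON]
        congr 1
        refine Finset.sum_congr rfl fun k _ => ?_
        rw [mul_pow]
        by_cases h : k = j
        · simp [hfG, h, hsgdef, Real.sq_sqrt hgj_pos.le]
        · simp [hfG, h, Real.sq_sqrt (abs_nonneg (lam k - lam j))]
  have hev : |lamh j - lam j| ≤ dl * gj :=
    Hlp.eig_bound lam u hON hlam lamh uh hONh hlamh E j gj dl hgj_pos.le hgle hdl0 hdl1
      hquad hdecomp
  have heig : ∀ k, (lamh j - lam k) * (u k ⬝ᵥ uh j) = u k ⬝ᵥ (E *ᵥ uh j) := by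
    have h2 : (∑ k, lamh k • proj (uh k)) *ᵥ uh j = lamh j • uh j := by
      rw [show (∑ k, lamh k • proj (uh k)) = Hlp.sumM uh lamh from rfl,
        Hlp.sumM_mulVec uh hONh]
      rw [Finset.sum_eq_single j]
      · rw [hONh j j]; simp
      · intro k _ hk; rw [hONh k j]; simp [hk]
      · simp
    have h1 : (∑ k, lam k • proj (u k)) *ᵥ uh j + E *ᵥ uh j = lamh j • uh j := by
      rw [← h2, ← hdecomp, Matrix.add_mulVec]
    intro k
    have h3 := congrArg (fun w => u k ⬝ᵥ w) h1
    simp only [dotProduct_add] at h3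
    rw [show (∑ k, lam k • proj (u k)) = Hlp.sumM u lam from rfl,
      Hlp.dot_sumM_mulVec u hON, dotProduct_smul, smul_eq_mul] at h3
    linear_combination -h3
  set t := Hlp.enr (Hlp.sumM u fT *ᵥ uh j) with htdef
  set r0 := Hlp.enr ((Hlp.sumM u fS * E) *ᵥ u j) with hr0def
  have ht0 : 0 ≤ t := Hlp.enr_nonneg _
  have hr00 : 0 ≤ r0 := Hlp.enr_nonneg _
  have hcoord : ∀ k, ((1 - dl) * (fT k * (u k ⬝ᵥ uh j))) ^ 2
      ≤ (fS k * (u k ⬝ᵥ (E *ᵥ uh j))) ^ 2 := by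
    intro k
    by_cases h : k = j
    · simp [hfT, hfS, h]
    · have hL : 0 < |lam k - lam j| := habs k h
      have hgap : (1 - dl) * |lam k - lam j| ≤ |lamh j - lam k| := by
        have htri : |lam k - lam j| ≤ |lamh j - lam k| + |lamh j - lam j| := by
          have e9 : lam k - lam j = (lam k - lamh j) + (lamh j - lam j) := by ring
          calc |lam k - lam j| = |(lam k - lamh j) + (lamh j - lam j)| := by rw [e9]
          _ ≤ |lam k - lamh j| + |lamh j - lam j| := abs_add_le _ _
          _ = |lamh j - lam k| + |lamh j - lam j| := by rw [abs_sub_comm]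
        have h6 : dl * gj ≤ dl * |lam k - lam j| :=
          mul_le_mul_of_nonneg_left (hgle k h) hdl0
        linarith [hev, htri, h6]
      have h7 : |lamh j - lam k| * |u k ⬝ᵥ uh j| = |u k ⬝ᵥ (E *ᵥ uh j)| := by
        rw [← abs_mul, heig k]
      have h8 : (1 - dl) * |lam k - lam j| * |u k ⬝ᵥ uh j| ≤ |u k ⬝ᵥ (E *ᵥ uh j)| := by
        rw [← h7]
        exact mul_le_mul_of_nonneg_right hgap (abs_nonneg _)
      have h9 : ((1 - dl) * |lam k - lam j| * |u k ⬝ᵥ uh j|) ^ 2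
          ≤ (u k ⬝ᵥ (E *ᵥ uh j)) ^ 2 := by
        rw [← sq_abs (u k ⬝ᵥ (E *ᵥ uh j))]
        apply pow_le_pow_left₀ (mul_nonneg (mul_nonneg (by linarith) (abs_nonneg _))
          (abs_nonneg _)) h8
      have h10 : (1 - dl) ^ 2 * (|lam k - lam j| ^ 2 * (u k ⬝ᵥ uh j) ^ 2)
          ≤ (u k ⬝ᵥ (E *ᵥ uh j)) ^ 2 := by
        have h11 := h9
        rw [mul_pow, mul_pow, sq_abs (u k ⬝ᵥ uh j)] at h11
        linarith
      have hsq : Real.sqrt |lam k - lam j| ^ 2 = |lam k - lam j| :=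
        Real.sq_sqrt (abs_nonneg _)
      have expand : ((1 - dl) * (fT k * (u k ⬝ᵥ uh j))) ^ 2
          = (1 - dl) ^ 2 * |lam k - lam j| * (u k ⬝ᵥ uh j) ^ 2 := by
        rw [hfT]; simp only [h, if_false]
        rw [mul_pow, mul_pow, hsq]; ring
      have expand2 : (fS k * (u k ⬝ᵥ (E *ᵥ uh j))) ^ 2
          = |lam k - lam j|⁻¹ * (u k ⬝ᵥ (E *ᵥ uh j)) ^ 2 := by
        rw [hfS]; simp only [h, if_false]
        rw [mul_pow, inv_pow, hsq]
      rw [expand, expand2, mul_comm (|lam k - lam j|⁻¹) _, ← div_eq_mul_inv,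
        le_div_iff₀ hL]
      nlinarith [h10]
  have hr : (1 - dl) * t ≤ Hlp.enr (Hlp.sumM u fS *ᵥ (E *ᵥ uh j)) := by
    have h1 : 0 ≤ (1 - dl) * t := mul_nonneg (by linarith) ht0
    have hsumsq : ((1 - dl) * t) ^ 2 ≤ Hlp.enr (Hlp.sumM u fS *ᵥ (E *ᵥ uh j)) ^ 2 := by
      rw [mul_pow, htdef, Hlp.enr_sq, Hlp.enr_sq]
      rw [Hlp.enr_sumM_mulVec_sq u hON, Hlp.enr_sumM_mulVec_sq u hON, Finset.mul_sum]
      refine Finset.sum_le_sum fun k _ => ?_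
      have := hcoord k
      rw [mul_pow] at this
      linarith
    calc (1 - dl) * t = Real.sqrt (((1 - dl) * t) ^ 2) := (Real.sqrt_sq h1).symm
    _ ≤ Real.sqrt (Hlp.enr (Hlp.sumM u fS *ᵥ (E *ᵥ uh j)) ^ 2) := Real.sqrt_le_sqrt hsumsq
    _ = Hlp.enr (Hlp.sumM u fS *ᵥ (E *ᵥ uh j)) := Real.sqrt_sq (Hlp.enr_nonneg _)
  have hPQ1 : proj (u j) + Hlp.sumM u fQ = 1 := by
    rw [← hQ1]; abel
  have hid : uh j = (u j ⬝ᵥ uh j) • u j + Hlp.sumM u fS *ᵥ (Hlp.sumM u fT *ᵥ uh j) := by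
    conv_lhs => rw [← Matrix.one_mulVec (uh j), ← hPQ1, Matrix.add_mulVec,
      Hlp.proj_mulVec]
    rw [Matrix.mulVec_mulVec, hST]
  have hsplit : Hlp.sumM u fS *ᵥ (E *ᵥ uh j) =
      (u j ⬝ᵥ uh j) • ((Hlp.sumM u fS * E) *ᵥ u j)
        + (Hlp.sumM u fS * E * Hlp.sumM u fS) *ᵥ (Hlp.sumM u fT *ᵥ uh j) := by
    conv_lhs => rw [hid]
    simp only [Matrix.mulVec_add, Matrix.mulVec_smul, Matrix.mulVec_mulVec,
      Matrix.mul_assoc]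
  have hrbound : Hlp.enr (Hlp.sumM u fS *ᵥ (E *ᵥ uh j)) ≤ r0 + dl' * t := by
    rw [hsplit]
    have hcj : |u j ⬝ᵥ uh j| ≤ 1 := by
      have := Hlp.abs_dot_le (u j) (uh j)
      rwa [Hlp.enr_u_one u hON j, Hlp.enr_u_one uh hONh j, one_mul] at this
    have b1 : Hlp.enr ((Hlp.sumM u fS * E * Hlp.sumM u fS) *ᵥ (Hlp.sumM u fT *ᵥ uh j))
        ≤ dl' * t := by
      calc Hlp.enr ((Hlp.sumM u fS * E * Hlp.sumM u fS) *ᵥ (Hlp.sumM u fT *ᵥ uh j))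
          ≤ opNorm (Hlp.sumM u fS * E * Hlp.sumM u fS) * t := Hlp.mulVec_enr_le _ _
      _ ≤ dl' * t := mul_le_mul_of_nonneg_right hSESd' ht0
    have b2 : Hlp.enr ((u j ⬝ᵥ uh j) • ((Hlp.sumM u fS * E) *ᵥ u j)) ≤ r0 := by
      rw [Hlp.enr_smul]
      calc |u j ⬝ᵥ uh j| * r0 ≤ 1 * r0 := mul_le_mul_of_nonneg_right hcj hr00
      _ = r0 := one_mul _
    calc Hlp.enr ((u j ⬝ᵥ uh j) • ((Hlp.sumM u fS * E) *ᵥ u j)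
          + (Hlp.sumM u fS * E * Hlp.sumM u fS) *ᵥ (Hlp.sumM u fT *ᵥ uh j))
        ≤ Hlp.enr ((u j ⬝ᵥ uh j) • ((Hlp.sumM u fS * E) *ᵥ u j))
          + Hlp.enr ((Hlp.sumM u fS * E * Hlp.sumM u fS) *ᵥ (Hlp.sumM u fT *ᵥ uh j)) :=
        Hlp.enr_add_le _ _
    _ ≤ r0 + dl' * t := add_le_add b2 b1
  have hcontr : (1 - 2 * dl) * t ≤ r0 := by
    nlinarith [hr, hrbound, mul_le_mul_of_nonneg_right part1 ht0]
  have hr0d' : sg⁻¹ * r0 ≤ dl' := by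
    have e3 : r0 = hsNorm (Hlp.sumM u fS * E * proj (u j)) := by
      rw [Hlp.mul_proj, Hlp.hsNorm_vecMulVec, Hlp.enr_u_one u hON j, mul_one, hr0def]
    rw [e3, hdl'def, delta', hS, ← hsgdef]
    exact le_trans (le_max_left _ _) (le_max_right _ _)
  -- induction identity
  set B := Hlp.sumM u (fun k => fW k * fS k) * E * Hlp.sumM u fS with hBdef
  have hRdec : res lam u j = Hlp.sumM u fS * Hlp.sumM u (fun k => fW k * fS k) := by
    rw [hR, Hlp.sumM_mul_sumM u hON]
    refine Hlp.sumM_congr u _ _ fun k => ?_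
    by_cases h : k = j
    · simp [hfS, hfW, h]
    · simp only [hfS, hfW, h, if_false]
      have hx : lam k - lam j ≠ 0 := by
        have := habs k h
        exact abs_pos.mp this
      have h1 : Real.sqrt |lam k - lam j| * Real.sqrt |lam k - lam j| = |lam k - lam j| :=
        Real.mul_self_sqrt (abs_nonneg _)
      have h3 : (Real.sqrt |lam k - lam j|)⁻¹ * (Real.sqrt |lam k - lam j|)⁻¹
          = |lam k - lam j|⁻¹ := by rw [← mul_inv, h1]
      calc (lam k - lam j)⁻¹
          = (lam k - lam j) * ((lam k - lam j) * (lam k - lam j))⁻¹ := by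
            rw [mul_inv]; field_simp
      _ = (lam k - lam j) * (|lam k - lam j| * |lam k - lam j|)⁻¹ := by
            rw [abs_mul_abs_self]
      _ = (lam k - lam j) * (|lam k - lam j|⁻¹ * |lam k - lam j|⁻¹) := by rw [mul_inv]
      _ = (Real.sqrt |lam k - lam j|)⁻¹ *
            ((lam k - lam j) * |lam k - lam j|⁻¹ * (Real.sqrt |lam k - lam j|)⁻¹) := by
            rw [← h3]; ring
  have hnB : opNorm B ≤ dl' := by
    have hWS : Hlp.sumM u (fun k => fW k * fS k) = Hlp.sumM u fW * Hlp.sumM u fS :=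
      (Hlp.sumM_mul_sumM u hON _ _).symm
    have e4 : B = Hlp.sumM u fW * (Hlp.sumM u fS * E * Hlp.sumM u fS) := by
      rw [hBdef, hWS]; simp only [Matrix.mul_assoc]
    rw [e4]
    calc opNorm (Hlp.sumM u fW * (Hlp.sumM u fS * E * Hlp.sumM u fS))
        ≤ opNorm (Hlp.sumM u fW) * opNorm (Hlp.sumM u fS * E * Hlp.sumM u fS) :=
        Hlp.opNorm_mul_le _ _
    _ ≤ 1 * dl' := mul_le_mul hnW hSESd' (Hlp.opNorm_nonneg _) zero_le_one
    _ = dl' := one_mul _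
  have hind : ∀ n : ℕ, (res lam u j * E) ^ n * Hlp.sumM u fS = Hlp.sumM u fS * B ^ n := by
    intro n
    induction n with
    | zero => simp
    | succ n ih =>
      have hRES : res lam u j * E * Hlp.sumM u fS = Hlp.sumM u fS * B := by
        rw [hRdec, hBdef]; simp only [Matrix.mul_assoc]
      calc (res lam u j * E) ^ (n + 1) * Hlp.sumM u fS
          = (res lam u j * E) ^ n * (res lam u j * E * Hlp.sumM u fS) := by
            rw [pow_succ, Matrix.mul_assoc]
      _ = (res lam u j * E) ^ n * (Hlp.sumM u fS * B) := by rw [hRES]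
      _ = ((res lam u j * E) ^ n * Hlp.sumM u fS) * B := by rw [Matrix.mul_assoc]
      _ = Hlp.sumM u fS * B ^ n * B := by rw [ih]
      _ = Hlp.sumM u fS * B ^ (n + 1) := by rw [pow_succ, Matrix.mul_assoc]
  intro p hp
  obtain ⟨n, rfl⟩ : ∃ n, p = n + 1 := ⟨p - 1, (Nat.succ_pred_eq_of_pos hp).symm⟩
  simp only [Nat.add_sub_cancel]
  have hmat : (res lam u j * E) ^ n * ((1 - proj (u j)) * proj (uh j))
      = (Hlp.sumM u fS * B ^ n * Hlp.sumM u fT) * proj (uh j) := by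
    rw [hQ1, ← hST]
    calc (res lam u j * E) ^ n * (Hlp.sumM u fS * Hlp.sumM u fT * proj (uh j))
        = ((res lam u j * E) ^ n * Hlp.sumM u fS) * (Hlp.sumM u fT * proj (uh j)) := by
          simp only [Matrix.mul_assoc]
    _ = (Hlp.sumM u fS * B ^ n) * (Hlp.sumM u fT * proj (uh j)) := by rw [hind n]
    _ = (Hlp.sumM u fS * B ^ n * Hlp.sumM u fT) * proj (uh j) := by
          simp only [Matrix.mul_assoc]
  rw [hmat, Hlp.mul_proj, Hlp.hsNorm_vecMulVec, Hlp.enr_u_one uh hONh j, mul_one]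
  have hvec : (Hlp.sumM u fS * B ^ n * Hlp.sumM u fT) *ᵥ uh j
      = Hlp.sumM u fS *ᵥ (B ^ n *ᵥ (Hlp.sumM u fT *ᵥ uh j)) := by
    simp only [Matrix.mulVec_mulVec, Matrix.mul_assoc]
  rw [hvec]
  have c1 : Hlp.enr (B ^ n *ᵥ (Hlp.sumM u fT *ᵥ uh j)) ≤ dl' ^ n * t := by
    calc Hlp.enr (B ^ n *ᵥ (Hlp.sumM u fT *ᵥ uh j)) ≤ opNorm (B ^ n) * t :=
        Hlp.mulVec_enr_le _ _
    _ ≤ opNorm B ^ n * t := mul_le_mul_of_nonneg_right (Hlp.opNorm_pow_le B n) ht0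
    _ ≤ dl' ^ n * t :=
        mul_le_mul_of_nonneg_right (pow_le_pow_left₀ (Hlp.opNorm_nonneg B) hnB n) ht0
  have c2 : Hlp.enr (Hlp.sumM u fS *ᵥ (B ^ n *ᵥ (Hlp.sumM u fT *ᵥ uh j)))
      ≤ sg⁻¹ * (dl' ^ n * t) := by
    calc Hlp.enr (Hlp.sumM u fS *ᵥ (B ^ n *ᵥ (Hlp.sumM u fT *ᵥ uh j)))
        ≤ opNorm (Hlp.sumM u fS) * Hlp.enr (B ^ n *ᵥ (Hlp.sumM u fT *ᵥ uh j)) :=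
        Hlp.mulVec_enr_le _ _
    _ ≤ sg⁻¹ * (dl' ^ n * t) :=
        mul_le_mul hnS c1 (Hlp.enr_nonneg _) (inv_nonneg.mpr hsg.le)
  rw [le_div_iff₀ h12]
  calc Hlp.enr (Hlp.sumM u fS *ᵥ (B ^ n *ᵥ (Hlp.sumM u fT *ᵥ uh j))) * (1 - 2 * dl)
      ≤ (sg⁻¹ * (dl' ^ n * t)) * (1 - 2 * dl) := mul_le_mul_of_nonneg_right c2 h12.le
  _ = sg⁻¹ * dl' ^ n * ((1 - 2 * dl) * t) := by ring
  _ ≤ sg⁻¹ * dl' ^ n * r0 :=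
      mul_le_mul_of_nonneg_left hcontr
        (mul_nonneg (inv_nonneg.mpr hsg.le) (pow_nonneg hdl'0 n))
  _ = dl' ^ n * (sg⁻¹ * r0) := by ring
  _ ≤ dl' ^ n * dl' := mul_le_mul_of_nonneg_left hr0d' (pow_nonneg hdl'0 n)
  _ = dl' ^ (n + 1) := (pow_succ dl' n).symm
end

section
/- If the eigenvalues satisfy λ_j = e^{−j^α} for some α ∈ (0,1], then there exists a constant C > 1 depending only on α such that for every j ≥ 1: λ_j/g_j ≤ C j^{1−α}, Σ_{k≠j} λ_k/|λ_k − λ_j| ≤ C j, and Σ_{k≠j} λ_j λ_k/(λ_k − λ_j)^2 ≤ C j^{2−2α}. -/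
open Real Finset
/-- The eigenvalue sequence `λ_j = exp(-j^α)`. -/
noncomputable def lamExp (α : ℝ) (j : ℕ) : ℝ := Real.exp (-(j : ℝ) ^ α)

/-- The spectral gap `g_j`: `g_1 = λ_1 - λ_2`, and
`g_j = min (λ_{j-1} - λ_j) (λ_j - λ_{j+1})` for `j ≥ 2`. -/
noncomputable def gapExp (α : ℝ) (j : ℕ) : ℝ :=
  if j = 1 then lamExp α 1 - lamExp α 2
  else min (lamExp α (j - 1) - lamExp α j) (lamExp α j - lamExp α (j + 1))

namespace S19

/-- `x/(1+x) ≤ 1 - e^{-x}` for `x > 0`. -/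
lemma one_sub_exp_ge {x : ℝ} (hx : 0 < x) : x / (1 + x) ≤ 1 - Real.exp (-x) := by
  have h1 : Real.exp (-x) * (1 + x) ≤ 1 := by
    calc Real.exp (-x) * (1 + x) ≤ Real.exp (-x) * Real.exp x := by
          gcongr
          linarith [Real.add_one_le_exp x]
      _ = 1 := by rw [← Real.exp_add]; simp
  have h2 : Real.exp (-x) ≤ 1 / (1 + x) := by
    rw [le_div_iff₀ (by linarith)]; linarith
  have h3 : x / (1 + x) = 1 - 1 / (1 + x) := by field_simp; ring
  linarith

lemma one_sub_exp_pos {x : ℝ} (hx : 0 < x) : 0 < 1 - Real.exp (-x) := by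
  have : Real.exp (-x) < 1 := Real.exp_lt_one_iff.mpr (by linarith)
  linarith

lemma exp_lemA {x : ℝ} (hx : 0 < x) : 1 / (1 - Real.exp (-x)) ≤ 1 + 1 / x := by
  have h := one_sub_exp_ge hx
  have hpos : 0 < 1 - Real.exp (-x) := lt_of_lt_of_le (by positivity) h
  rw [div_le_iff₀ hpos]
  calc (1:ℝ) = (1 + 1/x) * (x / (1 + x)) := by field_simp; ring
    _ ≤ (1 + 1/x) * (1 - Real.exp (-x)) := by gcongr

lemma exp_lemB {x : ℝ} (hx : 0 < x) : Real.exp (-x) / (1 - Real.exp (-x)) ≤ 1 / x := by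
  have h1 : 1 - Real.exp (-x) = Real.exp (-x) * (Real.exp x - 1) := by
    rw [mul_sub, ← Real.exp_add]; simp
  have hx2 : x ≤ Real.exp x - 1 := by linarith [Real.add_one_le_exp x]
  rw [h1, div_mul_eq_div_div_swap, div_right_comm, div_self (ne_of_gt (Real.exp_pos _))]
  exact one_div_le_one_div_of_le hx hx2

lemma exp_lemC {x : ℝ} (hx : 0 < x) :
    Real.exp (-x) / (1 - Real.exp (-x)) ^ 2 ≤ 1 / x ^ 2 := by
  have e1 : Real.exp (-(x/2)) * Real.exp (x/2) = 1 := by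
    rw [← Real.exp_add]; simp
  have e2 : Real.exp (-(x/2)) * Real.exp (-(x/2)) = Real.exp (-x) := by
    rw [← Real.exp_add]; congr 1; ring
  have key : 1 - Real.exp (-x) = Real.exp (-(x/2)) * (2 * Real.sinh (x/2)) := by
    rw [Real.sinh_eq]
    linear_combination e2 - e1
  have hs : x ≤ 2 * Real.sinh (x/2) := by
    have := Real.self_le_sinh_iff.mpr (by linarith : (0:ℝ) ≤ x/2)
    linarith
  have hS : 0 < 2 * Real.sinh (x/2) := lt_of_lt_of_le hx hs
  have hsq : (1 - Real.exp (-x))^2 = Real.exp (-x) * (2 * Real.sinh (x/2))^2 := by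
    rw [key, mul_pow, sq, e2]
  rw [hsq, div_mul_eq_div_div, div_self (ne_of_gt (Real.exp_pos _))]
  exact one_div_le_one_div_of_le (by positivity) (by nlinarith)


lemma one_sub_exp_pos' {x : ℝ} (hx : 0 < x) : 0 < 1 - Real.exp (-x) := by
  have : Real.exp (-x) < 1 := Real.exp_lt_one_iff.mpr (by linarith)
  linarith

/-- monotone denominator version -/
lemma inv_one_sub_exp_mono {x c : ℝ} (hc : 0 < c) (hcx : c ≤ x) :
    (1 - Real.exp (-x))⁻¹ ≤ (1 - Real.exp (-c))⁻¹ := by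
  have h1 : Real.exp (-x) ≤ Real.exp (-c) := Real.exp_le_exp.mpr (by linarith)
  exact inv_anti₀ (one_sub_exp_pos' hc) (by linarith)

lemma exp_lemB' {x c : ℝ} (hc : 0 < c) (hcx : c ≤ x) :
    Real.exp (-x) / (1 - Real.exp (-x)) ≤ Real.exp (-x) * (1 - Real.exp (-c))⁻¹ := by
  rw [div_eq_mul_inv]
  exact mul_le_mul_of_nonneg_left (inv_one_sub_exp_mono hc hcx) (Real.exp_pos _).le

lemma exp_lemC' {x c : ℝ} (hc : 0 < c) (hcx : c ≤ x) :
    Real.exp (-x) / (1 - Real.exp (-x)) ^ 2 ≤ Real.exp (-x) * ((1 - Real.exp (-c))⁻¹)^2 := by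
  rw [div_eq_mul_inv, ← inv_pow]
  refine mul_le_mul_of_nonneg_left ?_ (Real.exp_pos _).le
  have h0 : 0 ≤ (1 - Real.exp (-x))⁻¹ := by
    have := one_sub_exp_pos' (lt_of_lt_of_le hc hcx)
    positivity
  exact pow_le_pow_left₀ h0 (inv_one_sub_exp_mono hc hcx) 2

/-- Bernoulli inequality for exponents in (0,1]. -/
lemma bern_rpow {α t : ℝ} (hα0 : 0 < α) (hα1 : α ≤ 1) (h0 : 0 ≤ t) (h1 : t ≤ 1) :
    t ^ α ≤ 1 - α + α * t := by
  have h := Real.geom_mean_le_arith_mean2_weighted hα0.le (by linarith : (0:ℝ) ≤ 1 - α)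
    h0 zero_le_one (by ring)
  rw [Real.one_rpow] at h
  linarith

/-- `α z^{α-1} (z-y) ≤ z^α - y^α` for `0 ≤ y ≤ z`, `z > 0`. -/
lemma bern_diff {α y z : ℝ} (hα0 : 0 < α) (hα1 : α ≤ 1) (h0 : 0 ≤ y) (hyz : y ≤ z)
    (hz : 0 < z) : α * z ^ (α - 1) * (z - y) ≤ z ^ α - y ^ α := by
  have ht : y / z ≤ 1 := div_le_one_of_le₀ hyz hz.le
  have h := bern_rpow hα0 hα1 (div_nonneg h0 hz.le) ht
  have hyα : y ^ α = z ^ α * (y / z) ^ α := by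
    rw [← Real.mul_rpow hz.le (div_nonneg h0 hz.le), mul_div_cancel₀ _ (ne_of_gt hz)]
  have hz1 : z ^ (α - 1) = z ^ α / z := by
    rw [Real.rpow_sub hz, Real.rpow_one]
  have hzα : 0 < z ^ α := Real.rpow_pos_of_pos hz α
  rw [hz1, hyα]
  have h2 : z ^ α * (y / z) ^ α ≤ z ^ α * (1 - α + α * (y / z)) := by gcongr
  have h3 : z ^ α * (1 - α + α * (y / z)) = z ^ α - α * (z ^ α / z) * (z - y) := by
    field_simp
    ring
  linarith


/-- Exponential decay beats 1/m²: for `0 < c ≤ 1`, `0 < α ≤ 1` there is `K ≥ 1` with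
`exp(-(c m^α)) ≤ K/m²` for all `m ≥ 1`. -/
lemma decay {α c : ℝ} (hα0 : 0 < α) (hα1 : α ≤ 1) (hc : 0 < c) (hc1 : c ≤ 1) :
    ∃ K : ℝ, 1 ≤ K ∧ ∀ m : ℕ, 1 ≤ m → Real.exp (-(c * (m : ℝ) ^ α)) ≤ K / (m : ℝ) ^ 2 := by
  set M : ℝ := (4 / (c * α)) ^ (2 / α) with hM
  have hbase : (1:ℝ) ≤ 4 / (c * α) := by
    rw [le_div_iff₀ (by positivity)]
    nlinarith
  have hM1 : 1 ≤ M := Real.one_le_rpow hbase (by positivity)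
  refine ⟨M ^ 2, by nlinarith, ?_⟩
  intro m hm
  have hm0 : (0:ℝ) < m := by exact_mod_cast hm
  have hm1 : (1:ℝ) ≤ m := by exact_mod_cast hm
  rcases le_or_gt M (m : ℝ) with h | h
  · -- big m : c m^α ≥ 2 log m
    have hexp1 : (2 / α) * (α / 2) = 1 := by field_simp
    have hMα : M ^ (α / 2) = 4 / (c * α) := by
      rw [hM, ← Real.rpow_mul (by positivity), hexp1, Real.rpow_one]
    have hmono : M ^ (α / 2) ≤ (m : ℝ) ^ (α / 2) :=
      Real.rpow_le_rpow (by positivity) h (by positivity)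
    have hlog : Real.log m ≤ (2 / α) * (m : ℝ) ^ (α / 2) := by
      have h1 : Real.log ((m : ℝ) ^ (α / 2)) = (α / 2) * Real.log m :=
        Real.log_rpow hm0 _
      have h2 : Real.log ((m : ℝ) ^ (α / 2)) ≤ (m : ℝ) ^ (α / 2) :=
        Real.log_le_self (by positivity)
      rw [h1] at h2
      rw [div_mul_eq_mul_div, le_div_iff₀ hα0]
      nlinarith
    have hsplit : (m : ℝ) ^ (α / 2) * (m : ℝ) ^ (α / 2) = (m : ℝ) ^ α := by
      rw [← Real.rpow_add hm0]; ring_nf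
    have hkey : 2 * Real.log m ≤ c * (m : ℝ) ^ α := by
      have h4 : 4 / (c * α) ≤ (m : ℝ) ^ (α / 2) := hMα ▸ hmono
      have h5 : 2 * Real.log m ≤ (4 / α) * (m : ℝ) ^ (α / 2) := by
        have : (2:ℝ) / α * 2 = 4 / α := by ring
        nlinarith
      have h6 : (4 / α) * (m : ℝ) ^ (α / 2) = c * (4 / (c * α)) * (m : ℝ) ^ (α / 2) := by
        field_simp
      have h7 : c * (4 / (c * α)) * (m : ℝ) ^ (α / 2) ≤
          c * (m : ℝ) ^ (α / 2) * (m : ℝ) ^ (α / 2) := by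
        have hp : (0:ℝ) < (m : ℝ) ^ (α / 2) := by positivity
        nlinarith [mul_nonneg (mul_pos hc hp).le (sub_nonneg.mpr h4)]
      rw [← hsplit]
      nlinarith
    have : Real.exp (-(c * (m : ℝ) ^ α)) ≤ Real.exp (-(2 * Real.log m)) :=
      Real.exp_le_exp.mpr (by linarith)
    refine this.trans ?_
    have hexp : Real.exp (-(2 * Real.log m)) = ((m : ℝ) ^ 2)⁻¹ := by
      rw [show (2:ℝ) * Real.log m = Real.log ((m:ℝ) ^ 2) by
            rw [Real.log_pow]; push_cast; ring,
        Real.exp_neg, Real.exp_log (by positivity)]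
    rw [hexp, inv_eq_one_div]
    apply div_le_div_of_nonneg_right ?_ (by positivity)
    · nlinarith
  · -- small m : use exp ≤ 1 ≤ M²/m²
    have h1 : Real.exp (-(c * (m : ℝ) ^ α)) ≤ 1 := by
      rw [← Real.exp_zero]
      apply Real.exp_le_exp.mpr
      have : (0:ℝ) ≤ (m:ℝ) ^ α := by positivity
      nlinarith
    refine h1.trans ?_
    rw [le_div_iff₀ (by positivity)]
    nlinarith

/-- partial sums of `1/m²` over `Icc 1 n` are at most `2 - 1/n`. -/
lemma sum_inv_sq_Icc (n : ℕ) (hn : 1 ≤ n) :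
    ∑ m ∈ Finset.Icc 1 n, (1 : ℝ) / (m : ℝ) ^ 2 ≤ 2 - 1 / n := by
  induction n, hn using Nat.le_induction with
  | base =>
    norm_num
  | succ n hn ih =>
    rw [Finset.sum_Icc_succ_top (by omega)]
    have hn' : (1:ℝ) ≤ n := by exact_mod_cast hn
    have key : (1:ℝ) / ((n:ℝ) + 1) ^ 2 + 1 / ((n:ℝ) + 1) ≤ 1 / n := by
      rw [div_add_div _ _ (by positivity) (by positivity), div_le_div_iff₀ (by positivity) (by positivity)]
      ring_nf
      nlinarith
    push_cast
    linarith [ih]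

/-- sum of `1/m²` over any finite set of positive naturals is at most 2. -/
lemma sum_inv_sq (t : Finset ℕ) (ht : ∀ m ∈ t, 1 ≤ m) :
    ∑ m ∈ t, (1 : ℝ) / (m : ℝ) ^ 2 ≤ 2 := by
  rcases t.eq_empty_or_nonempty with h | h
  · simp [h]
  · set n := t.max' h with hn
    have hsub : t ⊆ Finset.Icc 1 n := by
      intro m hm
      exact Finset.mem_Icc.mpr ⟨ht m hm, Finset.le_max' t m hm⟩
    have h1 : ∑ m ∈ t, (1 : ℝ) / (m : ℝ) ^ 2 ≤ ∑ m ∈ Finset.Icc 1 n, (1 : ℝ) / (m : ℝ) ^ 2 :=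
      Finset.sum_le_sum_of_subset_of_nonneg hsub (by intros; positivity)
    have hn1 : 1 ≤ n := ht _ (t.max'_mem h)
    have h2 := sum_inv_sq_Icc n hn1
    have : (0:ℝ) ≤ 1 / n := by positivity
    linarith

/-- sum of `1/m` over a finite set of naturals in `[1,n]` is at most `1 + log n`. -/
lemma sum_inv (t : Finset ℕ) (n : ℕ) (ht : ∀ m ∈ t, 1 ≤ m ∧ m ≤ n) :
    ∑ m ∈ t, (1 : ℝ) / (m : ℝ) ≤ 1 + Real.log n := by
  have hsub : t ⊆ Finset.Icc 1 n := fun m hm => Finset.mem_Icc.mpr (ht m hm)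
  have h1 : ∑ m ∈ t, (1 : ℝ) / (m : ℝ) ≤ ∑ m ∈ Finset.Icc 1 n, (1 : ℝ) / (m : ℝ) :=
    Finset.sum_le_sum_of_subset_of_nonneg hsub (by intros; positivity)
  have h2 : ∑ m ∈ Finset.Icc 1 n, (1 : ℝ) / (m : ℝ) = ((harmonic n : ℚ) : ℝ) := by
    rw [harmonic_eq_sum_Icc]
    push_cast
    simp [one_div]
  have h3 := harmonic_le_one_add_log n
  linarith [h1, h2 ▸ h1]


lemma ratio_eq₁ {A B : ℝ} :
    Real.exp (-A) / (Real.exp (-A) - Real.exp (-B)) = 1 / (1 - Real.exp (-(B - A))) := by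
  have hE : Real.exp (-B) = Real.exp (-A) * Real.exp (-(B - A)) := by
    rw [← Real.exp_add]; congr 1; ring
  rw [hE, ← mul_one_sub, div_mul_eq_div_div, div_self (ne_of_gt (Real.exp_pos _))]

lemma ratio_eq₂ {A B : ℝ} :
    Real.exp (-B) / (Real.exp (-A) - Real.exp (-B)) =
      Real.exp (-(B - A)) / (1 - Real.exp (-(B - A))) := by
  have hE : Real.exp (-B) = Real.exp (-A) * Real.exp (-(B - A)) := by
    rw [← Real.exp_add]; congr 1; ring
  rw [hE, ← mul_one_sub, mul_div_mul_left _ _ (ne_of_gt (Real.exp_pos _))]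

lemma ratio_eq₃ {A B : ℝ} :
    Real.exp (-A) * Real.exp (-B) / (Real.exp (-A) - Real.exp (-B)) ^ 2 =
      Real.exp (-(B - A)) / (1 - Real.exp (-(B - A))) ^ 2 := by
  have hE : Real.exp (-B) = Real.exp (-A) * Real.exp (-(B - A)) := by
    rw [← Real.exp_add]; congr 1; ring
  have h1 : Real.exp (-A) * Real.exp (-B) = Real.exp (-A) ^ 2 * Real.exp (-(B - A)) := by
    rw [hE]; ring
  have h2 : (Real.exp (-A) - Real.exp (-B)) ^ 2 =
      Real.exp (-A) ^ 2 * (1 - Real.exp (-(B - A))) ^ 2 := by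
    rw [hE, ← mul_one_sub, mul_pow]
  rw [h1, h2, mul_div_mul_left _ _ (pow_ne_zero 2 (ne_of_gt (Real.exp_pos _)))]

section terms
variable {α : ℝ} (hα0 : 0 < α) (hα1 : α ≤ 1)

lemma rpow_lt_rpow_nat {k j : ℕ} (h : k < j) (hα0 : 0 < α) : (k:ℝ)^α < (j:ℝ)^α :=
  Real.rpow_lt_rpow (Nat.cast_nonneg k) (by exact_mod_cast h) hα0

lemma lam_lt {k j : ℕ} (hα0 : 0 < α) (h : k < j) : lamExp α j < lamExp α k := by
  simp only [lamExp]
  exact Real.exp_lt_exp.mpr (by linarith [rpow_lt_rpow_nat h hα0])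

include hα0 hα1 in
/-- `α z^{α-1} (z-y) ≤ z^α - y^α` for naturals `y < z`. -/
lemma X_lb {y z : ℕ} (h1 : y < z) :
    α * (z:ℝ)^(α-1) * ((z - y : ℕ):ℝ) ≤ (z:ℝ)^α - (y:ℝ)^α := by
  have hz : (0:ℝ) < z := by
    have : 0 < z := by omega
    exact_mod_cast this
  rw [Nat.cast_sub h1.le]
  exact bern_diff hα0 hα1 (Nat.cast_nonneg y) (by exact_mod_cast h1.le) hz

include hα0 in
lemma inv_bound {z d X : ℝ} (hz : 0 < z) (hd : 0 < d)
    (hX : α * z^(α-1) * d ≤ X) : 1/X ≤ z^(1-α)/α * (1/d) := by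
  have hP : (0:ℝ) < z^(α-1) := Real.rpow_pos_of_pos hz _
  have hpos : (0:ℝ) < α * z^(α-1) * d := by positivity
  have h1 : 1/X ≤ 1/(α * z^(α-1) * d) := one_div_le_one_div_of_le hpos hX
  have hQ : z^(1-α) = (z^(α-1))⁻¹ := by
    rw [← Real.rpow_neg hz.le]; congr 1; ring
  rw [hQ]
  refine h1.trans (le_of_eq ?_)
  field_simp

include hα0 in
lemma inv_sq_bound {z d X : ℝ} (hz : 0 < z) (hd : 0 < d)
    (hX : α * z^(α-1) * d ≤ X) (hXpos : 0 < X) :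
    1/X^2 ≤ (z^(1-α)/α)^2 * (1/d^2) := by
  have h1 : 1/X ≤ z^(1-α)/α * (1/d) := inv_bound hα0 hz hd hX
  have h2 : (0:ℝ) ≤ 1/X := by positivity
  calc 1/X^2 = (1/X)^2 := by ring
    _ ≤ (z^(1-α)/α * (1/d))^2 := by
        apply pow_le_pow_left₀ h2 h1
    _ = (z^(1-α)/α)^2 * (1/d^2) := by ring

include hα0 hα1 in
lemma two_rpow_le {k j : ℕ} (hj : 1 ≤ j) (hk2 : k ≤ 2*j) :
    (k:ℝ)^(1-α) ≤ 2 * (j:ℝ)^(1-α) := by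
  have h1 : (k:ℝ)^(1-α) ≤ ((2*j : ℕ):ℝ)^(1-α) :=
    Real.rpow_le_rpow (Nat.cast_nonneg k) (by exact_mod_cast hk2) (by linarith)
  have h2 : ((2*j : ℕ):ℝ) = 2 * (j:ℝ) := by push_cast; ring
  have h3 : (2*(j:ℝ))^(1-α) = 2^(1-α) * (j:ℝ)^(1-α) :=
    Real.mul_rpow (by norm_num) (Nat.cast_nonneg j)
  have h4 : (2:ℝ)^(1-α) ≤ 2 := by
    calc (2:ℝ)^(1-α) ≤ (2:ℝ)^(1:ℝ) :=
          Real.rpow_le_rpow_of_exponent_le (by norm_num) (by linarith)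
      _ = 2 := Real.rpow_one 2
  have h5 : (0:ℝ) ≤ (j:ℝ)^(1-α) := by positivity
  rw [h2, h3] at h1
  nlinarith

include hα0 hα1 in
/-- term of sum 2 for `k < j`. -/
lemma term2_lt {k j : ℕ} (hk : 1 ≤ k) (hkj : k < j) :
    lamExp α k / |lamExp α k - lamExp α j| ≤
      1 + (j:ℝ)^(1-α)/α * (1/((j - k : ℕ):ℝ)) := by
  have hj0 : (0:ℝ) < j := by
    have : 0 < j := by omega
    exact_mod_cast this
  have hAB : (k:ℝ)^α < (j:ℝ)^α := rpow_lt_rpow_nat hkj hα0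
  have hX : (0:ℝ) < (j:ℝ)^α - (k:ℝ)^α := by linarith
  have habs : |lamExp α k - lamExp α j| = lamExp α k - lamExp α j :=
    abs_of_pos (by linarith [lam_lt hα0 hkj])
  rw [habs]
  have heq : lamExp α k / (lamExp α k - lamExp α j) =
      1 / (1 - Real.exp (-((j:ℝ)^α - (k:ℝ)^α))) := by
    simp only [lamExp]
    exact ratio_eq₁
  rw [heq]
  have h1 := exp_lemA hX
  have hd : (0:ℝ) < ((j - k : ℕ):ℝ) := by
    have : 0 < j - k := by omega
    exact_mod_cast this
  have h2 : 1/((j:ℝ)^α - (k:ℝ)^α) ≤ (j:ℝ)^(1-α)/α * (1/((j - k : ℕ):ℝ)) :=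
    inv_bound hα0 hj0 hd (X_lb hα0 hα1 hkj)
  linarith

include hα0 hα1 in
/-- term of sum 2 for `j < k ≤ 2j`. -/
lemma term2_mid {k j : ℕ} (hj : 1 ≤ j) (hjk : j < k) (hk2 : k ≤ 2*j) :
    lamExp α k / |lamExp α k - lamExp α j| ≤
      2 * (j:ℝ)^(1-α)/α * (1/((k - j : ℕ):ℝ)) := by
  have hk0 : (0:ℝ) < k := by
    have : 0 < k := by omega
    exact_mod_cast this
  have hAB : (j:ℝ)^α < (k:ℝ)^α := rpow_lt_rpow_nat hjk hα0
  have hX : (0:ℝ) < (k:ℝ)^α - (j:ℝ)^α := by linarith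
  have habs : |lamExp α k - lamExp α j| = lamExp α j - lamExp α k := by
    rw [abs_of_neg (by linarith [lam_lt hα0 hjk]), neg_sub]
  rw [habs]
  have heq : lamExp α k / (lamExp α j - lamExp α k) =
      Real.exp (-((k:ℝ)^α - (j:ℝ)^α)) / (1 - Real.exp (-((k:ℝ)^α - (j:ℝ)^α))) := by
    simp only [lamExp]
    exact ratio_eq₂
  rw [heq]
  have h1 := exp_lemB hX
  have hd : (0:ℝ) < ((k - j : ℕ):ℝ) := by
    have : 0 < k - j := by omega
    exact_mod_cast this
  have h2 : 1/((k:ℝ)^α - (j:ℝ)^α) ≤ (k:ℝ)^(1-α)/α * (1/((k - j : ℕ):ℝ)) :=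
    inv_bound hα0 hk0 hd (X_lb hα0 hα1 hjk)
  have h3 : (k:ℝ)^(1-α)/α * (1/((k - j : ℕ):ℝ)) ≤
      2 * (j:ℝ)^(1-α)/α * (1/((k - j : ℕ):ℝ)) := by
    have := two_rpow_le hα0 hα1 hj hk2
    have h5 : (0:ℝ) ≤ 1/((k - j : ℕ):ℝ) := by positivity
    have h6 : (k:ℝ)^(1-α)/α ≤ 2 * (j:ℝ)^(1-α)/α := by gcongr
    exact mul_le_mul_of_nonneg_right h6 h5
  linarith

include hα0 in
lemma c2_pos : 0 < 1 - (2:ℝ)^(-α) := by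
  have : (2:ℝ)^(-α) < 1 :=
    Real.rpow_lt_one_of_one_lt_of_neg (by norm_num) (by linarith)
  linarith

include hα0 in
/-- in the far region the exponent gap dominates `c·m^α`. -/
lemma X_far {k j : ℕ} (hj : 1 ≤ j) (h2j : 2*j < k) :
    (1 - (2:ℝ)^(-α)) * ((k - j : ℕ):ℝ)^α ≤ (k:ℝ)^α - (j:ℝ)^α := by
  have hk0 : (0:ℝ) ≤ k := Nat.cast_nonneg k
  have hj2 : (j:ℝ) ≤ (k:ℝ)/2 := by
    have : (2:ℝ) * (j:ℝ) + 1 ≤ (k:ℝ) := by exact_mod_cast (by omega : 2*j+1 ≤ k)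
    linarith
  have hjca : (j:ℝ)^α ≤ ((k:ℝ)/2)^α :=
    Real.rpow_le_rpow (Nat.cast_nonneg j) hj2 hα0.le
  have hdiv : ((k:ℝ)/2)^α = (k:ℝ)^α * (2:ℝ)^(-α) := by
    rw [Real.div_rpow hk0 (by norm_num : (0:ℝ) ≤ 2),
      Real.rpow_neg (by norm_num : (0:ℝ) ≤ 2), div_eq_mul_inv]
  have hXk : (1 - (2:ℝ)^(-α)) * (k:ℝ)^α ≤ (k:ℝ)^α - (j:ℝ)^α := by
    rw [hdiv] at hjca
    nlinarith
  have hm : ((k - j : ℕ):ℝ)^α ≤ (k:ℝ)^α :=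
    Real.rpow_le_rpow (Nat.cast_nonneg _) (by exact_mod_cast Nat.sub_le k j) hα0.le
  have hc0 := c2_pos (α := α) hα0
  nlinarith

include hα0 in
lemma X_far_one {k j : ℕ} (hj : 1 ≤ j) (h2j : 2*j < k) :
    1 - (2:ℝ)^(-α) ≤ (k:ℝ)^α - (j:ℝ)^α := by
  have h1 := X_far hα0 hj h2j
  have hm1 : (1:ℝ) ≤ ((k - j : ℕ):ℝ) := by
    have : 1 ≤ k - j := by omega
    exact_mod_cast this
  have hm : (1:ℝ) ≤ ((k - j : ℕ):ℝ)^α := Real.one_le_rpow hm1 hα0.le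
  have hc0 := c2_pos (α := α) hα0
  nlinarith

include hα0 hα1 in
/-- term of sum 2 for `2j < k`. -/
lemma term2_far {k j : ℕ} (hj : 1 ≤ j) (h2j : 2*j < k) :
    lamExp α k / |lamExp α k - lamExp α j| ≤
      (1 - Real.exp (-(1 - (2:ℝ)^(-α))))⁻¹ *
        Real.exp (-((1 - (2:ℝ)^(-α)) * ((k - j : ℕ):ℝ)^α)) := by
  have hjk : j < k := by omega
  have hAB : (j:ℝ)^α < (k:ℝ)^α := rpow_lt_rpow_nat hjk hα0
  have hX : (0:ℝ) < (k:ℝ)^α - (j:ℝ)^α := by linarith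
  have habs : |lamExp α k - lamExp α j| = lamExp α j - lamExp α k := by
    rw [abs_of_neg (by linarith [lam_lt hα0 hjk]), neg_sub]
  rw [habs]
  have heq : lamExp α k / (lamExp α j - lamExp α k) =
      Real.exp (-((k:ℝ)^α - (j:ℝ)^α)) / (1 - Real.exp (-((k:ℝ)^α - (j:ℝ)^α))) := by
    simp only [lamExp]
    exact ratio_eq₂
  rw [heq]
  have hc0 := c2_pos (α := α) hα0
  have h1 := exp_lemB' hc0 (X_far_one hα0 hj h2j)
  have h2 : Real.exp (-((k:ℝ)^α - (j:ℝ)^α)) ≤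
      Real.exp (-((1 - (2:ℝ)^(-α)) * ((k - j : ℕ):ℝ)^α)) :=
    Real.exp_le_exp.mpr (neg_le_neg (X_far hα0 hj h2j))
  have h3 : (0:ℝ) ≤ (1 - Real.exp (-(1 - (2:ℝ)^(-α))))⁻¹ := by
    have := one_sub_exp_pos' hc0
    positivity
  calc Real.exp (-((k:ℝ)^α - (j:ℝ)^α)) / (1 - Real.exp (-((k:ℝ)^α - (j:ℝ)^α)))
      ≤ Real.exp (-((k:ℝ)^α - (j:ℝ)^α)) * (1 - Real.exp (-(1 - (2:ℝ)^(-α))))⁻¹ := h1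
    _ ≤ Real.exp (-((1 - (2:ℝ)^(-α)) * ((k - j : ℕ):ℝ)^α)) *
          (1 - Real.exp (-(1 - (2:ℝ)^(-α))))⁻¹ := by
        exact mul_le_mul_of_nonneg_right h2 h3
    _ = (1 - Real.exp (-(1 - (2:ℝ)^(-α))))⁻¹ *
          Real.exp (-((1 - (2:ℝ)^(-α)) * ((k - j : ℕ):ℝ)^α)) := by ring

include hα0 hα1 in
/-- term of sum 3 for `k < j`. -/
lemma term3_lt {k j : ℕ} (hk : 1 ≤ k) (hkj : k < j) :
    lamExp α j * lamExp α k / (lamExp α k - lamExp α j)^2 ≤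
      ((j:ℝ)^(1-α)/α)^2 * (1/((j - k : ℕ):ℝ)^2) := by
  have hj0 : (0:ℝ) < j := by
    have : 0 < j := by omega
    exact_mod_cast this
  have hAB : (k:ℝ)^α < (j:ℝ)^α := rpow_lt_rpow_nat hkj hα0
  have hX : (0:ℝ) < (j:ℝ)^α - (k:ℝ)^α := by linarith
  have heq : lamExp α j * lamExp α k / (lamExp α k - lamExp α j)^2 =
      Real.exp (-((j:ℝ)^α - (k:ℝ)^α)) / (1 - Real.exp (-((j:ℝ)^α - (k:ℝ)^α)))^2 := by
    simp only [lamExp]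
    rw [mul_comm]
    exact ratio_eq₃
  rw [heq]
  have h1 := exp_lemC hX
  have hd : (0:ℝ) < ((j - k : ℕ):ℝ) := by
    have : 0 < j - k := by omega
    exact_mod_cast this
  have h2 := inv_sq_bound hα0 hj0 hd (X_lb hα0 hα1 hkj) hX
  linarith

include hα0 hα1 in
/-- term of sum 3 for `j < k ≤ 2j`. -/
lemma term3_mid {k j : ℕ} (hj : 1 ≤ j) (hjk : j < k) (hk2 : k ≤ 2*j) :
    lamExp α j * lamExp α k / (lamExp α k - lamExp α j)^2 ≤
      (2*(j:ℝ)^(1-α)/α)^2 * (1/((k - j : ℕ):ℝ)^2) := by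
  have hk0 : (0:ℝ) < k := by
    have : 0 < k := by omega
    exact_mod_cast this
  have hAB : (j:ℝ)^α < (k:ℝ)^α := rpow_lt_rpow_nat hjk hα0
  have hX : (0:ℝ) < (k:ℝ)^α - (j:ℝ)^α := by linarith
  have hsq : (lamExp α k - lamExp α j)^2 = (lamExp α j - lamExp α k)^2 := by ring
  rw [hsq]
  have heq : lamExp α j * lamExp α k / (lamExp α j - lamExp α k)^2 =
      Real.exp (-((k:ℝ)^α - (j:ℝ)^α)) / (1 - Real.exp (-((k:ℝ)^α - (j:ℝ)^α)))^2 := by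
    simp only [lamExp]
    exact ratio_eq₃
  rw [heq]
  have h1 := exp_lemC hX
  have hd : (0:ℝ) < ((k - j : ℕ):ℝ) := by
    have : 0 < k - j := by omega
    exact_mod_cast this
  have h2 := inv_sq_bound hα0 hk0 hd (X_lb hα0 hα1 hjk) hX
  have h3 : ((k:ℝ)^(1-α)/α)^2 * (1/((k - j : ℕ):ℝ)^2) ≤
      (2*(j:ℝ)^(1-α)/α)^2 * (1/((k - j : ℕ):ℝ)^2) := by
    have h4 := two_rpow_le hα0 hα1 hj hk2
    have h5 : (0:ℝ) ≤ 1/((k - j : ℕ):ℝ)^2 := by positivity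
    have h6 : (k:ℝ)^(1-α)/α ≤ 2 * (j:ℝ)^(1-α)/α := by gcongr
    have h7 : ((k:ℝ)^(1-α)/α)^2 ≤ (2*(j:ℝ)^(1-α)/α)^2 := by
      apply pow_le_pow_left₀ (by positivity) h6
    exact mul_le_mul_of_nonneg_right h7 h5
  linarith

include hα0 hα1 in
/-- term of sum 3 for `2j < k`. -/
lemma term3_far {k j : ℕ} (hj : 1 ≤ j) (h2j : 2*j < k) :
    lamExp α j * lamExp α k / (lamExp α k - lamExp α j)^2 ≤
      ((1 - Real.exp (-(1 - (2:ℝ)^(-α))))⁻¹)^2 *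
        Real.exp (-((1 - (2:ℝ)^(-α)) * ((k - j : ℕ):ℝ)^α)) := by
  have hjk : j < k := by omega
  have hAB : (j:ℝ)^α < (k:ℝ)^α := rpow_lt_rpow_nat hjk hα0
  have hX : (0:ℝ) < (k:ℝ)^α - (j:ℝ)^α := by linarith
  have hsq : (lamExp α k - lamExp α j)^2 = (lamExp α j - lamExp α k)^2 := by ring
  rw [hsq]
  have heq : lamExp α j * lamExp α k / (lamExp α j - lamExp α k)^2 =
      Real.exp (-((k:ℝ)^α - (j:ℝ)^α)) / (1 - Real.exp (-((k:ℝ)^α - (j:ℝ)^α)))^2 := by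
    simp only [lamExp]
    exact ratio_eq₃
  rw [heq]
  have hc0 := c2_pos (α := α) hα0
  have h1 := exp_lemC' hc0 (X_far_one hα0 hj h2j)
  have h2 : Real.exp (-((k:ℝ)^α - (j:ℝ)^α)) ≤
      Real.exp (-((1 - (2:ℝ)^(-α)) * ((k - j : ℕ):ℝ)^α)) :=
    Real.exp_le_exp.mpr (neg_le_neg (X_far hα0 hj h2j))
  have h3 : (0:ℝ) ≤ ((1 - Real.exp (-(1 - (2:ℝ)^(-α))))⁻¹)^2 := by positivity
  calc Real.exp (-((k:ℝ)^α - (j:ℝ)^α)) / (1 - Real.exp (-((k:ℝ)^α - (j:ℝ)^α)))^2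
      ≤ Real.exp (-((k:ℝ)^α - (j:ℝ)^α)) * ((1 - Real.exp (-(1 - (2:ℝ)^(-α))))⁻¹)^2 := h1
    _ ≤ Real.exp (-((1 - (2:ℝ)^(-α)) * ((k - j : ℕ):ℝ)^α)) *
          ((1 - Real.exp (-(1 - (2:ℝ)^(-α))))⁻¹)^2 := mul_le_mul_of_nonneg_right h2 h3
    _ = ((1 - Real.exp (-(1 - (2:ℝ)^(-α))))⁻¹)^2 *
          Real.exp (-((1 - (2:ℝ)^(-α)) * ((k - j : ℕ):ℝ)^α)) := by ring


lemma sum_inv_shift_lt (j : ℕ) (t : Finset ℕ) (h : ∀ k ∈ t, k < j) :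
    ∑ k ∈ t, (1:ℝ)/((j - k : ℕ):ℝ) ≤ 1 + Real.log j := by
  have hinj : ∀ a ∈ t, ∀ b ∈ t, j - a = j - b → a = b := by
    intro a ha b hb hab
    have h1 := h a ha
    have h2 := h b hb
    omega
  rw [← Finset.sum_image (g := fun k => j - k) (f := fun m : ℕ => (1:ℝ)/(m:ℝ)) hinj]
  apply sum_inv _ j
  intro m hm
  rw [Finset.mem_image] at hm
  obtain ⟨k, hk, rfl⟩ := hm
  have := h k hk
  omega

lemma sum_inv_shift_gt (j : ℕ) (t : Finset ℕ) (h : ∀ k ∈ t, j < k ∧ k ≤ 2*j) :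
    ∑ k ∈ t, (1:ℝ)/((k - j : ℕ):ℝ) ≤ 1 + Real.log j := by
  have hinj : ∀ a ∈ t, ∀ b ∈ t, a - j = b - j → a = b := by
    intro a ha b hb hab
    have h1 := h a ha
    have h2 := h b hb
    omega
  rw [← Finset.sum_image (g := fun k => k - j) (f := fun m : ℕ => (1:ℝ)/(m:ℝ)) hinj]
  apply sum_inv _ j
  intro m hm
  rw [Finset.mem_image] at hm
  obtain ⟨k, hk, rfl⟩ := hm
  have := h k hk
  omega

lemma sum_inv_sq_shift_lt (j : ℕ) (t : Finset ℕ) (h : ∀ k ∈ t, k < j) :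
    ∑ k ∈ t, (1:ℝ)/((j - k : ℕ):ℝ)^2 ≤ 2 := by
  have hinj : ∀ a ∈ t, ∀ b ∈ t, j - a = j - b → a = b := by
    intro a ha b hb hab
    have h1 := h a ha
    have h2 := h b hb
    omega
  rw [← Finset.sum_image (g := fun k => j - k) (f := fun m : ℕ => (1:ℝ)/(m:ℝ)^2) hinj]
  apply sum_inv_sq
  intro m hm
  rw [Finset.mem_image] at hm
  obtain ⟨k, hk, rfl⟩ := hm
  have := h k hk
  omega

lemma sum_inv_sq_shift_gt (j : ℕ) (t : Finset ℕ) (h : ∀ k ∈ t, j < k) :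
    ∑ k ∈ t, (1:ℝ)/((k - j : ℕ):ℝ)^2 ≤ 2 := by
  have hinj : ∀ a ∈ t, ∀ b ∈ t, a - j = b - j → a = b := by
    intro a ha b hb hab
    have h1 := h a ha
    have h2 := h b hb
    omega
  rw [← Finset.sum_image (g := fun k => k - j) (f := fun m : ℕ => (1:ℝ)/(m:ℝ)^2) hinj]
  apply sum_inv_sq
  intro m hm
  rw [Finset.mem_image] at hm
  obtain ⟨k, hk, rfl⟩ := hm
  have := h k hk
  omega

include hα0 in
lemma one_add_log_le {j : ℕ} (hj : 1 ≤ j) :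
    1 + Real.log j ≤ (1 + 1/α) * (j:ℝ)^α := by
  have hj0 : (0:ℝ) < j := by exact_mod_cast hj
  have h1 : Real.log ((j:ℝ)^α) = α * Real.log j := Real.log_rpow hj0 α
  have h2 : Real.log ((j:ℝ)^α) ≤ (j:ℝ)^α := Real.log_le_self (by positivity)
  have h3 : (1:ℝ) ≤ (j:ℝ)^α := Real.one_le_rpow (by exact_mod_cast hj) hα0.le
  have h4 : Real.log j ≤ (1/α) * (j:ℝ)^α := by
    rw [h1] at h2
    rw [← mul_le_mul_iff_right₀ hα0]
    calc α * Real.log j ≤ (j:ℝ)^α := h2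
      _ = α * (1/α * (j:ℝ)^α) := by field_simp
  linarith

lemma rpow_split {j : ℕ} (hj : 1 ≤ j) : (j:ℝ)^(1-α) * (j:ℝ)^α = (j:ℝ) := by
  have hj0 : (0:ℝ) < j := by exact_mod_cast hj
  rw [← Real.rpow_add hj0]
  norm_num

lemma rpow_sq {j : ℕ} : ((j:ℝ)^(1-α))^2 = (j:ℝ)^(2-2*α) := by
  rw [← Real.rpow_natCast ((j:ℝ)^(1-α)) 2, ← Real.rpow_mul (Nat.cast_nonneg j)]
  congr 1
  push_cast
  ring

include hα0 hα1 in
lemma sum2_main {K : ℝ} (hK : 1 ≤ K)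
    (hdec : ∀ m : ℕ, 1 ≤ m → Real.exp (-((1-(2:ℝ)^(-α)) * (m:ℝ)^α)) ≤ K/(m:ℝ)^2)
    {j : ℕ} (hj : 1 ≤ j) (t : Finset ℕ) (ht : ∀ k ∈ t, 1 ≤ k ∧ k ≠ j) :
    ∑ k ∈ t, lamExp α k / |lamExp α k - lamExp α j| ≤
      (1 + 3/α + 3/α^2 + 2*((1 - Real.exp (-(1-(2:ℝ)^(-α))))⁻¹)*K) * j := by
  classical
  have hj0 : (0:ℝ) < j := by exact_mod_cast hj
  set D : ℝ := (1 - Real.exp (-(1-(2:ℝ)^(-α))))⁻¹ with hD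
  have hD0 : 0 < D := by
    rw [hD]
    have := one_sub_exp_pos' (c2_pos (α := α) hα0)
    positivity
  set f : ℕ → ℝ := fun k => lamExp α k / |lamExp α k - lamExp α j| with hf
  set t1 := t.filter (fun k => k < j) with ht1
  set u := t.filter (fun k => ¬ k < j) with hu
  set t2 := u.filter (fun k => k ≤ 2*j) with ht2
  set t3 := u.filter (fun k => ¬ k ≤ 2*j) with ht3
  have hsplit : ∑ k ∈ t, f k = ∑ k ∈ t1, f k + (∑ k ∈ t2, f k + ∑ k ∈ t3, f k) := by
    rw [ht2, ht3, hu, ht1, Finset.sum_filter_add_sum_filter_not,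
      Finset.sum_filter_add_sum_filter_not]
  -- piece 1
  have hS1 : ∑ k ∈ t1, f k ≤ (j:ℝ) + (1/α + 1/α^2) * j := by
    have hb : ∀ k ∈ t1, f k ≤ 1 + (j:ℝ)^(1-α)/α * (1/((j - k : ℕ):ℝ)) := by
      intro k hk
      rw [ht1, Finset.mem_filter] at hk
      exact term2_lt hα0 hα1 (ht k hk.1).1 hk.2
    have h1 := Finset.sum_le_sum hb
    rw [Finset.sum_add_distrib, ← Finset.mul_sum, Finset.sum_const, nsmul_eq_mul, mul_one] at h1
    have hcard : (t1.card : ℝ) ≤ j := by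
      have : t1 ⊆ Finset.range j := by
        intro k hk
        rw [ht1, Finset.mem_filter] at hk
        exact Finset.mem_range.mpr hk.2
      have := Finset.card_le_card this
      rw [Finset.card_range] at this
      exact_mod_cast this
    have hinv : ∑ k ∈ t1, (1:ℝ)/((j - k : ℕ):ℝ) ≤ 1 + Real.log j := by
      apply sum_inv_shift_lt
      intro k hk
      rw [ht1, Finset.mem_filter] at hk
      exact hk.2
    have hlog := one_add_log_le hα0 hj
    have hnn : (0:ℝ) ≤ (j:ℝ)^(1-α)/α := by positivity
    have h2 : (j:ℝ)^(1-α)/α * (∑ k ∈ t1, (1:ℝ)/((j - k : ℕ):ℝ)) ≤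
        (j:ℝ)^(1-α)/α * ((1 + 1/α) * (j:ℝ)^α) := by
      apply mul_le_mul_of_nonneg_left (le_trans hinv hlog) hnn
    have h3 : (j:ℝ)^(1-α)/α * ((1 + 1/α) * (j:ℝ)^α) = (1/α + 1/α^2) * j := by
      rw [show (j:ℝ)^(1-α)/α * ((1 + 1/α) * (j:ℝ)^α)
            = (1/α)*(1+1/α) * ((j:ℝ)^(1-α) * (j:ℝ)^α) from by ring,
        rpow_split (α := α) hj]
      ring
    linarith
  -- piece 2
  have hS2 : ∑ k ∈ t2, f k ≤ (2/α + 2/α^2) * j := by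
    have hmem : ∀ k ∈ t2, j < k ∧ k ≤ 2*j := by
      intro k hk
      rw [ht2, Finset.mem_filter, hu, Finset.mem_filter] at hk
      have := (ht k hk.1.1).2
      omega
    have hb : ∀ k ∈ t2, f k ≤ 2*(j:ℝ)^(1-α)/α * (1/((k - j : ℕ):ℝ)) := by
      intro k hk
      exact term2_mid hα0 hα1 hj (hmem k hk).1 (hmem k hk).2
    have h1 := Finset.sum_le_sum hb
    rw [← Finset.mul_sum] at h1
    have hinv : ∑ k ∈ t2, (1:ℝ)/((k - j : ℕ):ℝ) ≤ 1 + Real.log j :=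
      sum_inv_shift_gt j t2 hmem
    have hlog := one_add_log_le hα0 hj
    have hnn : (0:ℝ) ≤ 2*(j:ℝ)^(1-α)/α := by positivity
    have h2 : 2*(j:ℝ)^(1-α)/α * (∑ k ∈ t2, (1:ℝ)/((k - j : ℕ):ℝ)) ≤
        2*(j:ℝ)^(1-α)/α * ((1 + 1/α) * (j:ℝ)^α) :=
      mul_le_mul_of_nonneg_left (le_trans hinv hlog) hnn
    have h3 : 2*(j:ℝ)^(1-α)/α * ((1 + 1/α) * (j:ℝ)^α) = (2/α + 2/α^2) * j := by
      rw [show 2*(j:ℝ)^(1-α)/α * ((1 + 1/α) * (j:ℝ)^α)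
            = (2/α)*(1+1/α) * ((j:ℝ)^(1-α) * (j:ℝ)^α) from by ring,
        rpow_split (α := α) hj]
      ring
    linarith
  -- piece 3
  have hS3 : ∑ k ∈ t3, f k ≤ 2*D*K := by
    have hmem : ∀ k ∈ t3, 2*j < k := by
      intro k hk
      rw [ht3, Finset.mem_filter, hu, Finset.mem_filter] at hk
      omega
    have hb : ∀ k ∈ t3, f k ≤ D*K * (1/((k - j : ℕ):ℝ)^2) := by
      intro k hk
      have h2j := hmem k hk
      have hm1 : 1 ≤ k - j := by omega
      have h4 := term2_far hα0 hα1 hj h2j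
      have h5 := hdec (k - j) hm1
      calc f k ≤ D * Real.exp (-((1-(2:ℝ)^(-α)) * ((k - j : ℕ):ℝ)^α)) := h4
        _ ≤ D * (K/((k - j : ℕ):ℝ)^2) := mul_le_mul_of_nonneg_left h5 hD0.le
        _ = D*K * (1/((k - j : ℕ):ℝ)^2) := by ring
    have h1 := Finset.sum_le_sum hb
    rw [← Finset.mul_sum] at h1
    have hsq : ∑ k ∈ t3, (1:ℝ)/((k - j : ℕ):ℝ)^2 ≤ 2 := by
      apply sum_inv_sq_shift_gt
      intro k hk
      have := hmem k hk
      omega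
    have hKD : (0:ℝ) ≤ D*K := by positivity
    calc ∑ k ∈ t3, f k ≤ D*K * (∑ k ∈ t3, (1:ℝ)/((k - j : ℕ):ℝ)^2) := h1
      _ ≤ D*K * 2 := mul_le_mul_of_nonneg_left hsq hKD
      _ = 2*D*K := by ring
  have hj1 : (1:ℝ) ≤ j := by exact_mod_cast hj
  have hfin : 2*D*K ≤ 2*D*K * j := by
    nlinarith [mul_nonneg (mul_nonneg (by norm_num : (0:ℝ) ≤ 2) hD0.le)
      (by linarith : (0:ℝ) ≤ K)]
  rw [hsplit]
  calc ∑ k ∈ t1, f k + (∑ k ∈ t2, f k + ∑ k ∈ t3, f k)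
      ≤ ((j:ℝ) + (1/α + 1/α^2) * j) + ((2/α + 2/α^2) * j + 2*D*K * j) :=
        add_le_add hS1 (add_le_add hS2 (hS3.trans hfin))
    _ = (1 + 3/α + 3/α^2 + 2*D*K) * j := by ring

include hα0 hα1 in
lemma sum3_main {K : ℝ} (hK : 1 ≤ K)
    (hdec : ∀ m : ℕ, 1 ≤ m → Real.exp (-((1-(2:ℝ)^(-α)) * (m:ℝ)^α)) ≤ K/(m:ℝ)^2)
    {j : ℕ} (hj : 1 ≤ j) (t : Finset ℕ) (ht : ∀ k ∈ t, 1 ≤ k ∧ k ≠ j) :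
    ∑ k ∈ t, lamExp α j * lamExp α k / (lamExp α k - lamExp α j)^2 ≤
      (10/α^2 + 2*((1 - Real.exp (-(1-(2:ℝ)^(-α))))⁻¹)^2*K) * (j:ℝ)^(2-2*α) := by
  classical
  have hj0 : (0:ℝ) < j := by exact_mod_cast hj
  set D : ℝ := (1 - Real.exp (-(1-(2:ℝ)^(-α))))⁻¹ with hD
  have hD0 : 0 < D := by
    rw [hD]
    have := one_sub_exp_pos' (c2_pos (α := α) hα0)
    positivity
  set f : ℕ → ℝ := fun k => lamExp α j * lamExp α k / (lamExp α k - lamExp α j)^2 with hf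
  set t1 := t.filter (fun k => k < j) with ht1
  set u := t.filter (fun k => ¬ k < j) with hu
  set t2 := u.filter (fun k => k ≤ 2*j) with ht2
  set t3 := u.filter (fun k => ¬ k ≤ 2*j) with ht3
  have hsplit : ∑ k ∈ t, f k = ∑ k ∈ t1, f k + (∑ k ∈ t2, f k + ∑ k ∈ t3, f k) := by
    rw [ht2, ht3, hu, ht1, Finset.sum_filter_add_sum_filter_not,
      Finset.sum_filter_add_sum_filter_not]
  have hJ : ((j:ℝ)^(1-α))^2 = (j:ℝ)^(2-2*α) := rpow_sq
  have hJ1 : (1:ℝ) ≤ (j:ℝ)^(2-2*α) :=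
    Real.one_le_rpow (by exact_mod_cast hj) (by linarith)
  -- piece 1
  have hS1 : ∑ k ∈ t1, f k ≤ 2/α^2 * (j:ℝ)^(2-2*α) := by
    have hb : ∀ k ∈ t1, f k ≤ ((j:ℝ)^(1-α)/α)^2 * (1/((j - k : ℕ):ℝ)^2) := by
      intro k hk
      rw [ht1, Finset.mem_filter] at hk
      exact term3_lt hα0 hα1 (ht k hk.1).1 hk.2
    have h1 := Finset.sum_le_sum hb
    rw [← Finset.mul_sum] at h1
    have hsq : ∑ k ∈ t1, (1:ℝ)/((j - k : ℕ):ℝ)^2 ≤ 2 := by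
      apply sum_inv_sq_shift_lt
      intro k hk
      rw [ht1, Finset.mem_filter] at hk
      exact hk.2
    have hnn : (0:ℝ) ≤ ((j:ℝ)^(1-α)/α)^2 := by positivity
    have h2 : ((j:ℝ)^(1-α)/α)^2 * (∑ k ∈ t1, (1:ℝ)/((j - k : ℕ):ℝ)^2) ≤
        ((j:ℝ)^(1-α)/α)^2 * 2 := mul_le_mul_of_nonneg_left hsq hnn
    have h3 : ((j:ℝ)^(1-α)/α)^2 * 2 = 2/α^2 * (j:ℝ)^(2-2*α) := by
      rw [div_pow, hJ]
      ring
    linarith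
  -- piece 2
  have hS2 : ∑ k ∈ t2, f k ≤ 8/α^2 * (j:ℝ)^(2-2*α) := by
    have hmem : ∀ k ∈ t2, j < k ∧ k ≤ 2*j := by
      intro k hk
      rw [ht2, Finset.mem_filter, hu, Finset.mem_filter] at hk
      have := (ht k hk.1.1).2
      omega
    have hb : ∀ k ∈ t2, f k ≤ (2*(j:ℝ)^(1-α)/α)^2 * (1/((k - j : ℕ):ℝ)^2) := by
      intro k hk
      exact term3_mid hα0 hα1 hj (hmem k hk).1 (hmem k hk).2
    have h1 := Finset.sum_le_sum hb
    rw [← Finset.mul_sum] at h1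
    have hsq : ∑ k ∈ t2, (1:ℝ)/((k - j : ℕ):ℝ)^2 ≤ 2 := by
      apply sum_inv_sq_shift_gt
      intro k hk
      exact (hmem k hk).1
    have hnn : (0:ℝ) ≤ (2*(j:ℝ)^(1-α)/α)^2 := by positivity
    have h2 : (2*(j:ℝ)^(1-α)/α)^2 * (∑ k ∈ t2, (1:ℝ)/((k - j : ℕ):ℝ)^2) ≤
        (2*(j:ℝ)^(1-α)/α)^2 * 2 := mul_le_mul_of_nonneg_left hsq hnn
    have h3 : (2*(j:ℝ)^(1-α)/α)^2 * 2 = 8/α^2 * (j:ℝ)^(2-2*α) := by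
      rw [mul_div_assoc, mul_pow, div_pow, hJ]
      ring
    linarith
  -- piece 3
  have hS3 : ∑ k ∈ t3, f k ≤ 2*D^2*K := by
    have hmem : ∀ k ∈ t3, 2*j < k := by
      intro k hk
      rw [ht3, Finset.mem_filter, hu, Finset.mem_filter] at hk
      omega
    have hb : ∀ k ∈ t3, f k ≤ D^2*K * (1/((k - j : ℕ):ℝ)^2) := by
      intro k hk
      have h2j := hmem k hk
      have hm1 : 1 ≤ k - j := by omega
      have h4 := term3_far hα0 hα1 hj h2j
      have h5 := hdec (k - j) hm1
      calc f k ≤ D^2 * Real.exp (-((1-(2:ℝ)^(-α)) * ((k - j : ℕ):ℝ)^α)) := h4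
        _ ≤ D^2 * (K/((k - j : ℕ):ℝ)^2) := by
            apply mul_le_mul_of_nonneg_left h5 (by positivity)
        _ = D^2*K * (1/((k - j : ℕ):ℝ)^2) := by ring
    have h1 := Finset.sum_le_sum hb
    rw [← Finset.mul_sum] at h1
    have hsq : ∑ k ∈ t3, (1:ℝ)/((k - j : ℕ):ℝ)^2 ≤ 2 := by
      apply sum_inv_sq_shift_gt
      intro k hk
      have := hmem k hk
      omega
    calc ∑ k ∈ t3, f k ≤ D^2*K * (∑ k ∈ t3, (1:ℝ)/((k - j : ℕ):ℝ)^2) := h1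
      _ ≤ D^2*K * 2 := mul_le_mul_of_nonneg_left hsq (by positivity)
      _ = 2*D^2*K := by ring
  have hfin : 2*D^2*K ≤ 2*D^2*K * (j:ℝ)^(2-2*α) := by
    nlinarith [mul_nonneg (mul_nonneg (by norm_num : (0:ℝ) ≤ 2) (sq_nonneg D))
      (by linarith : (0:ℝ) ≤ K)]
  rw [hsplit]
  calc ∑ k ∈ t1, f k + (∑ k ∈ t2, f k + ∑ k ∈ t3, f k)
      ≤ (2/α^2 * (j:ℝ)^(2-2*α)) + (8/α^2 * (j:ℝ)^(2-2*α) + 2*D^2*K * (j:ℝ)^(2-2*α)) :=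
        add_le_add hS1 (add_le_add hS2 (hS3.trans hfin))
    _ = (10/α^2 + 2*D^2*K) * (j:ℝ)^(2-2*α) := by ring

include hα0 hα1 in
lemma ratio_d2 {j : ℕ} (hj : 1 ≤ j) :
    lamExp α j / (lamExp α j - lamExp α (j+1)) ≤ (1 + 2/α) * (j:ℝ)^(1-α) := by
  have hAB : (j:ℝ)^α < ((j+1:ℕ):ℝ)^α := rpow_lt_rpow_nat (by omega) hα0
  have hX : (0:ℝ) < ((j+1:ℕ):ℝ)^α - (j:ℝ)^α := by linarith
  have heq : lamExp α j / (lamExp α j - lamExp α (j+1)) =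
      1 / (1 - Real.exp (-(((j+1:ℕ):ℝ)^α - (j:ℝ)^α))) := by
    simp only [lamExp]
    exact ratio_eq₁
  rw [heq]
  have h1 := exp_lemA hX
  have hXlb := X_lb hα0 hα1 (show j < j + 1 by omega)
  have hone : ((j + 1 - j : ℕ):ℝ) = 1 := by
    have : j + 1 - j = 1 := by omega
    rw [this]; norm_num
  rw [hone] at hXlb
  have hz : (0:ℝ) < ((j+1:ℕ):ℝ) := by positivity
  have h2 : 1/(((j+1:ℕ):ℝ)^α - (j:ℝ)^α) ≤ ((j+1:ℕ):ℝ)^(1-α)/α * (1/1) :=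
    inv_bound hα0 hz one_pos hXlb
  have h3 : ((j+1:ℕ):ℝ)^(1-α) ≤ 2 * (j:ℝ)^(1-α) :=
    two_rpow_le hα0 hα1 hj (by omega)
  have hj1a : (1:ℝ) ≤ (j:ℝ)^(1-α) :=
    Real.one_le_rpow (by exact_mod_cast hj) (by linarith)
  have h4 : ((j+1:ℕ):ℝ)^(1-α)/α ≤ 2 * (j:ℝ)^(1-α)/α := by gcongr
  have h5 : 1 + 2 * (j:ℝ)^(1-α)/α ≤ (1 + 2/α) * (j:ℝ)^(1-α) := by
    have hinv : (0:ℝ) < 1/α := by positivity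
    have : (1 + 2/α) * (j:ℝ)^(1-α) = (j:ℝ)^(1-α) + 2 * (j:ℝ)^(1-α)/α := by ring
    linarith
  simp only [div_one, mul_one] at h2
  linarith

include hα0 hα1 in
lemma ratio_d1 {j : ℕ} (hj : 2 ≤ j) :
    lamExp α j / (lamExp α (j-1) - lamExp α j) ≤ (1 + 2/α) * (j:ℝ)^(1-α) := by
  have hAB : ((j-1:ℕ):ℝ)^α < (j:ℝ)^α := rpow_lt_rpow_nat (by omega) hα0
  have hX : (0:ℝ) < (j:ℝ)^α - ((j-1:ℕ):ℝ)^α := by linarith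
  have heq : lamExp α j / (lamExp α (j-1) - lamExp α j) =
      Real.exp (-((j:ℝ)^α - ((j-1:ℕ):ℝ)^α)) /
        (1 - Real.exp (-((j:ℝ)^α - ((j-1:ℕ):ℝ)^α))) := by
    simp only [lamExp]
    exact ratio_eq₂
  rw [heq]
  have h1 := exp_lemB hX
  have hXlb := X_lb hα0 hα1 (show j - 1 < j by omega)
  have hone : ((j - (j-1) : ℕ):ℝ) = 1 := by
    have : j - (j-1) = 1 := by omega
    rw [this]; norm_num
  rw [hone] at hXlb
  have hz : (0:ℝ) < (j:ℝ) := by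
    have : 0 < j := by omega
    exact_mod_cast this
  have h2 : 1/((j:ℝ)^α - ((j-1:ℕ):ℝ)^α) ≤ (j:ℝ)^(1-α)/α * (1/1) :=
    inv_bound hα0 hz one_pos hXlb
  simp only [div_one, mul_one] at h2
  have hj1a : (0:ℝ) ≤ (j:ℝ)^(1-α) := by positivity
  have h5 : (j:ℝ)^(1-α)/α ≤ (1 + 2/α) * (j:ℝ)^(1-α) := by
    rw [div_eq_mul_inv, mul_comm]
    calc α⁻¹ * (j:ℝ)^(1-α) ≤ α⁻¹ * (j:ℝ)^(1-α) + ((j:ℝ)^(1-α) + α⁻¹ * (j:ℝ)^(1-α)) :=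
          le_add_of_nonneg_right (by positivity)
      _ = (1 + 2/α) * (j:ℝ)^(1-α) := by rw [div_eq_mul_inv]; ring
  linarith

include hα0 hα1 in
lemma gap_bound {j : ℕ} (hj : 1 ≤ j) :
    lamExp α j / gapExp α j ≤ (1 + 2/α) * (j:ℝ)^(1-α) := by
  by_cases h1 : j = 1
  · subst h1
    rw [gapExp]
    simp only [if_pos rfl]
    exact ratio_d2 hα0 hα1 le_rfl
  · have hj2 : 2 ≤ j := by omega
    rw [gapExp, if_neg h1]
    rcases le_total (lamExp α (j-1) - lamExp α j) (lamExp α j - lamExp α (j+1)) with h | h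
    · rw [min_eq_left h]
      exact ratio_d1 hα0 hα1 hj2
    · rw [min_eq_right h]
      exact ratio_d2 hα0 hα1 hj

lemma tsum_le_of_forall_sum_le {ι : Type*} {f : ι → ℝ} (hf : ∀ i, 0 ≤ f i) {c : ℝ}
    (hc : 0 ≤ c) (h : ∀ s : Finset ι, ∑ i ∈ s, f i ≤ c) : ∑' i, f i ≤ c := by
  by_cases hs : Summable f
  · exact hs.tsum_le_of_sum_le h
  · rw [tsum_eq_zero_of_not_summable hs]
    exact hc

end terms
lemma lam_pos (α : ℝ) (j : ℕ) : 0 < lamExp α j := by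
  unfold lamExp; exact Real.exp_pos _

end S19

theorem stmt19 (α : ℝ) (hα0 : 0 < α) (hα1 : α ≤ 1) :
    ∃ C : ℝ, 1 < C ∧ ∀ j : ℕ, 1 ≤ j →
      lamExp α j / gapExp α j ≤ C * (j : ℝ) ^ (1 - α) ∧
      (∑' k : {k : ℕ // 1 ≤ k ∧ k ≠ j},
          lamExp α k / |lamExp α k - lamExp α j|) ≤ C * (j : ℝ) ∧
      (∑' k : {k : ℕ // 1 ≤ k ∧ k ≠ j},
          lamExp α j * lamExp α k / (lamExp α k - lamExp α j) ^ 2) ≤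
        C * (j : ℝ) ^ (2 - 2 * α) := by
  classical
  have hc0 := S19.c2_pos (α := α) hα0
  have hc2pos : (0:ℝ) < (2:ℝ)^(-α) := Real.rpow_pos_of_pos two_pos (-α)
  obtain ⟨K, hK, hdec⟩ := S19.decay hα0 hα1 hc0 (by linarith)
  set D : ℝ := (1 - Real.exp (-(1-(2:ℝ)^(-α))))⁻¹ with hD
  have hD0 : 0 < D := by
    rw [hD]
    have := S19.one_sub_exp_pos' hc0
    positivity
  set C1 : ℝ := 1 + 2/α with hC1
  set C2 : ℝ := 1 + 3/α + 3/α^2 + 2*D*K with hC2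
  set C3 : ℝ := 10/α^2 + 2*D^2*K with hC3
  have hp1 : (0:ℝ) < 2/α := by positivity
  have hp2 : (0:ℝ) < 3/α := by positivity
  have hp3 : (0:ℝ) < 3/α^2 := by positivity
  have hp4 : (0:ℝ) < 10/α^2 := by positivity
  have hK0 : (0:ℝ) < K := by linarith
  have hp5 : (0:ℝ) < 2*D*K := by positivity
  have hp6 : (0:ℝ) < 2*D^2*K := by positivity
  have hC1pos : 1 < C1 := by rw [hC1]; linarith
  have hC2pos : 0 < C2 := by rw [hC2]; linarith
  have hC3pos : 0 < C3 := by rw [hC3]; linarith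
  refine ⟨C1 + C2 + C3, by linarith, ?_⟩
  intro j hj
  have hj0 : (0:ℝ) < j := by exact_mod_cast hj
  refine ⟨?_, ?_, ?_⟩
  · -- gap bound
    have h1 := S19.gap_bound hα0 hα1 hj
    have h2 : (1 + 2/α) * (j:ℝ)^(1-α) ≤ (C1 + C2 + C3) * (j:ℝ)^(1-α) := by
      apply mul_le_mul_of_nonneg_right ?_ (by positivity)
      rw [hC1]; linarith
    exact h1.trans h2
  · -- sum 2
    apply S19.tsum_le_of_forall_sum_le
    · intro i
      exact div_nonneg (S19.lam_pos α _).le (abs_nonneg _)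
    · positivity
    · intro s
      set g : ℕ → ℝ := fun k => lamExp α k / |lamExp α k - lamExp α j| with hg
      have hinj : ∀ a ∈ s, ∀ b ∈ s, (a:ℕ) = (b:ℕ) → a = b := by
        intro a _ b _ hab
        exact Subtype.ext hab
      have heq : ∑ k ∈ s.image Subtype.val, g k = ∑ i ∈ s, g i.val :=
        Finset.sum_image hinj
      have hmem : ∀ k ∈ s.image Subtype.val, 1 ≤ k ∧ k ≠ j := by
        intro k hk
        rw [Finset.mem_image] at hk
        obtain ⟨i, _, rfl⟩ := hk
        exact i.2
      have h1 := S19.sum2_main hα0 hα1 hK hdec hj (s.image Subtype.val) hmem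
      rw [heq] at h1
      refine h1.trans ?_
      apply mul_le_mul_of_nonneg_right ?_ hj0.le
      rw [hC2]; linarith
  · -- sum 3
    apply S19.tsum_le_of_forall_sum_le
    · intro i
      exact div_nonneg (mul_nonneg (S19.lam_pos α _).le (S19.lam_pos α _).le) (sq_nonneg _)
    · positivity
    · intro s
      set g : ℕ → ℝ := fun k => lamExp α j * lamExp α k / (lamExp α k - lamExp α j)^2 with hg
      have hinj : ∀ a ∈ s, ∀ b ∈ s, (a:ℕ) = (b:ℕ) → a = b := by
        intro a _ b _ hab
        exact Subtype.ext hab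
      have heq : ∑ k ∈ s.image Subtype.val, g k = ∑ i ∈ s, g i.val :=
        Finset.sum_image hinj
      have hmem : ∀ k ∈ s.image Subtype.val, 1 ≤ k ∧ k ≠ j := by
        intro k hk
        rw [Finset.mem_image] at hk
        obtain ⟨i, _, rfl⟩ := hk
        exact i.2
      have h1 := S19.sum3_main hα0 hα1 hK hdec hj (s.image Subtype.val) hmem
      rw [heq] at h1
      refine h1.trans ?_
      apply mul_le_mul_of_nonneg_right ?_ (by positivity)
      rw [hC3]; linarith
end
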